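/- arXiv:2407.02338 — 3 statements merged into one kernel-verified Lean document; each statement's English description precedes it below -/
import Mathlib

section
/- Let w ∈ W be a non-spiral element of the affine Weyl group of type Ã₂, and let w′ = t(α)w be the translation of w into its chamber (α the unique root pointing into the chamber of w). Then w < w′ in the Bruhat order, and ℓ(w′) = ℓ(w) + 4. -/
noncomputable section

open scoped RealInnerProductSpace

/-- The plane `V = ℝ²`. -/
abbrev V : Type := EuclideanSpace ℝ (Fin 2)

/-- The affine reflection in the hyperplane `H_{α,k}`. -/
def sRefl (α : V) (k : ℤ) (v : V) : V := v - (⟪α, v⟫ - (k : ℝ)) • α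

/-- The positive roots `α₁, α₂, α̃ = α₁ + α₂` of the `A₂` root system. -/
def PosRoots (a1 a2 : V) : Set V := {a1, a2, a1 + a2}

/-- The root system `Φ` of type `A₂`. -/
def Phi (a1 a2 : V) : Set V := {α | α ∈ PosRoots a1 a2 ∨ -α ∈ PosRoots a1 a2}

/-- A permutation of `V` acting as the affine reflection `s_{α,k}` for some `α ∈ Φ`, `k ∈ ℤ`. -/
def IsAffRefl (a1 a2 : V) (g : Equiv.Perm V) : Prop :=
  ∃ α ∈ Phi a1 a2, ∃ k : ℤ, ∀ v : V, g v = sRefl α k v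

/-- The affine Weyl group of type `Ã₂`: the group of (affine) transformations of `V`
generated by all the affine reflections `s_{α,k}`, `α ∈ Φ`, `k ∈ ℤ`. -/
def AffWeyl (a1 a2 : V) : Subgroup (Equiv.Perm V) :=
  Subgroup.closure {g | IsAffRefl a1 a2 g}

/-- The action of an element of the affine Weyl group on the plane `V`. -/
def act {a1 a2 : V} (w : AffWeyl a1 a2) (v : V) : V := (w : Equiv.Perm V) v

/-- `g` is one of the simple reflections `s₁ = s_{α₁,0}`, `s₂ = s_{α₂,0}`, `s₀ = s_{α̃,1}`. -/
def IsSimpleRefl (a1 a2 : V) (g : Equiv.Perm V) : Prop :=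
  (∀ v : V, g v = sRefl a1 0 v) ∨ (∀ v : V, g v = sRefl a2 0 v) ∨
    (∀ v : V, g v = sRefl (a1 + a2) 1 v)

/-- The length function of the affine Weyl group `W` of type `Ã₂`, with respect to the
simple reflections. -/
def len (a1 a2 : V) (w : AffWeyl a1 a2) : ℕ :=
  sInf {n | ∃ l : List (AffWeyl a1 a2),
    (∀ g ∈ l, IsSimpleRefl a1 a2 (g : Equiv.Perm V)) ∧ l.length = n ∧ l.prod = w}

/-- The reflections of `W` are the `s_{α,k}`, `α ∈ Φ`, `k ∈ ℤ`. -/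
def IsReflW (a1 a2 : V) (g : Equiv.Perm V) : Prop := IsAffRefl a1 a2 g

/-- The Bruhat order on `W`: the partial order generated by `u < r * u` whenever `r` is a
reflection and `ℓ(u) < ℓ(r * u)`. -/
def BruhatLE (a1 a2 : V) (x w : AffWeyl a1 a2) : Prop :=
  Relation.ReflTransGen
    (fun a b => ∃ r : AffWeyl a1 a2, IsReflW a1 a2 (r : Equiv.Perm V) ∧ b = r * a ∧
      len a1 a2 a < len a1 a2 b) x w

/-- The strict Bruhat order. -/
def BruhatLT (a1 a2 : V) (x w : AffWeyl a1 a2) : Prop := BruhatLE a1 a2 x w ∧ x ≠ w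

/-- The fundamental alcove `A₀`. -/
def A0 (a1 a2 : V) : Set V :=
  {v | 0 < ⟪a1, v⟫ ∧ 0 < ⟪a2, v⟫ ∧ ⟪a1 + a2, v⟫ < 1}

/-- The fundamental `α`-root strip. -/
def Strip (α : V) : Set V := {v | 0 ≤ ⟪α, v⟫ ∧ ⟪α, v⟫ ≤ 1}

/-- The union of the three fundamental root strips. -/
def StripUnion (a1 a2 : V) : Set V := Strip a1 ∪ Strip a2 ∪ Strip (a1 + a2)

/-- `w` is spiral if the alcove center `w q` lies in a fundamental root strip. -/
def IsSpiral (a1 a2 q : V) (w : AffWeyl a1 a2) : Prop :=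
  (w : Equiv.Perm V) q ∈ StripUnion a1 a2

/-- The chambers: connected components of the complement of the union of the fundamental
root strips. -/
def IsChamber (a1 a2 : V) (C : Set V) : Prop :=
  ∃ v ∈ (StripUnion a1 a2)ᶜ, C = connectedComponentIn (StripUnion a1 a2)ᶜ v

/-- The chamber containing the alcove center `w q` (for non-spiral `w`). -/
def chamberOf (a1 a2 q : V) (w : AffWeyl a1 a2) : Set V :=
  connectedComponentIn (StripUnion a1 a2)ᶜ ((w : Equiv.Perm V) q)

/-- The root hyperplane (line) `H_{α,k}`. -/
def Hplane (α : V) (k : ℤ) : Set V := {v | ⟪α, v⟫ = (k : ℝ)}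

/-- `H_{α,i}` (with `α` a positive root and `i ∈ {0,1}`) is a wall of the chamber `C`:
the boundary of `C` meets `H_{α,i}` in more than one point (a ray). -/
def IsWall (a1 a2 : V) (C : Set V) (α : V) (i : ℤ) : Prop :=
  α ∈ PosRoots a1 a2 ∧ (i = 0 ∨ i = 1) ∧
    ∃ u ∈ frontier C ∩ Hplane α i, ∃ v ∈ frontier C ∩ Hplane α i, u ≠ v

/-- A chamber is even if both of its walls are among the fixed hyperplanes
`H_{α₁,0}, H_{α₂,0}, H_{α̃,1}` of the simple reflections. -/
def IsEvenChamber (a1 a2 : V) (C : Set V) : Prop :=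
  IsChamber a1 a2 C ∧ ∀ α i, IsWall a1 a2 C α i →
    ((α = a1 ∧ i = 0) ∨ (α = a2 ∧ i = 0) ∨ (α = a1 + a2 ∧ i = 1))

/-- `q^w_x = n^w_x - ℓ(w)`, where `n^w_x` is the number of reflections `r` with `r x ≤ w`. -/
def qInt (a1 a2 : V) (w x : AffWeyl a1 a2) : ℤ :=
  (Set.ncard {r : AffWeyl a1 a2 |
      IsReflW a1 a2 (r : Equiv.Perm V) ∧ BruhatLE a1 a2 (r * x) w} : ℤ)
    - (len a1 a2 w : ℤ)

/-- The root `α ∈ Φ` points into the chamber `C`. -/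
def PointsInto (a1 a2 : V) (C : Set V) (α : V) : Prop :=
  α ∈ Phi a1 a2 ∧ ∀ v ∈ C, v + α ∈ C

/-- `L(w)`: the subgroup generated by the simple reflections `s` with `s w < w`. -/
def Lsub (a1 a2 : V) (w : AffWeyl a1 a2) : Subgroup (AffWeyl a1 a2) :=
  Subgroup.closure {s | IsSimpleRefl a1 a2 (s : Equiv.Perm V) ∧ BruhatLT a1 a2 (s * w) w}

/-- `w` is twisted spiral if `w = z s` with `z` spiral of even length, `s` simple, and
`ℓ(w) = ℓ(z) + 1`. -/
def IsTwistedSpiral (a1 a2 q : V) (w : AffWeyl a1 a2) : Prop :=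
  ∃ z s : AffWeyl a1 a2, IsSpiral a1 a2 q z ∧ Even (len a1 a2 z) ∧
    IsSimpleRefl a1 a2 (s : Equiv.Perm V) ∧ w = z * s ∧ len a1 a2 w = len a1 a2 z + 1
namespace AW

variable {a1 a2 : V}

lemma eq_of_inner (hnorm1 : ⟪a1, a1⟫ = 2) (hnorm2 : ⟪a2, a2⟫ = 2) (hip : ⟪a1, a2⟫ = -1)
    {v w : V} (h1 : ⟪a1, v⟫ = ⟪a1, w⟫) (h2 : ⟪a2, v⟫ = ⟪a2, w⟫) : v = w := by
  have hip' : ⟪a2, a1⟫ = -1 := by rw [real_inner_comm]; exact hip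
  have hli : LinearIndependent ℝ ![a1, a2] := by
    rw [LinearIndependent.pair_iff]
    intro s t hst
    have e1 : ⟪a1, s • a1 + t • a2⟫ = 0 := by rw [hst]; simp
    have e2 : ⟪a2, s • a1 + t • a2⟫ = 0 := by rw [hst]; simp
    simp only [inner_add_right, inner_smul_right, hnorm1, hnorm2, hip, hip'] at e1 e2
    constructor <;> linarith
  have hsp : Submodule.span ℝ (Set.range ![a1, a2]) = ⊤ := by
    apply Submodule.eq_top_of_finrank_eq
    rw [finrank_span_eq_card hli]
    simp [finrank_euclideanSpace_fin]
  have hmem : v - w ∈ Submodule.span ℝ ({a1, a2} : Set V) := by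
    have hr : Set.range ![a1, a2] = ({a1, a2} : Set V) := by
      ext z; simp [Matrix.range_cons, Matrix.range_empty]; tauto
    rw [← hr, hsp]; trivial
  obtain ⟨s, t, hst⟩ := Submodule.mem_span_pair.1 hmem
  have e1 : ⟪a1, v - w⟫ = 0 := by rw [inner_sub_right, h1, sub_self]
  have e2 : ⟪a2, v - w⟫ = 0 := by rw [inner_sub_right, h2, sub_self]
  rw [← hst] at e1 e2
  simp only [inner_add_right, inner_smul_right, hnorm1, hnorm2, hip, hip'] at e1 e2
  have hs : s = 0 := by linarith
  have ht : t = 0 := by linarith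
  have hvw : v - w = 0 := by rw [← hst, hs, ht]; simp
  exact sub_eq_zero.mp hvw

lemma inner_sRefl (β γ : V) (k : ℤ) (v : V) :
    ⟪γ, sRefl β k v⟫ = ⟪γ, v⟫ - (⟪β, v⟫ - k) * ⟪γ, β⟫ := by
  simp [sRefl, inner_sub_right, inner_smul_right]

lemma sRefl_invol {α : V} (h2 : ⟪α, α⟫ = 2) (k : ℤ) (v : V) :
    sRefl α k (sRefl α k v) = v := by
  have hA : ⟪α, sRefl α k v⟫ = 2 * k - ⟪α, v⟫ := by
    rw [inner_sRefl, real_inner_self_eq_norm_sq]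
    rw [real_inner_self_eq_norm_sq] at h2
    rw [h2]; ring
  calc sRefl α k (sRefl α k v) = sRefl α k v - (⟪α, sRefl α k v⟫ - k) • α := rfl
    _ = (v - (⟪α, v⟫ - k) • α) - ((2 * k - ⟪α, v⟫) - k) • α := by rw [hA]; rfl
    _ = v - ((⟪α, v⟫ - k) + ((2 * k - ⟪α, v⟫) - k)) • α := by rw [sub_sub, add_smul]
    _ = v := by
        have hc : (⟪α, v⟫ - k) + ((2 * k - ⟪α, v⟫) - k) = 0 := by ring
        rw [hc, zero_smul, sub_zero]

/-- The affine reflection `s_{α,k}` as a permutation of `V`. -/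
def reflPerm (α : V) (h2 : ⟪α, α⟫ = 2) (k : ℤ) : Equiv.Perm V :=
  ⟨sRefl α k, sRefl α k, sRefl_invol h2 k, sRefl_invol h2 k⟩

@[simp] lemma reflPerm_apply (α : V) (h2 : ⟪α, α⟫ = 2) (k : ℤ) (v : V) :
    reflPerm α h2 k v = sRefl α k v := rfl

lemma reflPerm_mem (α : V) (h2 : ⟪α, α⟫ = 2) (hmem : α ∈ Phi a1 a2) (k : ℤ) :
    reflPerm α h2 k ∈ AffWeyl a1 a2 :=
  Subgroup.subset_closure ⟨α, hmem, k, fun _ => rfl⟩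

/-- `s_{α,k}` as an element of the affine Weyl group. -/
def S (α : V) (h2 : ⟪α, α⟫ = 2) (hmem : α ∈ Phi a1 a2) (k : ℤ) : AffWeyl a1 a2 :=
  ⟨reflPerm α h2 k, reflPerm_mem α h2 hmem k⟩

lemma phi_a1 : a1 ∈ Phi a1 a2 := Or.inl (Set.mem_insert _ _)
lemma phi_a2 : a2 ∈ Phi a1 a2 := Or.inl (Set.mem_insert_of_mem _ (Set.mem_insert _ _))
lemma phi_sum : a1 + a2 ∈ Phi a1 a2 :=
  Or.inl (Set.mem_insert_of_mem _ (Set.mem_insert_of_mem _ rfl))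
lemma phi_neg {α : V} (h : α ∈ Phi a1 a2) : -α ∈ Phi a1 a2 := by
  rcases h with h | h
  · exact Or.inr (by rwa [neg_neg])
  · exact Or.inl h

section norms
variable (hnorm1 : ⟪a1, a1⟫ = 2) (hnorm2 : ⟪a2, a2⟫ = 2) (hip : ⟪a1, a2⟫ = -1)
include hnorm1 hnorm2 hip

lemma norm_sum : ⟪a1 + a2, a1 + a2⟫ = 2 := by
  have hip' : ⟪a2, a1⟫ = -1 := by rw [real_inner_comm]; exact hip
  simp only [inner_add_left, inner_add_right, hnorm1, hnorm2, hip, hip']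
  norm_num

end norms

end AW
namespace AW
variable {a1 a2 : V}

/-- The six linear parts (as integer matrices in root coordinates) of elements of `W`. -/
def GM : List (ℤ × ℤ × ℤ × ℤ) :=
  [(1,0,0,1), (-1,0,1,1), (1,1,0,-1), (0,-1,-1,0), (-1,-1,1,0), (0,1,-1,-1)]

def pmul (p r : ℤ × ℤ × ℤ × ℤ) : ℤ × ℤ × ℤ × ℤ :=
  (p.1 * r.1 + p.2.1 * r.2.2.1, p.1 * r.2.1 + p.2.1 * r.2.2.2,
   p.2.2.1 * r.1 + p.2.2.2 * r.2.2.1, p.2.2.1 * r.2.1 + p.2.2.2 * r.2.2.2)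

lemma GM_mul : ∀ p ∈ GM, ∀ r ∈ GM, pmul p r ∈ GM := by decide

lemma GM_nonint : ∀ p ∈ GM, (p.1 + p.2.1) % 3 ≠ 0 ∧ (p.2.2.1 + p.2.2.2) % 3 ≠ 0 ∧
    (p.1 + p.2.1 + p.2.2.1 + p.2.2.2) % 3 ≠ 0 := by decide

lemma GM_mod : ∀ p ∈ GM, ∀ m n : ℤ, (m + 2 * n) % 3 = 0 →
    ((p.1 * m + p.2.1 * n) + 2 * (p.2.2.1 * m + p.2.2.2 * n)) % 3 = 0 := by
  intro p hp m n h
  fin_cases hp <;> simp_all <;> omega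

/-- Every element of `W` acts in root coordinates as `v ↦ M v + ν` with `M` one of the six
matrices of the `A₂` Weyl group and `ν` in (the coordinate image of) the root lattice. -/
def Good (a1 a2 : V) (g : Equiv.Perm V) : Prop :=
  ∃ p : ℤ × ℤ × ℤ × ℤ, p ∈ GM ∧ ∃ n1 n2 : ℤ, (n1 + 2 * n2) % 3 = 0 ∧
    ∀ v : V, ⟪a1, g v⟫ = p.1 * ⟪a1, v⟫ + p.2.1 * ⟪a2, v⟫ + n1 ∧
             ⟪a2, g v⟫ = p.2.2.1 * ⟪a1, v⟫ + p.2.2.2 * ⟪a2, v⟫ + n2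

lemma good_one : Good a1 a2 1 := by
  refine ⟨(1,0,0,1), by decide, 0, 0, by decide, fun v => ?_⟩
  simp

lemma good_mul {g g' : Equiv.Perm V} (hg : Good a1 a2 g) (hg' : Good a1 a2 g') :
    Good a1 a2 (g * g') := by
  obtain ⟨p, hp, n1, n2, hn, he⟩ := hg
  obtain ⟨r, hr, m1, m2, hm, he'⟩ := hg'
  refine ⟨pmul p r, GM_mul p hp r hr,
    p.1 * m1 + p.2.1 * m2 + n1, p.2.2.1 * m1 + p.2.2.2 * m2 + n2, ?_, fun v => ?_⟩
  · have h1 := GM_mod p hp m1 m2 hm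
    omega
  · have h1 := he (g' v)
    have h2 := he' v
    constructor
    · rw [Equiv.Perm.mul_apply, h1.1, h2.1, h2.2, pmul]
      push_cast; ring
    · rw [Equiv.Perm.mul_apply, h1.2, h2.1, h2.2, pmul]
      push_cast; ring

lemma sRefl_neg (α : V) (k : ℤ) (v : V) : sRefl (-α) k v = sRefl α (-k) v := by
  rw [sRefl, sRefl]
  congr 1
  rw [inner_neg_left, smul_neg, ← neg_smul]
  congr 1
  push_cast; ring

lemma phi_norm (hnorm1 : ⟪a1, a1⟫ = 2) (hnorm2 : ⟪a2, a2⟫ = 2) (hip : ⟪a1, a2⟫ = -1)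
    {α : V} (h : α ∈ Phi a1 a2) : ⟪α, α⟫ = 2 := by
  have hs := norm_sum hnorm1 hnorm2 hip
  have key : ∀ β : V, β ∈ PosRoots a1 a2 → ⟪β, β⟫ = 2 := by
    intro β hβ
    rcases hβ with h' | h' | h' <;> subst h' <;> assumption
  rcases h with h | h
  · exact key _ h
  · have := key _ h
    rwa [inner_neg_neg] at this

lemma good_gen (hnorm1 : ⟪a1, a1⟫ = 2) (hnorm2 : ⟪a2, a2⟫ = 2) (hip : ⟪a1, a2⟫ = -1)
    {g : Equiv.Perm V} (hg : IsAffRefl a1 a2 g) : Good a1 a2 g := by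
  have hip' : ⟪a2, a1⟫ = -1 := by rw [real_inner_comm]; exact hip
  obtain ⟨α, hαPhi, k, he⟩ := hg
  have key : ∀ β : V, β ∈ PosRoots a1 a2 → ∀ k' : ℤ, (∀ v, g v = sRefl β k' v) →
      Good a1 a2 g := by
    intro β hβ k' he'
    rcases hβ with h' | h' | h'
    · subst h'
      refine ⟨(-1,0,1,1), by decide, 2 * k', -k', by omega, fun v => ?_⟩
      simp only [he' v, inner_sRefl, hnorm1, hip']
      constructor <;> (push_cast; ring)
    · subst h'
      refine ⟨(1,1,0,-1), by decide, -k', 2 * k', by omega, fun v => ?_⟩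
      simp only [he' v, inner_sRefl, hnorm2, hip]
      constructor <;> (push_cast; ring)
    · subst h'
      refine ⟨(0,-1,-1,0), by decide, k', k', by omega, fun v => ?_⟩
      simp only [he' v, inner_sRefl, inner_add_left, inner_add_right, hnorm1, hnorm2, hip, hip']
      constructor <;> (push_cast; ring)
  rcases hαPhi with h | h
  · exact key α h k he
  · refine key (-α) h (-k) (fun v => ?_)
    rw [he v, ← sRefl_neg, neg_neg]

lemma good_of_mem (hnorm1 : ⟪a1, a1⟫ = 2) (hnorm2 : ⟪a2, a2⟫ = 2) (hip : ⟪a1, a2⟫ = -1)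
    (w : AffWeyl a1 a2) : Good a1 a2 (w : Equiv.Perm V) := by
  have hw : (w : Equiv.Perm V) ∈ Subgroup.closure {g | IsAffRefl a1 a2 g} := w.2
  rw [← Subgroup.mem_toSubmonoid, Subgroup.closure_toSubmonoid] at hw
  obtain ⟨l, hl, hprod⟩ := Submonoid.exists_list_of_mem_closure hw
  rw [← hprod]
  clear hprod hw
  induction l with
  | nil => exact good_one
  | cons y l ih =>
    have hy : IsAffRefl a1 a2 y := by
      rcases hl y (List.mem_cons_self) with h | h
      · exact h
      · -- y⁻¹ is an affine reflection, hence an involution, hence y = y⁻¹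
        have h' : IsAffRefl a1 a2 y⁻¹ := h
        obtain ⟨α, hαPhi, k, he⟩ := h'
        have h2 : ⟪α, α⟫ = 2 := phi_norm hnorm1 hnorm2 hip hαPhi
        have hinv : y⁻¹ * y⁻¹ = 1 := by
          ext v
          rw [Equiv.Perm.mul_apply, he, he, sRefl_invol h2]
          rfl
        have : (y⁻¹)⁻¹ = y⁻¹ := inv_eq_of_mul_eq_one_left hinv
        rw [inv_inv] at this
        rw [this]
        exact h
    rw [List.prod_cons]
    exact good_mul (good_gen hnorm1 hnorm2 hip hy) (ih (fun z hz => hl z (List.mem_cons_of_mem _ hz)))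

end AW
namespace AW
variable {a1 a2 : V}

/-- `r` is not an integer. -/
def NIr (r : ℝ) : Prop := ∀ m : ℤ, r ≠ (m : ℝ)

lemma NIr.floor_lt {r : ℝ} (h : NIr r) : (⌊r⌋ : ℝ) < r :=
  lt_of_le_of_ne (Int.floor_le r) (fun he => (h ⌊r⌋ he.symm).elim)

lemma NIr.floor_neg {r : ℝ} (h : NIr r) : ⌊-r⌋ = -⌊r⌋ - 1 := by
  rw [Int.floor_eq_iff]
  constructor
  · push_cast
    have := Int.lt_floor_add_one r
    linarith
  · push_cast
    have := h.floor_lt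
    linarith

/-- The number of hyperplanes separating the point with root coordinates `(x,y)` from the
fundamental alcove. -/
def Df (x y : ℝ) : ℕ := ⌊x⌋.natAbs + ⌊y⌋.natAbs + ⌊x + y⌋.natAbs

lemma floor_one_sub {r : ℝ} (h : NIr r) : ⌊1 - r⌋ = -⌊r⌋ := by
  have he : (1 : ℝ) - r = -r + ((1 : ℤ) : ℝ) := by push_cast; ring
  rw [he, Int.floor_add_intCast, h.floor_neg]
  ring

lemma floor_two_sub {r : ℝ} (h : NIr r) : ⌊2 - r⌋ = 1 - ⌊r⌋ := by
  have he : (2 : ℝ) - r = -r + ((2 : ℤ) : ℝ) := by push_cast; ring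
  rw [he, Int.floor_add_intCast, h.floor_neg]
  ring

lemma Dstep1 {x : ℝ} (hx : NIr x) (y : ℝ) :
    Df (-x) (x + y) ≤ Df x y + 1 ∧ (x < 0 → Df (-x) (x + y) + 1 = Df x y) := by
  have h1 : -x + (x + y) = y := by ring
  rw [Df, Df, h1, hx.floor_neg]
  constructor
  · omega
  · intro hlt
    have h2 : ⌊x⌋ < 0 := Int.floor_lt.mpr (by exact_mod_cast hlt)
    omega

lemma Dstep2 {y : ℝ} (hy : NIr y) (x : ℝ) :
    Df (x + y) (-y) ≤ Df x y + 1 ∧ (y < 0 → Df (x + y) (-y) + 1 = Df x y) := by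
  have h1 : (x + y) + -y = x := by ring
  rw [Df, Df, h1, hy.floor_neg]
  constructor
  · omega
  · intro hlt
    have h2 : ⌊y⌋ < 0 := Int.floor_lt.mpr (by exact_mod_cast hlt)
    omega

lemma Dstep0 {x y : ℝ} (hx : NIr x) (hy : NIr y) (hxy : NIr (x + y)) :
    Df (1 - y) (1 - x) ≤ Df x y + 1 ∧ (1 < x + y → Df (1 - y) (1 - x) + 1 = Df x y) := by
  have h1 : (1 - y) + (1 - x) = 2 - (x + y) := by ring
  rw [Df, Df, h1, floor_one_sub hy, floor_one_sub hx, floor_two_sub hxy]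
  constructor
  · omega
  · intro hlt
    have h2 : 1 ≤ ⌊x + y⌋ := Int.le_floor.mpr (by exact_mod_cast hlt.le)
    omega

lemma Df_q : Df (1/3 : ℝ) (1/3 : ℝ) = 0 := by
  have h1 : ⌊(1/3 : ℝ)⌋ = 0 := by
    rw [Int.floor_eq_zero_iff]
    constructor <;> norm_num
  have h2 : ⌊(1/3 : ℝ) + (1/3 : ℝ)⌋ = 0 := by
    rw [Int.floor_eq_zero_iff]
    constructor <;> norm_num
  rw [Df, h1, h2]
  rfl

end AW
namespace AW
variable {a1 a2 q : V}

lemma coords_s1 (hnorm1 : ⟪a1, a1⟫ = 2) (hip : ⟪a1, a2⟫ = -1) (u : V) :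
    ⟪a1, sRefl a1 0 u⟫ = -⟪a1, u⟫ ∧ ⟪a2, sRefl a1 0 u⟫ = ⟪a1, u⟫ + ⟪a2, u⟫ := by
  have hip' : ⟪a2, a1⟫ = -1 := by rw [real_inner_comm]; exact hip
  rw [inner_sRefl, inner_sRefl, hnorm1, hip']
  constructor <;> (push_cast; ring)

lemma coords_s2 (hnorm2 : ⟪a2, a2⟫ = 2) (hip : ⟪a1, a2⟫ = -1) (u : V) :
    ⟪a1, sRefl a2 0 u⟫ = ⟪a1, u⟫ + ⟪a2, u⟫ ∧ ⟪a2, sRefl a2 0 u⟫ = -⟪a2, u⟫ := by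
  rw [inner_sRefl, inner_sRefl, hnorm2, hip]
  constructor <;> (push_cast; ring)

lemma coords_s0 (hnorm1 : ⟪a1, a1⟫ = 2) (hnorm2 : ⟪a2, a2⟫ = 2) (hip : ⟪a1, a2⟫ = -1)
    (u : V) :
    ⟪a1, sRefl (a1 + a2) 1 u⟫ = 1 - ⟪a2, u⟫ ∧ ⟪a2, sRefl (a1 + a2) 1 u⟫ = 1 - ⟪a1, u⟫ := by
  have hip' : ⟪a2, a1⟫ = -1 := by rw [real_inner_comm]; exact hip
  rw [inner_sRefl, inner_sRefl]
  simp only [inner_add_left, inner_add_right, hnorm1, hnorm2, hip, hip']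
  constructor <;> (push_cast; ring)

section withq
variable (hnorm1 : ⟪a1, a1⟫ = 2) (hnorm2 : ⟪a2, a2⟫ = 2) (hip : ⟪a1, a2⟫ = -1)
variable (hq1 : ⟪a1, q⟫ = 1/3) (hq2 : ⟪a2, q⟫ = 1/3)
include hnorm1 hnorm2 hip hq1 hq2

lemma NI_coords (w : AffWeyl a1 a2) :
    NIr ⟪a1, (w : Equiv.Perm V) q⟫ ∧ NIr ⟪a2, (w : Equiv.Perm V) q⟫ ∧
      NIr (⟪a1, (w : Equiv.Perm V) q⟫ + ⟪a2, (w : Equiv.Perm V) q⟫) := by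
  obtain ⟨p, hp, n1, n2, hn, he⟩ := good_of_mem hnorm1 hnorm2 hip w
  have h1 := (he q).1
  have h2 := (he q).2
  rw [hq1, hq2] at h1 h2
  have hni := GM_nonint p hp
  refine ⟨fun m hm => ?_, fun m hm => ?_, fun m hm => ?_⟩
  · rw [h1] at hm
    have hc : ((p.1 + p.2.1 : ℤ) : ℝ) = ((3 * m - 3 * n1 : ℤ) : ℝ) := by push_cast; linarith
    have h3 : p.1 + p.2.1 = 3 * m - 3 * n1 := by exact_mod_cast hc
    omega
  · rw [h2] at hm
    have hc : ((p.2.2.1 + p.2.2.2 : ℤ) : ℝ) = ((3 * m - 3 * n2 : ℤ) : ℝ) := by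
      push_cast; linarith
    have h3 : p.2.2.1 + p.2.2.2 = 3 * m - 3 * n2 := by exact_mod_cast hc
    omega
  · rw [h1, h2] at hm
    have hc : ((p.1 + p.2.1 + p.2.2.1 + p.2.2.2 : ℤ) : ℝ) =
        ((3 * m - 3 * n1 - 3 * n2 : ℤ) : ℝ) := by push_cast; linarith
    have h3 : p.1 + p.2.1 + p.2.2.1 + p.2.2.2 = 3 * m - 3 * n1 - 3 * n2 := by
      exact_mod_cast hc
    omega

omit hnorm1 hnorm2 hip hq1 hq2 in
lemma prod_cons_apply (s : AffWeyl a1 a2) (l : List (AffWeyl a1 a2)) (v : V) :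
    (((s :: l).prod : AffWeyl a1 a2) : Equiv.Perm V) v
      = (s : Equiv.Perm V) ((l.prod : Equiv.Perm V) v) := by
  rw [List.prod_cons]
  rfl

lemma DW_le_len : ∀ l : List (AffWeyl a1 a2),
    (∀ g ∈ l, IsSimpleRefl a1 a2 (g : Equiv.Perm V)) →
    Df ⟪a1, (l.prod : Equiv.Perm V) q⟫ ⟪a2, (l.prod : Equiv.Perm V) q⟫ ≤ l.length := by
  intro l
  induction l with
  | nil =>
    intro _
    simp only [List.prod_nil, List.length_nil]
    rw [show ((1 : AffWeyl a1 a2) : Equiv.Perm V) q = q from rfl, hq1, hq2, Df_q]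
  | cons s l ih =>
    intro hall
    have hs := hall s (List.mem_cons_self)
    have hl := fun g hg => hall g (List.mem_cons_of_mem _ hg)
    obtain ⟨nx, ny, nxy⟩ := NI_coords hnorm1 hnorm2 hip hq1 hq2 l.prod
    have hle := ih hl
    rw [List.length_cons]
    rcases hs with h | h | h
    · rw [prod_cons_apply, h, (coords_s1 hnorm1 hip _).1, (coords_s1 hnorm1 hip _).2]
      have := (Dstep1 nx ⟪a2, (l.prod : Equiv.Perm V) q⟫).1
      omega
    · rw [prod_cons_apply, h, (coords_s2 hnorm2 hip _).1, (coords_s2 hnorm2 hip _).2]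
      have := (Dstep2 ny ⟪a1, (l.prod : Equiv.Perm V) q⟫).1
      omega
    · rw [prod_cons_apply, h, (coords_s0 hnorm1 hnorm2 hip _).1,
        (coords_s0 hnorm1 hnorm2 hip _).2]
      have := (Dstep0 nx ny nxy).1
      omega

omit hnorm1 hnorm2 hip hq1 hq2 in
lemma len_le_of_word {w : AffWeyl a1 a2} {l : List (AffWeyl a1 a2)}
    (hl : ∀ g ∈ l, IsSimpleRefl a1 a2 (g : Equiv.Perm V)) (hp : l.prod = w) :
    len a1 a2 w ≤ l.length :=
  Nat.sInf_le ⟨l, hl, rfl, hp⟩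

lemma eq_one_of_Df0 (w : AffWeyl a1 a2)
    (h : Df ⟪a1, (w : Equiv.Perm V) q⟫ ⟪a2, (w : Equiv.Perm V) q⟫ = 0) : w = 1 := by
  obtain ⟨p, hp, n1, n2, hn, he⟩ := good_of_mem hnorm1 hnorm2 hip w
  obtain ⟨nx, ny, nxy⟩ := NI_coords hnorm1 hnorm2 hip hq1 hq2 w
  set x := ⟪a1, (w : Equiv.Perm V) q⟫ with hxdef
  set y := ⟪a2, (w : Equiv.Perm V) q⟫ with hydef
  have hfx : ⌊x⌋ = 0 := by rw [Df] at h; omega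
  have hfy : ⌊y⌋ = 0 := by rw [Df] at h; omega
  have hfxy : ⌊x + y⌋ = 0 := by rw [Df] at h; omega
  have hbx := Int.floor_eq_zero_iff.mp hfx
  have hby := Int.floor_eq_zero_iff.mp hfy
  have hbxy := Int.floor_eq_zero_iff.mp hfxy
  simp only [Set.mem_Ico] at hbx hby hbxy
  have h1 := (he q).1
  have h2 := (he q).2
  rw [hq1, hq2, ← hxdef] at h1
  rw [hq1, hq2, ← hydef] at h2
  fin_cases hp <;> simp only [] at h1 h2 hn
  -- case (1,0,0,1): identity matrix
  · have hn1 : n1 = 0 := by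
      have ha : (-1 : ℝ) < (n1 : ℝ) := by push_cast at h1; linarith [hbx.1, hbx.2]
      have hb : ((n1 : ℝ)) < 1 := by push_cast at h1; linarith [hbx.1, hbx.2]
      have ha' : (-1 : ℤ) < n1 := by exact_mod_cast ha
      have hb' : n1 < 1 := by exact_mod_cast hb
      omega
    have hn2 : n2 = 0 := by
      have ha : (-1 : ℝ) < (n2 : ℝ) := by push_cast at h2; linarith [hby.1, hby.2]
      have hb : ((n2 : ℝ)) < 1 := by push_cast at h2; linarith [hby.1, hby.2]
      have ha' : (-1 : ℤ) < n2 := by exact_mod_cast ha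
      have hb' : n2 < 1 := by exact_mod_cast hb
      omega
    subst hn1 hn2
    apply Subtype.ext
    apply Equiv.ext
    intro v
    have hv := he v
    push_cast at hv
    refine eq_of_inner hnorm1 hnorm2 hip ?_ ?_
    · rw [hv.1]; push_cast; simp
    · rw [hv.2]; push_cast; simp
  -- case (-1,0,1,1)
  · exfalso
    have hn1 : n1 = 1 := by
      have ha : (0 : ℝ) < (n1 : ℝ) := by push_cast at h1; linarith [hbx.1, hbx.2]
      have hb : ((n1 : ℝ)) < 2 := by push_cast at h1; linarith [hbx.1, hbx.2]
      have ha' : (0 : ℤ) < n1 := by exact_mod_cast ha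
      have hb' : n1 < 2 := by exact_mod_cast hb
      omega
    have hn2 : n2 = 0 := by
      have ha : (-1 : ℝ) < (n2 : ℝ) := by push_cast at h2; linarith [hby.1, hby.2]
      have hb : ((n2 : ℝ)) < 1 := by push_cast at h2; linarith [hby.1, hby.2]
      have ha' : (-1 : ℤ) < n2 := by exact_mod_cast ha
      have hb' : n2 < 1 := by exact_mod_cast hb
      omega
    subst hn1 hn2
    push_cast at h1 h2
    -- x = 2/3, y = 2/3, x+y = 4/3 < 1 : contradiction
    linarith [hbxy.2]
  -- case (1,1,0,-1)
  · exfalso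
    have hn1 : n1 = 0 := by
      have ha : (-1 : ℝ) < (n1 : ℝ) := by push_cast at h1; linarith [hbx.1, hbx.2]
      have hb : ((n1 : ℝ)) < 1 := by push_cast at h1; linarith [hbx.1, hbx.2]
      have ha' : (-1 : ℤ) < n1 := by exact_mod_cast ha
      have hb' : n1 < 1 := by exact_mod_cast hb
      omega
    have hn2 : n2 = 1 := by
      have ha : (0 : ℝ) < (n2 : ℝ) := by push_cast at h2; linarith [hby.1, hby.2]
      have hb : ((n2 : ℝ)) < 2 := by push_cast at h2; linarith [hby.1, hby.2]
      have ha' : (0 : ℤ) < n2 := by exact_mod_cast ha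
      have hb' : n2 < 2 := by exact_mod_cast hb
      omega
    subst hn1 hn2
    push_cast at h1 h2
    linarith [hbxy.2]
  -- case (0,-1,-1,0)
  · exfalso
    have hn1 : n1 = 1 := by
      have ha : (0 : ℝ) < (n1 : ℝ) := by push_cast at h1; linarith [hbx.1, hbx.2]
      have hb : ((n1 : ℝ)) < 2 := by push_cast at h1; linarith [hbx.1, hbx.2]
      have ha' : (0 : ℤ) < n1 := by exact_mod_cast ha
      have hb' : n1 < 2 := by exact_mod_cast hb
      omega
    have hn2 : n2 = 1 := by
      have ha : (0 : ℝ) < (n2 : ℝ) := by push_cast at h2; linarith [hby.1, hby.2]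
      have hb : ((n2 : ℝ)) < 2 := by push_cast at h2; linarith [hby.1, hby.2]
      have ha' : (0 : ℤ) < n2 := by exact_mod_cast ha
      have hb' : n2 < 2 := by exact_mod_cast hb
      omega
    subst hn1 hn2
    push_cast at h1 h2
    linarith [hbxy.2]
  -- case (-1,-1,1,0) : rotation, excluded mod 3
  · exfalso
    have hn1 : n1 = 1 := by
      have ha : (0 : ℝ) < (n1 : ℝ) := by push_cast at h1; linarith [hbx.1, hbx.2]
      have hb : ((n1 : ℝ)) < 2 := by push_cast at h1; linarith [hbx.1, hbx.2]
      have ha' : (0 : ℤ) < n1 := by exact_mod_cast ha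
      have hb' : n1 < 2 := by exact_mod_cast hb
      omega
    have hn2 : n2 = 0 := by
      have ha : (-1 : ℝ) < (n2 : ℝ) := by push_cast at h2; linarith [hby.1, hby.2]
      have hb : ((n2 : ℝ)) < 1 := by push_cast at h2; linarith [hby.1, hby.2]
      have ha' : (-1 : ℤ) < n2 := by exact_mod_cast ha
      have hb' : n2 < 1 := by exact_mod_cast hb
      omega
    subst hn1 hn2
    omega
  -- case (0,1,-1,-1) : rotation, excluded mod 3
  · exfalso
    have hn1 : n1 = 0 := by
      have ha : (-1 : ℝ) < (n1 : ℝ) := by push_cast at h1; linarith [hbx.1, hbx.2]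
      have hb : ((n1 : ℝ)) < 1 := by push_cast at h1; linarith [hbx.1, hbx.2]
      have ha' : (-1 : ℤ) < n1 := by exact_mod_cast ha
      have hb' : n1 < 1 := by exact_mod_cast hb
      omega
    have hn2 : n2 = 1 := by
      have ha : (0 : ℝ) < (n2 : ℝ) := by push_cast at h2; linarith [hby.1, hby.2]
      have hb : ((n2 : ℝ)) < 2 := by push_cast at h2; linarith [hby.1, hby.2]
      have ha' : (0 : ℤ) < n2 := by exact_mod_cast ha
      have hb' : n2 < 2 := by exact_mod_cast hb
      omega
    subst hn1 hn2
    omega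

end withq
end AW
namespace AW
variable {a1 a2 q : V}

lemma S_mul_self (α : V) (h2 : ⟪α, α⟫ = 2) (hm : α ∈ Phi a1 a2) (k : ℤ) :
    S α h2 hm k * S α h2 hm k = (1 : AffWeyl a1 a2) := by
  apply Subtype.ext
  apply Equiv.ext
  intro v
  show sRefl α k (sRefl α k v) = v
  exact sRefl_invol h2 k v

section words
variable (hnorm1 : ⟪a1, a1⟫ = 2) (hnorm2 : ⟪a2, a2⟫ = 2) (hip : ⟪a1, a2⟫ = -1)
variable (hq1 : ⟪a1, q⟫ = 1/3) (hq2 : ⟪a2, q⟫ = 1/3)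
include hnorm1 hnorm2 hip hq1 hq2

lemma exists_word : ∀ n : ℕ, ∀ w : AffWeyl a1 a2,
    Df ⟪a1, (w : Equiv.Perm V) q⟫ ⟪a2, (w : Equiv.Perm V) q⟫ = n →
    ∃ l : List (AffWeyl a1 a2), (∀ g ∈ l, IsSimpleRefl a1 a2 (g : Equiv.Perm V)) ∧
      l.length = n ∧ l.prod = w := by
  intro n
  induction n with
  | zero =>
    intro w hD
    refine ⟨[], by simp, rfl, ?_⟩
    rw [List.prod_nil, eq_one_of_Df0 hnorm1 hnorm2 hip hq1 hq2 w hD]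
  | succ n ih =>
    intro w hD
    obtain ⟨nx, ny, nxy⟩ := NI_coords hnorm1 hnorm2 hip hq1 hq2 w
    set x := ⟪a1, (w : Equiv.Perm V) q⟫ with hxdef
    set y := ⟪a2, (w : Equiv.Perm V) q⟫ with hydef
    by_cases hx : x < 0
    · set s : AffWeyl a1 a2 := S a1 hnorm1 phi_a1 0 with hsdef
      have hc1 : ⟪a1, ((s * w : AffWeyl a1 a2) : Equiv.Perm V) q⟫ = -x :=
        (coords_s1 hnorm1 hip _).1
      have hc2 : ⟪a2, ((s * w : AffWeyl a1 a2) : Equiv.Perm V) q⟫ = x + y :=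
        (coords_s1 hnorm1 hip _).2
      have hDs : Df (-x) (x + y) = n := by
        have := (Dstep1 nx y).2 hx
        omega
      obtain ⟨l, hl, hlen, hprod⟩ := ih (s * w) (by rw [hc1, hc2]; exact hDs)
      refine ⟨s :: l, ?_, by simp [hlen], ?_⟩
      · intro g hg
        rcases List.mem_cons.mp hg with h | h
        · subst h; exact Or.inl (fun v => rfl)
        · exact hl g h
      · rw [List.prod_cons, hprod, ← mul_assoc, S_mul_self, one_mul]
    · by_cases hy : y < 0
      · set s : AffWeyl a1 a2 := S a2 hnorm2 phi_a2 0 with hsdef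
        have hc1 : ⟪a1, ((s * w : AffWeyl a1 a2) : Equiv.Perm V) q⟫ = x + y :=
          (coords_s2 hnorm2 hip _).1
        have hc2 : ⟪a2, ((s * w : AffWeyl a1 a2) : Equiv.Perm V) q⟫ = -y :=
          (coords_s2 hnorm2 hip _).2
        have hDs : Df (x + y) (-y) = n := by
          have := (Dstep2 ny x).2 hy
          omega
        obtain ⟨l, hl, hlen, hprod⟩ := ih (s * w) (by rw [hc1, hc2]; exact hDs)
        refine ⟨s :: l, ?_, by simp [hlen], ?_⟩
        · intro g hg
          rcases List.mem_cons.mp hg with h | h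
          · subst h; exact Or.inr (Or.inl (fun v => rfl))
          · exact hl g h
        · rw [List.prod_cons, hprod, ← mul_assoc, S_mul_self, one_mul]
      · have hx' : 0 < x := lt_of_le_of_ne (not_lt.mp hx) (fun h => nx 0 (by rw [← h]; simp))
        have hy' : 0 < y := lt_of_le_of_ne (not_lt.mp hy) (fun h => ny 0 (by rw [← h]; simp))
        have hxy : 1 < x + y := by
          by_contra hxyn
          have h1 : x + y < 1 :=
            lt_of_le_of_ne (not_lt.mp hxyn) (fun h => nxy 1 (by rw [h]; simp))
          have hfx : ⌊x⌋ = 0 := Int.floor_eq_zero_iff.mpr ⟨hx'.le, by linarith⟩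
          have hfy : ⌊y⌋ = 0 := Int.floor_eq_zero_iff.mpr ⟨hy'.le, by linarith⟩
          have hfxy : ⌊x + y⌋ = 0 := Int.floor_eq_zero_iff.mpr ⟨by linarith, h1⟩
          rw [Df, hfx, hfy, hfxy] at hD
          simp at hD
        set s : AffWeyl a1 a2 := S (a1 + a2) (norm_sum hnorm1 hnorm2 hip) phi_sum 1 with hsdef
        have hc1 : ⟪a1, ((s * w : AffWeyl a1 a2) : Equiv.Perm V) q⟫ = 1 - y :=
          (coords_s0 hnorm1 hnorm2 hip _).1
        have hc2 : ⟪a2, ((s * w : AffWeyl a1 a2) : Equiv.Perm V) q⟫ = 1 - x :=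
          (coords_s0 hnorm1 hnorm2 hip _).2
        have hDs : Df (1 - y) (1 - x) = n := by
          have := (Dstep0 nx ny nxy).2 hxy
          omega
        obtain ⟨l, hl, hlen, hprod⟩ := ih (s * w) (by rw [hc1, hc2]; exact hDs)
        refine ⟨s :: l, ?_, by simp [hlen], ?_⟩
        · intro g hg
          rcases List.mem_cons.mp hg with h | h
          · subst h; exact Or.inr (Or.inr (fun v => rfl))
          · exact hl g h
        · rw [List.prod_cons, hprod, ← mul_assoc, S_mul_self, one_mul]

/-- The length of `w` equals the number of hyperplanes separating `w q` from `q`. -/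
lemma len_eq (w : AffWeyl a1 a2) :
    len a1 a2 w = Df ⟪a1, (w : Equiv.Perm V) q⟫ ⟪a2, (w : Equiv.Perm V) q⟫ := by
  obtain ⟨l, hl, hlen, hprod⟩ := exists_word hnorm1 hnorm2 hip hq1 hq2
    (Df ⟪a1, (w : Equiv.Perm V) q⟫ ⟪a2, (w : Equiv.Perm V) q⟫) w rfl
  apply le_antisymm
  · have := len_le_of_word hl hprod
    omega
  · have hne : {n | ∃ l : List (AffWeyl a1 a2),
        (∀ g ∈ l, IsSimpleRefl a1 a2 (g : Equiv.Perm V)) ∧ l.length = n ∧ l.prod = w}.Nonempty :=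
      ⟨l.length, l, hl, rfl, hprod⟩
    obtain ⟨l0, hl0, hlen0, hprod0⟩ := Nat.sInf_mem hne
    have hb := DW_le_len hnorm1 hnorm2 hip hq1 hq2 l0 hl0
    rw [hprod0] at hb
    have : len a1 a2 w = l0.length := hlen0.symm
    omega

end words
end AW
namespace AW
variable {a1 a2 q : V}

lemma floor_add_t {b t : ℝ} (h0 : 0 ≤ t) (h1 : t ≤ 1) :
    ⌊b⌋ ≤ ⌊b + t⌋ ∧ ⌊b + t⌋ ≤ ⌊b⌋ + 1 := by
  constructor
  · exact Int.floor_le_floor (by linarith)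
  · have : ⌊b + t⌋ ≤ ⌊b + ((1 : ℤ) : ℝ)⌋ := Int.floor_le_floor (by push_cast; linarith)
    rwa [Int.floor_add_intCast] at this

lemma floor_sub_t {b t : ℝ} (h0 : 0 ≤ t) (h1 : t ≤ 1) :
    ⌊b⌋ - 1 ≤ ⌊b - t⌋ ∧ ⌊b - t⌋ ≤ ⌊b⌋ := by
  constructor
  · have : ⌊b + (-1 : ℤ)⌋ ≤ ⌊b - t⌋ := Int.floor_le_floor (by push_cast; linarith)
    rwa [Int.floor_add_intCast] at this
  · exact Int.floor_le_floor (by linarith)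

lemma floor_2k_sub {c : ℝ} (hc : NIr c) (k : ℤ) : ⌊2 * (k : ℝ) - c⌋ = 2 * k - ⌊c⌋ - 1 := by
  have he : 2 * (k : ℝ) - c = -c + ((2 * k : ℤ) : ℝ) := by push_cast; ring
  rw [he, Int.floor_add_intCast, hc.floor_neg]
  ring

lemma floor_sub_2k {c : ℝ} (k : ℤ) : ⌊c - 2 * (k : ℝ)⌋ = ⌊c⌋ - 2 * k := by
  have he : c - 2 * (k : ℝ) = c + ((-(2 * k) : ℤ) : ℝ) := by push_cast; ring
  rw [he, Int.floor_add_intCast]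
  ring

lemma sRefl_step {α : V} (h2 : ⟪α, α⟫ = 2) (k : ℤ) (v : V) :
    sRefl α (k + 1) (sRefl α k v) = v + α := by
  have hA : ⟪α, sRefl α k v⟫ = 2 * k - ⟪α, v⟫ := by
    rw [inner_sRefl, h2]; ring
  calc sRefl α (k + 1) (sRefl α k v)
      = sRefl α k v - (⟪α, sRefl α k v⟫ - (k + 1 : ℤ)) • α := rfl
    _ = (v - (⟪α, v⟫ - k) • α) - ((2 * k - ⟪α, v⟫) - (k + 1 : ℤ)) • α := by rw [hA]; rfl
    _ = v - ((⟪α, v⟫ - k) + ((2 * k - ⟪α, v⟫) - (k + 1 : ℤ))) • α := by rw [sub_sub, add_smul]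
    _ = v + α := by
        have hc : (⟪α, v⟫ - k) + ((2 * k - ⟪α, v⟫) - ((k : ℝ) + 1)) = -1 := by ring
        push_cast
        rw [hc, neg_one_smul, sub_neg_eq_add]

/-- If the root `α` points into the connected component of `v0` but `β` separates:
contradiction. -/
lemma kill {v0 α β : V} (hsub : Strip β ⊆ StripUnion a1 a2)
    (hv0mem : v0 ∈ (StripUnion a1 a2)ᶜ)
    (hmove : ∀ v ∈ connectedComponentIn (StripUnion a1 a2)ᶜ v0,
      v + α ∈ connectedComponentIn (StripUnion a1 a2)ᶜ v0)
    (hcase : (1 < ⟪β, v0⟫ ∧ ⟪β, α⟫ ≤ -1) ∨ (⟪β, v0⟫ < 0 ∧ 1 ≤ ⟪β, α⟫)) : False := by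
  set C := connectedComponentIn (StripUnion a1 a2)ᶜ v0 with hC
  have hv0C : v0 ∈ C := mem_connectedComponentIn hv0mem
  have hiter : ∀ n : ℕ, v0 + (n : ℝ) • α ∈ C := by
    intro n
    induction n with
    | zero => simpa using hv0C
    | succ n ih =>
      have hnext := hmove _ ih
      have he : v0 + ((n + 1 : ℕ) : ℝ) • α = (v0 + (n : ℝ) • α) + α := by
        push_cast
        rw [add_smul, one_smul, add_assoc]
      rw [he]
      exact hnext
  have hcont : ContinuousOn (fun v : V => ⟪β, v⟫) C :=
    (Continuous.inner continuous_const continuous_id).continuousOn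
  have hpre : IsPreconnected C := isPreconnected_connectedComponentIn
  have hval : ∀ n : ℕ, ⟪β, v0 + (n : ℝ) • α⟫ = ⟪β, v0⟫ + (n : ℝ) * ⟪β, α⟫ := by
    intro n
    rw [inner_add_right, inner_smul_right]
  rcases hcase with ⟨hb, hc⟩ | ⟨hb, hc⟩
  · obtain ⟨n, hn⟩ := exists_nat_gt ⟪β, v0⟫
    have h2 : ⟪β, v0 + (n : ℝ) • α⟫ < 0 := by
      rw [hval]
      have hcn : (n : ℝ) * ⟪β, α⟫ ≤ (n : ℝ) * (-1) :=
        mul_le_mul_of_nonneg_left hc (Nat.cast_nonneg n)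
      linarith
    have hsubim := hpre.intermediate_value (hiter n) hv0C hcont
    have hmem : (1/2 : ℝ) ∈ Set.Icc ⟪β, v0 + (n : ℝ) • α⟫ ⟪β, v0⟫ :=
      ⟨by linarith, by linarith⟩
    obtain ⟨z, hzC, hz⟩ := hsubim hmem
    have hz' : ⟪β, z⟫ = 1/2 := hz
    have hzS : z ∈ Strip β := ⟨by rw [hz']; norm_num, by rw [hz']; norm_num⟩
    exact (connectedComponentIn_subset _ _ hzC) (hsub hzS)
  · obtain ⟨n, hn⟩ := exists_nat_gt (1 - ⟪β, v0⟫)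
    have h2 : 1 < ⟪β, v0 + (n : ℝ) • α⟫ := by
      rw [hval]
      have hcn : (n : ℝ) * 1 ≤ (n : ℝ) * ⟪β, α⟫ :=
        mul_le_mul_of_nonneg_left hc (Nat.cast_nonneg n)
      linarith
    have hsubim := hpre.intermediate_value hv0C (hiter n) hcont
    have hmem : (1/2 : ℝ) ∈ Set.Icc ⟪β, v0⟫ ⟪β, v0 + (n : ℝ) • α⟫ :=
      ⟨by linarith, by linarith⟩
    obtain ⟨z, hzC, hz⟩ := hsubim hmem
    have hz' : ⟪β, z⟫ = 1/2 := hz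
    have hzS : z ∈ Strip β := ⟨by rw [hz']; norm_num, by rw [hz']; norm_num⟩
    exact (connectedComponentIn_subset _ _ hzC) (hsub hzS)

lemma strip1_sub : Strip a1 ⊆ StripUnion a1 a2 := fun v hv => Or.inl (Or.inl hv)
lemma strip2_sub : Strip a2 ⊆ StripUnion a1 a2 := fun v hv => Or.inl (Or.inr hv)
lemma strip3_sub : Strip (a1 + a2) ⊆ StripUnion a1 a2 := fun v hv => Or.inr hv

end AW
namespace AW
variable {a1 a2 q : V}

lemma NIr.neg {r : ℝ} (h : NIr r) : NIr (-r) := by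
  intro m hm
  apply h (-m)
  push_cast
  linarith

lemma finish (hnorm1 : ⟪a1, a1⟫ = 2) (hnorm2 : ⟪a2, a2⟫ = 2) (hip : ⟪a1, a2⟫ = -1)
    (hq1 : ⟪a1, q⟫ = 1/3) (hq2 : ⟪a2, q⟫ = 1/3)
    (w tr : AffWeyl a1 a2) {α : V} (hαPhi : α ∈ Phi a1 a2) (hαα : ⟪α, α⟫ = 2)
    (htr : ∀ v : V, act tr v = v + α)
    (m1 m2 : ℤ) (hm1 : ⟪a1, α⟫ = (m1 : ℝ)) (hm2 : ⟪a2, α⟫ = (m2 : ℝ))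
    (hpat : (m1, m2) ∈ ([(2,-1), (-1,2), (1,1), (-2,1), (1,-2), (-1,-1)] : List (ℤ × ℤ)))
    (H1 : (0 < m1 ∧ 1 < ⟪a1, (w : Equiv.Perm V) q⟫) ∨
      (m1 < 0 ∧ ⟪a1, (w : Equiv.Perm V) q⟫ < 0))
    (H2 : (0 < m2 ∧ 1 < ⟪a2, (w : Equiv.Perm V) q⟫) ∨
      (m2 < 0 ∧ ⟪a2, (w : Equiv.Perm V) q⟫ < 0))
    (H3 : (0 < m1 + m2 ∧ 1 < ⟪a1, (w : Equiv.Perm V) q⟫ + ⟪a2, (w : Equiv.Perm V) q⟫) ∨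
      (m1 + m2 < 0 ∧ ⟪a1, (w : Equiv.Perm V) q⟫ + ⟪a2, (w : Equiv.Perm V) q⟫ < 0)) :
    BruhatLT a1 a2 w (tr * w) ∧ len a1 a2 (tr * w) = len a1 a2 w + 4 := by
  obtain ⟨n1, n2, n3⟩ := NI_coords hnorm1 hnorm2 hip hq1 hq2 w
  set b1 : ℝ := ⟪a1, (w : Equiv.Perm V) q⟫ with hb1d
  set b2 : ℝ := ⟪a2, (w : Equiv.Perm V) q⟫ with hb2d
  set c : ℝ := ⟪α, (w : Equiv.Perm V) q⟫ with hcd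
  have hip' : ⟪a2, a1⟫ = -1 := by rw [real_inner_comm]; exact hip
  have h3a : (3 : ℝ) • α = (2 * (m1 : ℝ) + (m2 : ℝ)) • a1 + ((m1 : ℝ) + 2 * (m2 : ℝ)) • a2 := by
    refine eq_of_inner hnorm1 hnorm2 hip ?_ ?_
    · rw [inner_smul_right, inner_add_right, inner_smul_right, inner_smul_right, hm1,
        hnorm1, hip]
      ring
    · rw [inner_smul_right, inner_add_right, inner_smul_right, inner_smul_right, hm2,
        hnorm2, hip']
      ring
  have hcb : 3 * c = (2 * (m1 : ℝ) + (m2 : ℝ)) * b1 + ((m1 : ℝ) + 2 * (m2 : ℝ)) * b2 := by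
    have h := congrArg (fun u : V => ⟪u, (w : Equiv.Perm V) q⟫) h3a
    simp only [real_inner_smul_left, inner_add_left] at h
    rw [← hb1d, ← hb2d, ← hcd] at h
    linarith
  simp only [List.mem_cons, List.not_mem_nil, or_false, Prod.mk.injEq] at hpat
  rcases hpat with ⟨rfl, rfl⟩ | ⟨rfl, rfl⟩ | ⟨rfl, rfl⟩ | ⟨rfl, rfl⟩ | ⟨rfl, rfl⟩ | ⟨rfl, rfl⟩
  · -- case (2, -1)
    have hb1 : 1 < b1 := by
      rcases H1 with ⟨_, h⟩ | ⟨h', _⟩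
      · exact h
      · exact absurd h' (by decide)
    have hkf1 : 1 ≤ ⌊b1⌋ := Int.le_floor.mpr (by push_cast; linarith)
    have hb2 : b2 < 0 := by
      rcases H2 with ⟨h', _⟩ | ⟨_, h⟩
      · exact absurd h' (by decide)
      · exact h
    have hkf2 : ⌊b2⌋ ≤ -1 := by
      have : ⌊b2⌋ < 0 := Int.floor_lt.mpr (by push_cast; linarith)
      omega
    have hb3 : 1 < (b1 + b2) := by
      rcases H3 with ⟨_, h⟩ | ⟨h', _⟩
      · exact h
      · exact absurd h' (by decide)
    have hkf3 : 1 ≤ ⌊(b1 + b2)⌋ := Int.le_floor.mpr (by push_cast; linarith)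
    push_cast at hcb
    have hc : c = b1 := by linarith
    have hcNI : NIr c := by rw [hc]; exact n1
    set k : ℤ := ⌊c⌋ + 1 with hk
    have hkr : (k : ℝ) = (⌊c⌋ : ℝ) + 1 := by rw [hk]; push_cast; ring
    have ht0 : 0 < (k : ℝ) - c := by
      rw [hkr]; have := Int.lt_floor_add_one c; linarith
    have ht1 : (k : ℝ) - c < 1 := by
      rw [hkr]; have := hcNI.floor_lt; linarith
    set r1 : AffWeyl a1 a2 := S α hαα hαPhi k with hr1
    set r2 : AffWeyl a1 a2 := S α hαα hαPhi (k + 1) with hr2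
    have htrr : tr = r2 * r1 := by
      apply Subtype.ext; apply Equiv.ext; intro v
      have hx1 : (tr : Equiv.Perm V) v = v + α := htr v
      have hx2 : ((r2 * r1 : AffWeyl a1 a2) : Equiv.Perm V) v = v + α := sRefl_step hαα k v
      rw [hx1, hx2]
    have hu1 : ⟪a1, ((r1 * w : AffWeyl a1 a2) : Equiv.Perm V) q⟫ = (2 * (k : ℝ) - c) := by
      have h0 : ⟪a1, ((r1 * w : AffWeyl a1 a2) : Equiv.Perm V) q⟫
          = ⟪a1, sRefl α k ((w : Equiv.Perm V) q)⟫ := rfl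
      rw [h0, inner_sRefl, hm1, ← hb1d, ← hcd, hc]; push_cast; ring
    have hu2 : ⟪a2, ((r1 * w : AffWeyl a1 a2) : Equiv.Perm V) q⟫ = (b2 - ((k : ℝ) - c)) := by
      have h0 : ⟪a2, ((r1 * w : AffWeyl a1 a2) : Equiv.Perm V) q⟫
          = ⟪a2, sRefl α k ((w : Equiv.Perm V) q)⟫ := rfl
      rw [h0, inner_sRefl, hm2, ← hb2d, ← hcd, hc]; push_cast; ring
    have hsum : (2 * (k : ℝ) - c) + (b2 - ((k : ℝ) - c)) = ((b1 + b2) + ((k : ℝ) - c)) := by rw [hc]; push_cast; ring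
    have hw1 : ⟪a1, ((tr * w : AffWeyl a1 a2) : Equiv.Perm V) q⟫ = b1 + ((2 : ℤ) : ℝ) := by
      have h0 : ⟪a1, ((tr * w : AffWeyl a1 a2) : Equiv.Perm V) q⟫
          = ⟪a1, (tr : Equiv.Perm V) ((w : Equiv.Perm V) q)⟫ := rfl
      rw [h0, show (tr : Equiv.Perm V) ((w : Equiv.Perm V) q) = (w : Equiv.Perm V) q + α from htr _,
        inner_add_right, hm1, ← hb1d]
    have hw2 : ⟪a2, ((tr * w : AffWeyl a1 a2) : Equiv.Perm V) q⟫ = b2 + ((-1 : ℤ) : ℝ) := by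
      have h0 : ⟪a2, ((tr * w : AffWeyl a1 a2) : Equiv.Perm V) q⟫
          = ⟪a2, (tr : Equiv.Perm V) ((w : Equiv.Perm V) q)⟫ := rfl
      rw [h0, show (tr : Equiv.Perm V) ((w : Equiv.Perm V) q) = (w : Equiv.Perm V) q + α from htr _,
        inner_add_right, hm2, ← hb2d]
    have hlw : len a1 a2 w = Df b1 b2 := len_eq hnorm1 hnorm2 hip hq1 hq2 w
    have hlu : len a1 a2 (r1 * w) = Df (2 * (k : ℝ) - c) (b2 - ((k : ℝ) - c)) := by
      rw [len_eq hnorm1 hnorm2 hip hq1 hq2 (r1 * w), hu1, hu2]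
    have hlw' : len a1 a2 (tr * w) = Df (b1 + ((2 : ℤ) : ℝ)) (b2 + ((-1 : ℤ) : ℝ)) := by
      rw [len_eq hnorm1 hnorm2 hip hq1 hq2 (tr * w), hw1, hw2]
    have hfal : ⌊2 * (k : ℝ) - c⌋ = 2 * k - ⌊c⌋ - 1 := floor_2k_sub hcNI k
    have hck : ⌊c⌋ = ⌊b1⌋ := by rw [hc]
    have hfn2 := floor_sub_t (b := b2) ht0.le ht1.le
    have hfn3 := floor_add_t (b := (b1 + b2)) ht0.le ht1.le
    have hfw1 : ⌊b1 + ((2 : ℤ) : ℝ)⌋ = ⌊b1⌋ + (2) := Int.floor_add_intCast b1 (2)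
    have hfw2 : ⌊b2 + ((-1 : ℤ) : ℝ)⌋ = ⌊b2⌋ + (-1) := Int.floor_add_intCast b2 (-1)
    have hsw : (b1 + ((2 : ℤ) : ℝ)) + (b2 + ((-1 : ℤ) : ℝ)) = (b1 + b2) + ((1 : ℤ) : ℝ) := by
      push_cast; ring
    have hfw3 : ⌊(b1 + b2) + ((1 : ℤ) : ℝ)⌋ = ⌊b1 + b2⌋ + (1) := Int.floor_add_intCast (b1 + b2) (1)
    have hlen4 : len a1 a2 (tr * w) = len a1 a2 w + 4 := by
      rw [hlw', hlw]; simp only [Df]; rw [hsw, hfw1, hfw2, hfw3]; omega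
    have hl1 : len a1 a2 w < len a1 a2 (r1 * w) := by
      rw [hlw, hlu]; simp only [Df]; rw [hsum, hfal]; omega
    have hl2 : len a1 a2 (r1 * w) < len a1 a2 (tr * w) := by
      rw [hlu, hlw']; simp only [Df]; rw [hsum, hfal, hsw, hfw1, hfw2, hfw3]; omega
    refine ⟨⟨?_, ?_⟩, hlen4⟩
    · exact Relation.ReflTransGen.tail
        (Relation.ReflTransGen.single ⟨r1, ⟨α, hαPhi, k, fun v => rfl⟩, rfl, hl1⟩)
        ⟨r2, ⟨α, hαPhi, k + 1, fun v => rfl⟩, by rw [htrr, mul_assoc], hl2⟩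
    · intro h
      have hcontra : len a1 a2 w = len a1 a2 (tr * w) := by rw [← h]
      omega
  · -- case (-1, 2)
    have hb1 : b1 < 0 := by
      rcases H1 with ⟨h', _⟩ | ⟨_, h⟩
      · exact absurd h' (by decide)
      · exact h
    have hkf1 : ⌊b1⌋ ≤ -1 := by
      have : ⌊b1⌋ < 0 := Int.floor_lt.mpr (by push_cast; linarith)
      omega
    have hb2 : 1 < b2 := by
      rcases H2 with ⟨_, h⟩ | ⟨h', _⟩
      · exact h
      · exact absurd h' (by decide)
    have hkf2 : 1 ≤ ⌊b2⌋ := Int.le_floor.mpr (by push_cast; linarith)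
    have hb3 : 1 < (b1 + b2) := by
      rcases H3 with ⟨_, h⟩ | ⟨h', _⟩
      · exact h
      · exact absurd h' (by decide)
    have hkf3 : 1 ≤ ⌊(b1 + b2)⌋ := Int.le_floor.mpr (by push_cast; linarith)
    push_cast at hcb
    have hc : c = b2 := by linarith
    have hcNI : NIr c := by rw [hc]; exact n2
    set k : ℤ := ⌊c⌋ + 1 with hk
    have hkr : (k : ℝ) = (⌊c⌋ : ℝ) + 1 := by rw [hk]; push_cast; ring
    have ht0 : 0 < (k : ℝ) - c := by
      rw [hkr]; have := Int.lt_floor_add_one c; linarith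
    have ht1 : (k : ℝ) - c < 1 := by
      rw [hkr]; have := hcNI.floor_lt; linarith
    set r1 : AffWeyl a1 a2 := S α hαα hαPhi k with hr1
    set r2 : AffWeyl a1 a2 := S α hαα hαPhi (k + 1) with hr2
    have htrr : tr = r2 * r1 := by
      apply Subtype.ext; apply Equiv.ext; intro v
      have hx1 : (tr : Equiv.Perm V) v = v + α := htr v
      have hx2 : ((r2 * r1 : AffWeyl a1 a2) : Equiv.Perm V) v = v + α := sRefl_step hαα k v
      rw [hx1, hx2]
    have hu1 : ⟪a1, ((r1 * w : AffWeyl a1 a2) : Equiv.Perm V) q⟫ = (b1 - ((k : ℝ) - c)) := by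
      have h0 : ⟪a1, ((r1 * w : AffWeyl a1 a2) : Equiv.Perm V) q⟫
          = ⟪a1, sRefl α k ((w : Equiv.Perm V) q)⟫ := rfl
      rw [h0, inner_sRefl, hm1, ← hb1d, ← hcd, hc]; push_cast; ring
    have hu2 : ⟪a2, ((r1 * w : AffWeyl a1 a2) : Equiv.Perm V) q⟫ = (2 * (k : ℝ) - c) := by
      have h0 : ⟪a2, ((r1 * w : AffWeyl a1 a2) : Equiv.Perm V) q⟫
          = ⟪a2, sRefl α k ((w : Equiv.Perm V) q)⟫ := rfl
      rw [h0, inner_sRefl, hm2, ← hb2d, ← hcd, hc]; push_cast; ring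
    have hsum : (b1 - ((k : ℝ) - c)) + (2 * (k : ℝ) - c) = ((b1 + b2) + ((k : ℝ) - c)) := by rw [hc]; push_cast; ring
    have hw1 : ⟪a1, ((tr * w : AffWeyl a1 a2) : Equiv.Perm V) q⟫ = b1 + ((-1 : ℤ) : ℝ) := by
      have h0 : ⟪a1, ((tr * w : AffWeyl a1 a2) : Equiv.Perm V) q⟫
          = ⟪a1, (tr : Equiv.Perm V) ((w : Equiv.Perm V) q)⟫ := rfl
      rw [h0, show (tr : Equiv.Perm V) ((w : Equiv.Perm V) q) = (w : Equiv.Perm V) q + α from htr _,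
        inner_add_right, hm1, ← hb1d]
    have hw2 : ⟪a2, ((tr * w : AffWeyl a1 a2) : Equiv.Perm V) q⟫ = b2 + ((2 : ℤ) : ℝ) := by
      have h0 : ⟪a2, ((tr * w : AffWeyl a1 a2) : Equiv.Perm V) q⟫
          = ⟪a2, (tr : Equiv.Perm V) ((w : Equiv.Perm V) q)⟫ := rfl
      rw [h0, show (tr : Equiv.Perm V) ((w : Equiv.Perm V) q) = (w : Equiv.Perm V) q + α from htr _,
        inner_add_right, hm2, ← hb2d]
    have hlw : len a1 a2 w = Df b1 b2 := len_eq hnorm1 hnorm2 hip hq1 hq2 w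
    have hlu : len a1 a2 (r1 * w) = Df (b1 - ((k : ℝ) - c)) (2 * (k : ℝ) - c) := by
      rw [len_eq hnorm1 hnorm2 hip hq1 hq2 (r1 * w), hu1, hu2]
    have hlw' : len a1 a2 (tr * w) = Df (b1 + ((-1 : ℤ) : ℝ)) (b2 + ((2 : ℤ) : ℝ)) := by
      rw [len_eq hnorm1 hnorm2 hip hq1 hq2 (tr * w), hw1, hw2]
    have hfal : ⌊2 * (k : ℝ) - c⌋ = 2 * k - ⌊c⌋ - 1 := floor_2k_sub hcNI k
    have hck : ⌊c⌋ = ⌊b2⌋ := by rw [hc]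
    have hfn1 := floor_sub_t (b := b1) ht0.le ht1.le
    have hfn3 := floor_add_t (b := (b1 + b2)) ht0.le ht1.le
    have hfw1 : ⌊b1 + ((-1 : ℤ) : ℝ)⌋ = ⌊b1⌋ + (-1) := Int.floor_add_intCast b1 (-1)
    have hfw2 : ⌊b2 + ((2 : ℤ) : ℝ)⌋ = ⌊b2⌋ + (2) := Int.floor_add_intCast b2 (2)
    have hsw : (b1 + ((-1 : ℤ) : ℝ)) + (b2 + ((2 : ℤ) : ℝ)) = (b1 + b2) + ((1 : ℤ) : ℝ) := by
      push_cast; ring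
    have hfw3 : ⌊(b1 + b2) + ((1 : ℤ) : ℝ)⌋ = ⌊b1 + b2⌋ + (1) := Int.floor_add_intCast (b1 + b2) (1)
    have hlen4 : len a1 a2 (tr * w) = len a1 a2 w + 4 := by
      rw [hlw', hlw]; simp only [Df]; rw [hsw, hfw1, hfw2, hfw3]; omega
    have hl1 : len a1 a2 w < len a1 a2 (r1 * w) := by
      rw [hlw, hlu]; simp only [Df]; rw [hsum, hfal]; omega
    have hl2 : len a1 a2 (r1 * w) < len a1 a2 (tr * w) := by
      rw [hlu, hlw']; simp only [Df]; rw [hsum, hfal, hsw, hfw1, hfw2, hfw3]; omega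
    refine ⟨⟨?_, ?_⟩, hlen4⟩
    · exact Relation.ReflTransGen.tail
        (Relation.ReflTransGen.single ⟨r1, ⟨α, hαPhi, k, fun v => rfl⟩, rfl, hl1⟩)
        ⟨r2, ⟨α, hαPhi, k + 1, fun v => rfl⟩, by rw [htrr, mul_assoc], hl2⟩
    · intro h
      have hcontra : len a1 a2 w = len a1 a2 (tr * w) := by rw [← h]
      omega
  · -- case (1, 1)
    have hb1 : 1 < b1 := by
      rcases H1 with ⟨_, h⟩ | ⟨h', _⟩
      · exact h
      · exact absurd h' (by decide)
    have hkf1 : 1 ≤ ⌊b1⌋ := Int.le_floor.mpr (by push_cast; linarith)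
    have hb2 : 1 < b2 := by
      rcases H2 with ⟨_, h⟩ | ⟨h', _⟩
      · exact h
      · exact absurd h' (by decide)
    have hkf2 : 1 ≤ ⌊b2⌋ := Int.le_floor.mpr (by push_cast; linarith)
    have hb3 : 1 < (b1 + b2) := by
      rcases H3 with ⟨_, h⟩ | ⟨h', _⟩
      · exact h
      · exact absurd h' (by decide)
    have hkf3 : 1 ≤ ⌊(b1 + b2)⌋ := Int.le_floor.mpr (by push_cast; linarith)
    push_cast at hcb
    have hc : c = (b1 + b2) := by linarith
    have hcNI : NIr c := by rw [hc]; exact n3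
    set k : ℤ := ⌊c⌋ + 1 with hk
    have hkr : (k : ℝ) = (⌊c⌋ : ℝ) + 1 := by rw [hk]; push_cast; ring
    have ht0 : 0 < (k : ℝ) - c := by
      rw [hkr]; have := Int.lt_floor_add_one c; linarith
    have ht1 : (k : ℝ) - c < 1 := by
      rw [hkr]; have := hcNI.floor_lt; linarith
    set r1 : AffWeyl a1 a2 := S α hαα hαPhi k with hr1
    set r2 : AffWeyl a1 a2 := S α hαα hαPhi (k + 1) with hr2
    have htrr : tr = r2 * r1 := by
      apply Subtype.ext; apply Equiv.ext; intro v
      have hx1 : (tr : Equiv.Perm V) v = v + α := htr v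
      have hx2 : ((r2 * r1 : AffWeyl a1 a2) : Equiv.Perm V) v = v + α := sRefl_step hαα k v
      rw [hx1, hx2]
    have hu1 : ⟪a1, ((r1 * w : AffWeyl a1 a2) : Equiv.Perm V) q⟫ = (b1 + ((k : ℝ) - c)) := by
      have h0 : ⟪a1, ((r1 * w : AffWeyl a1 a2) : Equiv.Perm V) q⟫
          = ⟪a1, sRefl α k ((w : Equiv.Perm V) q)⟫ := rfl
      rw [h0, inner_sRefl, hm1, ← hb1d, ← hcd, hc]; push_cast; ring
    have hu2 : ⟪a2, ((r1 * w : AffWeyl a1 a2) : Equiv.Perm V) q⟫ = (b2 + ((k : ℝ) - c)) := by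
      have h0 : ⟪a2, ((r1 * w : AffWeyl a1 a2) : Equiv.Perm V) q⟫
          = ⟪a2, sRefl α k ((w : Equiv.Perm V) q)⟫ := rfl
      rw [h0, inner_sRefl, hm2, ← hb2d, ← hcd, hc]; push_cast; ring
    have hsum : (b1 + ((k : ℝ) - c)) + (b2 + ((k : ℝ) - c)) = (2 * (k : ℝ) - c) := by rw [hc]; push_cast; ring
    have hw1 : ⟪a1, ((tr * w : AffWeyl a1 a2) : Equiv.Perm V) q⟫ = b1 + ((1 : ℤ) : ℝ) := by
      have h0 : ⟪a1, ((tr * w : AffWeyl a1 a2) : Equiv.Perm V) q⟫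
          = ⟪a1, (tr : Equiv.Perm V) ((w : Equiv.Perm V) q)⟫ := rfl
      rw [h0, show (tr : Equiv.Perm V) ((w : Equiv.Perm V) q) = (w : Equiv.Perm V) q + α from htr _,
        inner_add_right, hm1, ← hb1d]
    have hw2 : ⟪a2, ((tr * w : AffWeyl a1 a2) : Equiv.Perm V) q⟫ = b2 + ((1 : ℤ) : ℝ) := by
      have h0 : ⟪a2, ((tr * w : AffWeyl a1 a2) : Equiv.Perm V) q⟫
          = ⟪a2, (tr : Equiv.Perm V) ((w : Equiv.Perm V) q)⟫ := rfl
      rw [h0, show (tr : Equiv.Perm V) ((w : Equiv.Perm V) q) = (w : Equiv.Perm V) q + α from htr _,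
        inner_add_right, hm2, ← hb2d]
    have hlw : len a1 a2 w = Df b1 b2 := len_eq hnorm1 hnorm2 hip hq1 hq2 w
    have hlu : len a1 a2 (r1 * w) = Df (b1 + ((k : ℝ) - c)) (b2 + ((k : ℝ) - c)) := by
      rw [len_eq hnorm1 hnorm2 hip hq1 hq2 (r1 * w), hu1, hu2]
    have hlw' : len a1 a2 (tr * w) = Df (b1 + ((1 : ℤ) : ℝ)) (b2 + ((1 : ℤ) : ℝ)) := by
      rw [len_eq hnorm1 hnorm2 hip hq1 hq2 (tr * w), hw1, hw2]
    have hfal : ⌊2 * (k : ℝ) - c⌋ = 2 * k - ⌊c⌋ - 1 := floor_2k_sub hcNI k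
    have hck : ⌊c⌋ = ⌊(b1 + b2)⌋ := by rw [hc]
    have hfn1 := floor_add_t (b := b1) ht0.le ht1.le
    have hfn2 := floor_add_t (b := b2) ht0.le ht1.le
    have hfw1 : ⌊b1 + ((1 : ℤ) : ℝ)⌋ = ⌊b1⌋ + (1) := Int.floor_add_intCast b1 (1)
    have hfw2 : ⌊b2 + ((1 : ℤ) : ℝ)⌋ = ⌊b2⌋ + (1) := Int.floor_add_intCast b2 (1)
    have hsw : (b1 + ((1 : ℤ) : ℝ)) + (b2 + ((1 : ℤ) : ℝ)) = (b1 + b2) + ((2 : ℤ) : ℝ) := by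
      push_cast; ring
    have hfw3 : ⌊(b1 + b2) + ((2 : ℤ) : ℝ)⌋ = ⌊b1 + b2⌋ + (2) := Int.floor_add_intCast (b1 + b2) (2)
    have hlen4 : len a1 a2 (tr * w) = len a1 a2 w + 4 := by
      rw [hlw', hlw]; simp only [Df]; rw [hsw, hfw1, hfw2, hfw3]; omega
    have hl1 : len a1 a2 w < len a1 a2 (r1 * w) := by
      rw [hlw, hlu]; simp only [Df]; rw [hsum, hfal]; omega
    have hl2 : len a1 a2 (r1 * w) < len a1 a2 (tr * w) := by
      rw [hlu, hlw']; simp only [Df]; rw [hsum, hfal, hsw, hfw1, hfw2, hfw3]; omega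
    refine ⟨⟨?_, ?_⟩, hlen4⟩
    · exact Relation.ReflTransGen.tail
        (Relation.ReflTransGen.single ⟨r1, ⟨α, hαPhi, k, fun v => rfl⟩, rfl, hl1⟩)
        ⟨r2, ⟨α, hαPhi, k + 1, fun v => rfl⟩, by rw [htrr, mul_assoc], hl2⟩
    · intro h
      have hcontra : len a1 a2 w = len a1 a2 (tr * w) := by rw [← h]
      omega
  · -- case (-2, 1)
    have hb1 : b1 < 0 := by
      rcases H1 with ⟨h', _⟩ | ⟨_, h⟩
      · exact absurd h' (by decide)
      · exact h
    have hkf1 : ⌊b1⌋ ≤ -1 := by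
      have : ⌊b1⌋ < 0 := Int.floor_lt.mpr (by push_cast; linarith)
      omega
    have hb2 : 1 < b2 := by
      rcases H2 with ⟨_, h⟩ | ⟨h', _⟩
      · exact h
      · exact absurd h' (by decide)
    have hkf2 : 1 ≤ ⌊b2⌋ := Int.le_floor.mpr (by push_cast; linarith)
    have hb3 : (b1 + b2) < 0 := by
      rcases H3 with ⟨h', _⟩ | ⟨_, h⟩
      · exact absurd h' (by decide)
      · exact h
    have hkf3 : ⌊(b1 + b2)⌋ ≤ -1 := by
      have : ⌊(b1 + b2)⌋ < 0 := Int.floor_lt.mpr (by push_cast; linarith)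
      omega
    push_cast at hcb
    have hc : c = -b1 := by linarith
    have hcNI : NIr c := by
      rw [hc]
      exact n1.neg
    set k : ℤ := ⌊c⌋ + 1 with hk
    have hkr : (k : ℝ) = (⌊c⌋ : ℝ) + 1 := by rw [hk]; push_cast; ring
    have ht0 : 0 < (k : ℝ) - c := by
      rw [hkr]; have := Int.lt_floor_add_one c; linarith
    have ht1 : (k : ℝ) - c < 1 := by
      rw [hkr]; have := hcNI.floor_lt; linarith
    set r1 : AffWeyl a1 a2 := S α hαα hαPhi k with hr1
    set r2 : AffWeyl a1 a2 := S α hαα hαPhi (k + 1) with hr2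
    have htrr : tr = r2 * r1 := by
      apply Subtype.ext; apply Equiv.ext; intro v
      have hx1 : (tr : Equiv.Perm V) v = v + α := htr v
      have hx2 : ((r2 * r1 : AffWeyl a1 a2) : Equiv.Perm V) v = v + α := sRefl_step hαα k v
      rw [hx1, hx2]
    have hu1 : ⟪a1, ((r1 * w : AffWeyl a1 a2) : Equiv.Perm V) q⟫ = (c - 2 * (k : ℝ)) := by
      have h0 : ⟪a1, ((r1 * w : AffWeyl a1 a2) : Equiv.Perm V) q⟫
          = ⟪a1, sRefl α k ((w : Equiv.Perm V) q)⟫ := rfl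
      rw [h0, inner_sRefl, hm1, ← hb1d, ← hcd, hc]; push_cast; ring
    have hu2 : ⟪a2, ((r1 * w : AffWeyl a1 a2) : Equiv.Perm V) q⟫ = (b2 + ((k : ℝ) - c)) := by
      have h0 : ⟪a2, ((r1 * w : AffWeyl a1 a2) : Equiv.Perm V) q⟫
          = ⟪a2, sRefl α k ((w : Equiv.Perm V) q)⟫ := rfl
      rw [h0, inner_sRefl, hm2, ← hb2d, ← hcd, hc]; push_cast; ring
    have hsum : (c - 2 * (k : ℝ)) + (b2 + ((k : ℝ) - c)) = ((b1 + b2) - ((k : ℝ) - c)) := by rw [hc]; push_cast; ring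
    have hw1 : ⟪a1, ((tr * w : AffWeyl a1 a2) : Equiv.Perm V) q⟫ = b1 + ((-2 : ℤ) : ℝ) := by
      have h0 : ⟪a1, ((tr * w : AffWeyl a1 a2) : Equiv.Perm V) q⟫
          = ⟪a1, (tr : Equiv.Perm V) ((w : Equiv.Perm V) q)⟫ := rfl
      rw [h0, show (tr : Equiv.Perm V) ((w : Equiv.Perm V) q) = (w : Equiv.Perm V) q + α from htr _,
        inner_add_right, hm1, ← hb1d]
    have hw2 : ⟪a2, ((tr * w : AffWeyl a1 a2) : Equiv.Perm V) q⟫ = b2 + ((1 : ℤ) : ℝ) := by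
      have h0 : ⟪a2, ((tr * w : AffWeyl a1 a2) : Equiv.Perm V) q⟫
          = ⟪a2, (tr : Equiv.Perm V) ((w : Equiv.Perm V) q)⟫ := rfl
      rw [h0, show (tr : Equiv.Perm V) ((w : Equiv.Perm V) q) = (w : Equiv.Perm V) q + α from htr _,
        inner_add_right, hm2, ← hb2d]
    have hlw : len a1 a2 w = Df b1 b2 := len_eq hnorm1 hnorm2 hip hq1 hq2 w
    have hlu : len a1 a2 (r1 * w) = Df (c - 2 * (k : ℝ)) (b2 + ((k : ℝ) - c)) := by
      rw [len_eq hnorm1 hnorm2 hip hq1 hq2 (r1 * w), hu1, hu2]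
    have hlw' : len a1 a2 (tr * w) = Df (b1 + ((-2 : ℤ) : ℝ)) (b2 + ((1 : ℤ) : ℝ)) := by
      rw [len_eq hnorm1 hnorm2 hip hq1 hq2 (tr * w), hw1, hw2]
    have hfal : ⌊c - 2 * (k : ℝ)⌋ = ⌊c⌋ - 2 * k := floor_sub_2k k
    have hck : ⌊b1⌋ = -⌊c⌋ - 1 := by
      have hbb : b1 = -c := by rw [hc]; ring
      rw [hbb, hcNI.floor_neg]
    have hfn2 := floor_add_t (b := b2) ht0.le ht1.le
    have hfn3 := floor_sub_t (b := (b1 + b2)) ht0.le ht1.le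
    have hfw1 : ⌊b1 + ((-2 : ℤ) : ℝ)⌋ = ⌊b1⌋ + (-2) := Int.floor_add_intCast b1 (-2)
    have hfw2 : ⌊b2 + ((1 : ℤ) : ℝ)⌋ = ⌊b2⌋ + (1) := Int.floor_add_intCast b2 (1)
    have hsw : (b1 + ((-2 : ℤ) : ℝ)) + (b2 + ((1 : ℤ) : ℝ)) = (b1 + b2) + ((-1 : ℤ) : ℝ) := by
      push_cast; ring
    have hfw3 : ⌊(b1 + b2) + ((-1 : ℤ) : ℝ)⌋ = ⌊b1 + b2⌋ + (-1) := Int.floor_add_intCast (b1 + b2) (-1)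
    have hlen4 : len a1 a2 (tr * w) = len a1 a2 w + 4 := by
      rw [hlw', hlw]; simp only [Df]; rw [hsw, hfw1, hfw2, hfw3]; omega
    have hl1 : len a1 a2 w < len a1 a2 (r1 * w) := by
      rw [hlw, hlu]; simp only [Df]; rw [hsum, hfal]; omega
    have hl2 : len a1 a2 (r1 * w) < len a1 a2 (tr * w) := by
      rw [hlu, hlw']; simp only [Df]; rw [hsum, hfal, hsw, hfw1, hfw2, hfw3]; omega
    refine ⟨⟨?_, ?_⟩, hlen4⟩
    · exact Relation.ReflTransGen.tail
        (Relation.ReflTransGen.single ⟨r1, ⟨α, hαPhi, k, fun v => rfl⟩, rfl, hl1⟩)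
        ⟨r2, ⟨α, hαPhi, k + 1, fun v => rfl⟩, by rw [htrr, mul_assoc], hl2⟩
    · intro h
      have hcontra : len a1 a2 w = len a1 a2 (tr * w) := by rw [← h]
      omega
  · -- case (1, -2)
    have hb1 : 1 < b1 := by
      rcases H1 with ⟨_, h⟩ | ⟨h', _⟩
      · exact h
      · exact absurd h' (by decide)
    have hkf1 : 1 ≤ ⌊b1⌋ := Int.le_floor.mpr (by push_cast; linarith)
    have hb2 : b2 < 0 := by
      rcases H2 with ⟨h', _⟩ | ⟨_, h⟩
      · exact absurd h' (by decide)
      · exact h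
    have hkf2 : ⌊b2⌋ ≤ -1 := by
      have : ⌊b2⌋ < 0 := Int.floor_lt.mpr (by push_cast; linarith)
      omega
    have hb3 : (b1 + b2) < 0 := by
      rcases H3 with ⟨h', _⟩ | ⟨_, h⟩
      · exact absurd h' (by decide)
      · exact h
    have hkf3 : ⌊(b1 + b2)⌋ ≤ -1 := by
      have : ⌊(b1 + b2)⌋ < 0 := Int.floor_lt.mpr (by push_cast; linarith)
      omega
    push_cast at hcb
    have hc : c = -b2 := by linarith
    have hcNI : NIr c := by
      rw [hc]
      exact n2.neg
    set k : ℤ := ⌊c⌋ + 1 with hk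
    have hkr : (k : ℝ) = (⌊c⌋ : ℝ) + 1 := by rw [hk]; push_cast; ring
    have ht0 : 0 < (k : ℝ) - c := by
      rw [hkr]; have := Int.lt_floor_add_one c; linarith
    have ht1 : (k : ℝ) - c < 1 := by
      rw [hkr]; have := hcNI.floor_lt; linarith
    set r1 : AffWeyl a1 a2 := S α hαα hαPhi k with hr1
    set r2 : AffWeyl a1 a2 := S α hαα hαPhi (k + 1) with hr2
    have htrr : tr = r2 * r1 := by
      apply Subtype.ext; apply Equiv.ext; intro v
      have hx1 : (tr : Equiv.Perm V) v = v + α := htr v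
      have hx2 : ((r2 * r1 : AffWeyl a1 a2) : Equiv.Perm V) v = v + α := sRefl_step hαα k v
      rw [hx1, hx2]
    have hu1 : ⟪a1, ((r1 * w : AffWeyl a1 a2) : Equiv.Perm V) q⟫ = (b1 + ((k : ℝ) - c)) := by
      have h0 : ⟪a1, ((r1 * w : AffWeyl a1 a2) : Equiv.Perm V) q⟫
          = ⟪a1, sRefl α k ((w : Equiv.Perm V) q)⟫ := rfl
      rw [h0, inner_sRefl, hm1, ← hb1d, ← hcd, hc]; push_cast; ring
    have hu2 : ⟪a2, ((r1 * w : AffWeyl a1 a2) : Equiv.Perm V) q⟫ = (c - 2 * (k : ℝ)) := by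
      have h0 : ⟪a2, ((r1 * w : AffWeyl a1 a2) : Equiv.Perm V) q⟫
          = ⟪a2, sRefl α k ((w : Equiv.Perm V) q)⟫ := rfl
      rw [h0, inner_sRefl, hm2, ← hb2d, ← hcd, hc]; push_cast; ring
    have hsum : (b1 + ((k : ℝ) - c)) + (c - 2 * (k : ℝ)) = ((b1 + b2) - ((k : ℝ) - c)) := by rw [hc]; push_cast; ring
    have hw1 : ⟪a1, ((tr * w : AffWeyl a1 a2) : Equiv.Perm V) q⟫ = b1 + ((1 : ℤ) : ℝ) := by
      have h0 : ⟪a1, ((tr * w : AffWeyl a1 a2) : Equiv.Perm V) q⟫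
          = ⟪a1, (tr : Equiv.Perm V) ((w : Equiv.Perm V) q)⟫ := rfl
      rw [h0, show (tr : Equiv.Perm V) ((w : Equiv.Perm V) q) = (w : Equiv.Perm V) q + α from htr _,
        inner_add_right, hm1, ← hb1d]
    have hw2 : ⟪a2, ((tr * w : AffWeyl a1 a2) : Equiv.Perm V) q⟫ = b2 + ((-2 : ℤ) : ℝ) := by
      have h0 : ⟪a2, ((tr * w : AffWeyl a1 a2) : Equiv.Perm V) q⟫
          = ⟪a2, (tr : Equiv.Perm V) ((w : Equiv.Perm V) q)⟫ := rfl
      rw [h0, show (tr : Equiv.Perm V) ((w : Equiv.Perm V) q) = (w : Equiv.Perm V) q + α from htr _,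
        inner_add_right, hm2, ← hb2d]
    have hlw : len a1 a2 w = Df b1 b2 := len_eq hnorm1 hnorm2 hip hq1 hq2 w
    have hlu : len a1 a2 (r1 * w) = Df (b1 + ((k : ℝ) - c)) (c - 2 * (k : ℝ)) := by
      rw [len_eq hnorm1 hnorm2 hip hq1 hq2 (r1 * w), hu1, hu2]
    have hlw' : len a1 a2 (tr * w) = Df (b1 + ((1 : ℤ) : ℝ)) (b2 + ((-2 : ℤ) : ℝ)) := by
      rw [len_eq hnorm1 hnorm2 hip hq1 hq2 (tr * w), hw1, hw2]
    have hfal : ⌊c - 2 * (k : ℝ)⌋ = ⌊c⌋ - 2 * k := floor_sub_2k k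
    have hck : ⌊b2⌋ = -⌊c⌋ - 1 := by
      have hbb : b2 = -c := by rw [hc]; ring
      rw [hbb, hcNI.floor_neg]
    have hfn1 := floor_add_t (b := b1) ht0.le ht1.le
    have hfn3 := floor_sub_t (b := (b1 + b2)) ht0.le ht1.le
    have hfw1 : ⌊b1 + ((1 : ℤ) : ℝ)⌋ = ⌊b1⌋ + (1) := Int.floor_add_intCast b1 (1)
    have hfw2 : ⌊b2 + ((-2 : ℤ) : ℝ)⌋ = ⌊b2⌋ + (-2) := Int.floor_add_intCast b2 (-2)
    have hsw : (b1 + ((1 : ℤ) : ℝ)) + (b2 + ((-2 : ℤ) : ℝ)) = (b1 + b2) + ((-1 : ℤ) : ℝ) := by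
      push_cast; ring
    have hfw3 : ⌊(b1 + b2) + ((-1 : ℤ) : ℝ)⌋ = ⌊b1 + b2⌋ + (-1) := Int.floor_add_intCast (b1 + b2) (-1)
    have hlen4 : len a1 a2 (tr * w) = len a1 a2 w + 4 := by
      rw [hlw', hlw]; simp only [Df]; rw [hsw, hfw1, hfw2, hfw3]; omega
    have hl1 : len a1 a2 w < len a1 a2 (r1 * w) := by
      rw [hlw, hlu]; simp only [Df]; rw [hsum, hfal]; omega
    have hl2 : len a1 a2 (r1 * w) < len a1 a2 (tr * w) := by
      rw [hlu, hlw']; simp only [Df]; rw [hsum, hfal, hsw, hfw1, hfw2, hfw3]; omega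
    refine ⟨⟨?_, ?_⟩, hlen4⟩
    · exact Relation.ReflTransGen.tail
        (Relation.ReflTransGen.single ⟨r1, ⟨α, hαPhi, k, fun v => rfl⟩, rfl, hl1⟩)
        ⟨r2, ⟨α, hαPhi, k + 1, fun v => rfl⟩, by rw [htrr, mul_assoc], hl2⟩
    · intro h
      have hcontra : len a1 a2 w = len a1 a2 (tr * w) := by rw [← h]
      omega
  · -- case (-1, -1)
    have hb1 : b1 < 0 := by
      rcases H1 with ⟨h', _⟩ | ⟨_, h⟩
      · exact absurd h' (by decide)
      · exact h
    have hkf1 : ⌊b1⌋ ≤ -1 := by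
      have : ⌊b1⌋ < 0 := Int.floor_lt.mpr (by push_cast; linarith)
      omega
    have hb2 : b2 < 0 := by
      rcases H2 with ⟨h', _⟩ | ⟨_, h⟩
      · exact absurd h' (by decide)
      · exact h
    have hkf2 : ⌊b2⌋ ≤ -1 := by
      have : ⌊b2⌋ < 0 := Int.floor_lt.mpr (by push_cast; linarith)
      omega
    have hb3 : (b1 + b2) < 0 := by
      rcases H3 with ⟨h', _⟩ | ⟨_, h⟩
      · exact absurd h' (by decide)
      · exact h
    have hkf3 : ⌊(b1 + b2)⌋ ≤ -1 := by
      have : ⌊(b1 + b2)⌋ < 0 := Int.floor_lt.mpr (by push_cast; linarith)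
      omega
    push_cast at hcb
    have hc : c = -(b1 + b2) := by linarith
    have hcNI : NIr c := by
      rw [hc]
      exact n3.neg
    set k : ℤ := ⌊c⌋ + 1 with hk
    have hkr : (k : ℝ) = (⌊c⌋ : ℝ) + 1 := by rw [hk]; push_cast; ring
    have ht0 : 0 < (k : ℝ) - c := by
      rw [hkr]; have := Int.lt_floor_add_one c; linarith
    have ht1 : (k : ℝ) - c < 1 := by
      rw [hkr]; have := hcNI.floor_lt; linarith
    set r1 : AffWeyl a1 a2 := S α hαα hαPhi k with hr1
    set r2 : AffWeyl a1 a2 := S α hαα hαPhi (k + 1) with hr2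
    have htrr : tr = r2 * r1 := by
      apply Subtype.ext; apply Equiv.ext; intro v
      have hx1 : (tr : Equiv.Perm V) v = v + α := htr v
      have hx2 : ((r2 * r1 : AffWeyl a1 a2) : Equiv.Perm V) v = v + α := sRefl_step hαα k v
      rw [hx1, hx2]
    have hu1 : ⟪a1, ((r1 * w : AffWeyl a1 a2) : Equiv.Perm V) q⟫ = (b1 - ((k : ℝ) - c)) := by
      have h0 : ⟪a1, ((r1 * w : AffWeyl a1 a2) : Equiv.Perm V) q⟫
          = ⟪a1, sRefl α k ((w : Equiv.Perm V) q)⟫ := rfl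
      rw [h0, inner_sRefl, hm1, ← hb1d, ← hcd, hc]; push_cast; ring
    have hu2 : ⟪a2, ((r1 * w : AffWeyl a1 a2) : Equiv.Perm V) q⟫ = (b2 - ((k : ℝ) - c)) := by
      have h0 : ⟪a2, ((r1 * w : AffWeyl a1 a2) : Equiv.Perm V) q⟫
          = ⟪a2, sRefl α k ((w : Equiv.Perm V) q)⟫ := rfl
      rw [h0, inner_sRefl, hm2, ← hb2d, ← hcd, hc]; push_cast; ring
    have hsum : (b1 - ((k : ℝ) - c)) + (b2 - ((k : ℝ) - c)) = (c - 2 * (k : ℝ)) := by rw [hc]; push_cast; ring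
    have hw1 : ⟪a1, ((tr * w : AffWeyl a1 a2) : Equiv.Perm V) q⟫ = b1 + ((-1 : ℤ) : ℝ) := by
      have h0 : ⟪a1, ((tr * w : AffWeyl a1 a2) : Equiv.Perm V) q⟫
          = ⟪a1, (tr : Equiv.Perm V) ((w : Equiv.Perm V) q)⟫ := rfl
      rw [h0, show (tr : Equiv.Perm V) ((w : Equiv.Perm V) q) = (w : Equiv.Perm V) q + α from htr _,
        inner_add_right, hm1, ← hb1d]
    have hw2 : ⟪a2, ((tr * w : AffWeyl a1 a2) : Equiv.Perm V) q⟫ = b2 + ((-1 : ℤ) : ℝ) := by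
      have h0 : ⟪a2, ((tr * w : AffWeyl a1 a2) : Equiv.Perm V) q⟫
          = ⟪a2, (tr : Equiv.Perm V) ((w : Equiv.Perm V) q)⟫ := rfl
      rw [h0, show (tr : Equiv.Perm V) ((w : Equiv.Perm V) q) = (w : Equiv.Perm V) q + α from htr _,
        inner_add_right, hm2, ← hb2d]
    have hlw : len a1 a2 w = Df b1 b2 := len_eq hnorm1 hnorm2 hip hq1 hq2 w
    have hlu : len a1 a2 (r1 * w) = Df (b1 - ((k : ℝ) - c)) (b2 - ((k : ℝ) - c)) := by
      rw [len_eq hnorm1 hnorm2 hip hq1 hq2 (r1 * w), hu1, hu2]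
    have hlw' : len a1 a2 (tr * w) = Df (b1 + ((-1 : ℤ) : ℝ)) (b2 + ((-1 : ℤ) : ℝ)) := by
      rw [len_eq hnorm1 hnorm2 hip hq1 hq2 (tr * w), hw1, hw2]
    have hfal : ⌊c - 2 * (k : ℝ)⌋ = ⌊c⌋ - 2 * k := floor_sub_2k k
    have hck : ⌊(b1 + b2)⌋ = -⌊c⌋ - 1 := by
      have hbb : (b1 + b2) = -c := by rw [hc]; ring
      rw [hbb, hcNI.floor_neg]
    have hfn1 := floor_sub_t (b := b1) ht0.le ht1.le
    have hfn2 := floor_sub_t (b := b2) ht0.le ht1.le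
    have hfw1 : ⌊b1 + ((-1 : ℤ) : ℝ)⌋ = ⌊b1⌋ + (-1) := Int.floor_add_intCast b1 (-1)
    have hfw2 : ⌊b2 + ((-1 : ℤ) : ℝ)⌋ = ⌊b2⌋ + (-1) := Int.floor_add_intCast b2 (-1)
    have hsw : (b1 + ((-1 : ℤ) : ℝ)) + (b2 + ((-1 : ℤ) : ℝ)) = (b1 + b2) + ((-2 : ℤ) : ℝ) := by
      push_cast; ring
    have hfw3 : ⌊(b1 + b2) + ((-2 : ℤ) : ℝ)⌋ = ⌊b1 + b2⌋ + (-2) := Int.floor_add_intCast (b1 + b2) (-2)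
    have hlen4 : len a1 a2 (tr * w) = len a1 a2 w + 4 := by
      rw [hlw', hlw]; simp only [Df]; rw [hsw, hfw1, hfw2, hfw3]; omega
    have hl1 : len a1 a2 w < len a1 a2 (r1 * w) := by
      rw [hlw, hlu]; simp only [Df]; rw [hsum, hfal]; omega
    have hl2 : len a1 a2 (r1 * w) < len a1 a2 (tr * w) := by
      rw [hlu, hlw']; simp only [Df]; rw [hsum, hfal, hsw, hfw1, hfw2, hfw3]; omega
    refine ⟨⟨?_, ?_⟩, hlen4⟩
    · exact Relation.ReflTransGen.tail
        (Relation.ReflTransGen.single ⟨r1, ⟨α, hαPhi, k, fun v => rfl⟩, rfl, hl1⟩)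
        ⟨r2, ⟨α, hαPhi, k + 1, fun v => rfl⟩, by rw [htrr, mul_assoc], hl2⟩
    · intro h
      have hcontra : len a1 a2 w = len a1 a2 (tr * w) := by rw [← h]
      omega

end AW

/-- **Proposition.** Let `w` be a non-spiral element and `w' = t(α) w` its translation into
the chamber, where `α` is the root pointing into the chamber of `w`. Then `w < w'` in the
Bruhat order and `ℓ(w') = ℓ(w) + 4`. -/
theorem translation_into_chamber_length
    (a1 a2 q : V)
    (hnorm1 : ⟪a1, a1⟫ = 2) (hnorm2 : ⟪a2, a2⟫ = 2) (hip : ⟪a1, a2⟫ = -1)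
    (hq1 : ⟪a1, q⟫ = 1/3) (hq2 : ⟪a2, q⟫ = 1/3)
    (w : AffWeyl a1 a2) (hns : ¬ IsSpiral a1 a2 q w)
    (α : V) (hα : PointsInto a1 a2 (chamberOf a1 a2 q w) α)
    (tr : AffWeyl a1 a2) (htr : ∀ v : V, act tr v = v + α) :
    BruhatLT a1 a2 w (tr * w) ∧ len a1 a2 (tr * w) = len a1 a2 w + 4 := by
  open AW in
  show _
  obtain ⟨hαPhi, hmove⟩ := hα
  have hip' : ⟪a2, a1⟫ = -1 := by rw [real_inner_comm]; exact hip
  have hv0mem : (w : Equiv.Perm V) q ∈ (StripUnion a1 a2)ᶜ := hns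
  obtain ⟨n1, n2, n3⟩ := AW.NI_coords hnorm1 hnorm2 hip hq1 hq2 w
  set b1 : ℝ := ⟪a1, (w : Equiv.Perm V) q⟫ with hb1d
  set b2 : ℝ := ⟪a2, (w : Equiv.Perm V) q⟫ with hb2d
  have hs3 : ⟪a1 + a2, (w : Equiv.Perm V) q⟫ = b1 + b2 := by rw [inner_add_left]
  have hx : b1 < 0 ∨ 1 < b1 := by
    rcases not_and_or.mp (show ¬ (0 ≤ b1 ∧ b1 ≤ 1) from fun h => hns (Or.inl (Or.inl h)))
      with h | h
    · exact Or.inl (not_le.mp h)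
    · exact Or.inr (not_le.mp h)
  have hy : b2 < 0 ∨ 1 < b2 := by
    rcases not_and_or.mp (show ¬ (0 ≤ b2 ∧ b2 ≤ 1) from fun h => hns (Or.inl (Or.inr h)))
      with h | h
    · exact Or.inl (not_le.mp h)
    · exact Or.inr (not_le.mp h)
  have hxy : b1 + b2 < 0 ∨ 1 < b1 + b2 := by
    rcases not_and_or.mp (show ¬ (0 ≤ b1 + b2 ∧ b1 + b2 ≤ 1) from fun h =>
      hns (Or.inr ⟨by rw [hs3]; exact h.1, by rw [hs3]; exact h.2⟩)) with h | h
    · exact Or.inl (not_le.mp h)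
    · exact Or.inr (not_le.mp h)
  have hαcases : α = a1 ∨ α = a2 ∨ α = a1 + a2 ∨ α = -a1 ∨ α = -a2 ∨ α = -(a1 + a2) := by
    rcases hαPhi with h | h
    · simp only [PosRoots, Set.mem_insert_iff, Set.mem_singleton_iff] at h
      rcases h with h | h | h
      · exact Or.inl h
      · exact Or.inr (Or.inl h)
      · exact Or.inr (Or.inr (Or.inl h))
    · simp only [PosRoots, Set.mem_insert_iff, Set.mem_singleton_iff] at h
      rcases h with h | h | h
      · exact Or.inr (Or.inr (Or.inr (Or.inl (by rw [← h, neg_neg]))))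
      · exact Or.inr (Or.inr (Or.inr (Or.inr (Or.inl (by rw [← h, neg_neg])))))
      · exact Or.inr (Or.inr (Or.inr (Or.inr (Or.inr (by rw [← h, neg_neg])))))
  rcases hx with hx | hx
  · rcases hy with hy | hy
    · rcases hxy with hxy | hxy
      · -- chamber (-,-,-)
        rcases hαcases with rfl | rfl | rfl | rfl | rfl | rfl
        · exact (kill strip1_sub hv0mem hmove (Or.inr ⟨hx,
            by simp only [inner_add_left, inner_add_right, inner_neg_left, inner_neg_right, hnorm1, hnorm2, hip, hip']; norm_num⟩)).elim
        · exact (kill strip2_sub hv0mem hmove (Or.inr ⟨hy,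
            by simp only [inner_add_left, inner_add_right, inner_neg_left, inner_neg_right, hnorm1, hnorm2, hip, hip']; norm_num⟩)).elim
        · exact (kill strip1_sub hv0mem hmove (Or.inr ⟨hx,
            by simp only [inner_add_left, inner_add_right, inner_neg_left, inner_neg_right, hnorm1, hnorm2, hip, hip']; norm_num⟩)).elim
        · exact (kill strip2_sub hv0mem hmove (Or.inr ⟨hy,
            by simp only [inner_add_left, inner_add_right, inner_neg_left, inner_neg_right, hnorm1, hnorm2, hip, hip']; norm_num⟩)).elim
        · exact (kill strip1_sub hv0mem hmove (Or.inr ⟨hx,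
            by simp only [inner_add_left, inner_add_right, inner_neg_left, inner_neg_right, hnorm1, hnorm2, hip, hip']; norm_num⟩)).elim
        · refine finish hnorm1 hnorm2 hip hq1 hq2 w tr hαPhi
            (phi_norm hnorm1 hnorm2 hip hαPhi) htr (-1) (-1) ?_ ?_ ?_ ?_ ?_ ?_
          · simp only [inner_add_left, inner_add_right, inner_neg_left, inner_neg_right, hnorm1, hnorm2, hip, hip']; norm_num
          · simp only [inner_add_left, inner_add_right, inner_neg_left, inner_neg_right, hnorm1, hnorm2, hip, hip']; norm_num
          · decide
          · exact Or.inr ⟨by norm_num, hx⟩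
          · exact Or.inr ⟨by norm_num, hy⟩
          · exact Or.inr ⟨by norm_num, hxy⟩
      · -- impossible (-,-,+)
        exfalso; linarith
    · rcases hxy with hxy | hxy
      · -- chamber (-,+,-)
        rcases hαcases with rfl | rfl | rfl | rfl | rfl | rfl
        · exact (kill strip1_sub hv0mem hmove (Or.inr ⟨hx,
            by simp only [inner_add_left, inner_add_right, inner_neg_left, inner_neg_right, hnorm1, hnorm2, hip, hip']; norm_num⟩)).elim
        · exact (kill strip3_sub hv0mem hmove (Or.inr ⟨(by rw [hs3]; exact hxy),
            by simp only [inner_add_left, inner_add_right, inner_neg_left, inner_neg_right, hnorm1, hnorm2, hip, hip']; norm_num⟩)).elim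
        · exact (kill strip1_sub hv0mem hmove (Or.inr ⟨hx,
            by simp only [inner_add_left, inner_add_right, inner_neg_left, inner_neg_right, hnorm1, hnorm2, hip, hip']; norm_num⟩)).elim
        · refine finish hnorm1 hnorm2 hip hq1 hq2 w tr hαPhi
            (phi_norm hnorm1 hnorm2 hip hαPhi) htr (-2) (1) ?_ ?_ ?_ ?_ ?_ ?_
          · simp only [inner_add_left, inner_add_right, inner_neg_left, inner_neg_right, hnorm1, hnorm2, hip, hip']; norm_num
          · simp only [inner_add_left, inner_add_right, inner_neg_left, inner_neg_right, hnorm1, hnorm2, hip, hip']; norm_num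
          · decide
          · exact Or.inr ⟨by norm_num, hx⟩
          · exact Or.inl ⟨by norm_num, hy⟩
          · exact Or.inr ⟨by norm_num, hxy⟩
        · exact (kill strip1_sub hv0mem hmove (Or.inr ⟨hx,
            by simp only [inner_add_left, inner_add_right, inner_neg_left, inner_neg_right, hnorm1, hnorm2, hip, hip']; norm_num⟩)).elim
        · exact (kill strip2_sub hv0mem hmove (Or.inl ⟨hy,
            by simp only [inner_add_left, inner_add_right, inner_neg_left, inner_neg_right, hnorm1, hnorm2, hip, hip']; norm_num⟩)).elim
      · -- chamber (-,+,+)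
        rcases hαcases with rfl | rfl | rfl | rfl | rfl | rfl
        · exact (kill strip1_sub hv0mem hmove (Or.inr ⟨hx,
            by simp only [inner_add_left, inner_add_right, inner_neg_left, inner_neg_right, hnorm1, hnorm2, hip, hip']; norm_num⟩)).elim
        · refine finish hnorm1 hnorm2 hip hq1 hq2 w tr hαPhi
            (phi_norm hnorm1 hnorm2 hip hαPhi) htr (-1) (2) ?_ ?_ ?_ ?_ ?_ ?_
          · simp only [inner_add_left, inner_add_right, inner_neg_left, inner_neg_right, hnorm1, hnorm2, hip, hip']; norm_num
          · simp only [inner_add_left, inner_add_right, inner_neg_left, inner_neg_right, hnorm1, hnorm2, hip, hip']; norm_num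
          · decide
          · exact Or.inr ⟨by norm_num, hx⟩
          · exact Or.inl ⟨by norm_num, hy⟩
          · exact Or.inl ⟨by norm_num, hxy⟩
        · exact (kill strip1_sub hv0mem hmove (Or.inr ⟨hx,
            by simp only [inner_add_left, inner_add_right, inner_neg_left, inner_neg_right, hnorm1, hnorm2, hip, hip']; norm_num⟩)).elim
        · exact (kill strip3_sub hv0mem hmove (Or.inl ⟨(by rw [hs3]; exact hxy),
            by simp only [inner_add_left, inner_add_right, inner_neg_left, inner_neg_right, hnorm1, hnorm2, hip, hip']; norm_num⟩)).elim
        · exact (kill strip1_sub hv0mem hmove (Or.inr ⟨hx,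
            by simp only [inner_add_left, inner_add_right, inner_neg_left, inner_neg_right, hnorm1, hnorm2, hip, hip']; norm_num⟩)).elim
        · exact (kill strip2_sub hv0mem hmove (Or.inl ⟨hy,
            by simp only [inner_add_left, inner_add_right, inner_neg_left, inner_neg_right, hnorm1, hnorm2, hip, hip']; norm_num⟩)).elim
  · rcases hy with hy | hy
    · rcases hxy with hxy | hxy
      · -- chamber (+,-,-)
        rcases hαcases with rfl | rfl | rfl | rfl | rfl | rfl
        · exact (kill strip3_sub hv0mem hmove (Or.inr ⟨(by rw [hs3]; exact hxy),
            by simp only [inner_add_left, inner_add_right, inner_neg_left, inner_neg_right, hnorm1, hnorm2, hip, hip']; norm_num⟩)).elim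
        · exact (kill strip1_sub hv0mem hmove (Or.inl ⟨hx,
            by simp only [inner_add_left, inner_add_right, inner_neg_left, inner_neg_right, hnorm1, hnorm2, hip, hip']; norm_num⟩)).elim
        · exact (kill strip2_sub hv0mem hmove (Or.inr ⟨hy,
            by simp only [inner_add_left, inner_add_right, inner_neg_left, inner_neg_right, hnorm1, hnorm2, hip, hip']; norm_num⟩)).elim
        · exact (kill strip1_sub hv0mem hmove (Or.inl ⟨hx,
            by simp only [inner_add_left, inner_add_right, inner_neg_left, inner_neg_right, hnorm1, hnorm2, hip, hip']; norm_num⟩)).elim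
        · refine finish hnorm1 hnorm2 hip hq1 hq2 w tr hαPhi
            (phi_norm hnorm1 hnorm2 hip hαPhi) htr (1) (-2) ?_ ?_ ?_ ?_ ?_ ?_
          · simp only [inner_add_left, inner_add_right, inner_neg_left, inner_neg_right, hnorm1, hnorm2, hip, hip']; norm_num
          · simp only [inner_add_left, inner_add_right, inner_neg_left, inner_neg_right, hnorm1, hnorm2, hip, hip']; norm_num
          · decide
          · exact Or.inl ⟨by norm_num, hx⟩
          · exact Or.inr ⟨by norm_num, hy⟩
          · exact Or.inr ⟨by norm_num, hxy⟩
        · exact (kill strip1_sub hv0mem hmove (Or.inl ⟨hx,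
            by simp only [inner_add_left, inner_add_right, inner_neg_left, inner_neg_right, hnorm1, hnorm2, hip, hip']; norm_num⟩)).elim
      · -- chamber (+,-,+)
        rcases hαcases with rfl | rfl | rfl | rfl | rfl | rfl
        · refine finish hnorm1 hnorm2 hip hq1 hq2 w tr hαPhi
            (phi_norm hnorm1 hnorm2 hip hαPhi) htr (2) (-1) ?_ ?_ ?_ ?_ ?_ ?_
          · simp only [inner_add_left, inner_add_right, inner_neg_left, inner_neg_right, hnorm1, hnorm2, hip, hip']; norm_num
          · simp only [inner_add_left, inner_add_right, inner_neg_left, inner_neg_right, hnorm1, hnorm2, hip, hip']; norm_num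
          · decide
          · exact Or.inl ⟨by norm_num, hx⟩
          · exact Or.inr ⟨by norm_num, hy⟩
          · exact Or.inl ⟨by norm_num, hxy⟩
        · exact (kill strip1_sub hv0mem hmove (Or.inl ⟨hx,
            by simp only [inner_add_left, inner_add_right, inner_neg_left, inner_neg_right, hnorm1, hnorm2, hip, hip']; norm_num⟩)).elim
        · exact (kill strip2_sub hv0mem hmove (Or.inr ⟨hy,
            by simp only [inner_add_left, inner_add_right, inner_neg_left, inner_neg_right, hnorm1, hnorm2, hip, hip']; norm_num⟩)).elim
        · exact (kill strip1_sub hv0mem hmove (Or.inl ⟨hx,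
            by simp only [inner_add_left, inner_add_right, inner_neg_left, inner_neg_right, hnorm1, hnorm2, hip, hip']; norm_num⟩)).elim
        · exact (kill strip3_sub hv0mem hmove (Or.inl ⟨(by rw [hs3]; exact hxy),
            by simp only [inner_add_left, inner_add_right, inner_neg_left, inner_neg_right, hnorm1, hnorm2, hip, hip']; norm_num⟩)).elim
        · exact (kill strip1_sub hv0mem hmove (Or.inl ⟨hx,
            by simp only [inner_add_left, inner_add_right, inner_neg_left, inner_neg_right, hnorm1, hnorm2, hip, hip']; norm_num⟩)).elim
    · rcases hxy with hxy | hxy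
      · -- impossible (+,+,-)
        exfalso; linarith
      · -- chamber (+,+,+)
        rcases hαcases with rfl | rfl | rfl | rfl | rfl | rfl
        · exact (kill strip2_sub hv0mem hmove (Or.inl ⟨hy,
            by simp only [inner_add_left, inner_add_right, inner_neg_left, inner_neg_right, hnorm1, hnorm2, hip, hip']; norm_num⟩)).elim
        · exact (kill strip1_sub hv0mem hmove (Or.inl ⟨hx,
            by simp only [inner_add_left, inner_add_right, inner_neg_left, inner_neg_right, hnorm1, hnorm2, hip, hip']; norm_num⟩)).elim
        · refine finish hnorm1 hnorm2 hip hq1 hq2 w tr hαPhi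
            (phi_norm hnorm1 hnorm2 hip hαPhi) htr (1) (1) ?_ ?_ ?_ ?_ ?_ ?_
          · simp only [inner_add_left, inner_add_right, inner_neg_left, inner_neg_right, hnorm1, hnorm2, hip, hip']; norm_num
          · simp only [inner_add_left, inner_add_right, inner_neg_left, inner_neg_right, hnorm1, hnorm2, hip, hip']; norm_num
          · decide
          · exact Or.inl ⟨by norm_num, hx⟩
          · exact Or.inl ⟨by norm_num, hy⟩
          · exact Or.inl ⟨by norm_num, hxy⟩
        · exact (kill strip1_sub hv0mem hmove (Or.inl ⟨hx,
            by simp only [inner_add_left, inner_add_right, inner_neg_left, inner_neg_right, hnorm1, hnorm2, hip, hip']; norm_num⟩)).elim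
        · exact (kill strip2_sub hv0mem hmove (Or.inl ⟨hy,
            by simp only [inner_add_left, inner_add_right, inner_neg_left, inner_neg_right, hnorm1, hnorm2, hip, hip']; norm_num⟩)).elim
        · exact (kill strip1_sub hv0mem hmove (Or.inl ⟨hx,
            by simp only [inner_add_left, inner_add_right, inner_neg_left, inner_neg_right, hnorm1, hnorm2, hip, hip']; norm_num⟩)).elim
end
end

section
/- Let (W,S) be a Coxeter system, let w ∈ W, let u ∈ R(w), and let x ≤ w in the Bruhat order. Then q^w_x = q^w_{xu} (note xu ≤ w, so both sides are defined). -/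
noncomputable section

variable {B : Type*} {W : Type*} [Group W]

/-- The Bruhat order on a Coxeter group: the partial order generated by `u < r * u`
whenever `r` is a reflection and `ℓ(u) < ℓ(r * u)`. -/
def CoxBruhatLE {M : CoxeterMatrix B} (cs : CoxeterSystem M W) (x w : W) : Prop :=
  Relation.ReflTransGen
    (fun a b => ∃ r : W, cs.IsReflection r ∧ b = r * a ∧ cs.length a < cs.length b) x w

/-- The strict Bruhat order. -/
def CoxBruhatLT {M : CoxeterMatrix B} (cs : CoxeterSystem M W) (x w : W) : Prop :=
  CoxBruhatLE cs x w ∧ x ≠ w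

/-- `R(w)`: the subgroup generated by the simple reflections `s` with `w * s < w`. -/
def Rsub {M : CoxeterMatrix B} (cs : CoxeterSystem M W) (w : W) : Subgroup W :=
  Subgroup.closure {s | (∃ i : B, s = cs.simple i) ∧ CoxBruhatLT cs (w * s) w}

/-- `q^w_x = n^w_x − ℓ(w)` where `n^w_x` is the number of reflections `r` with `r x ≤ w`. -/
def coxQ {M : CoxeterMatrix B} (cs : CoxeterSystem M W) (w x : W) : ℤ :=
  (Set.ncard {r : W | cs.IsReflection r ∧ CoxBruhatLE cs (r * x) w} : ℤ)
    - (cs.length w : ℤ)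


/-! ### Auxiliary development: strong exchange and descent properties for the Bruhat order -/

namespace BruhatAux

open List CoxeterSystem

variable {B : Type*} {W : Type*} [Group W] [DecidableEq W] {M : CoxeterMatrix B}
  (cs : CoxeterSystem M W)

/-- The basic involution of `W × ZMod 2` attached to a simple reflection. -/
def eta (i : B) : W × ZMod 2 → W × ZMod 2 :=
  fun p => (cs.simple i * p.1 * cs.simple i,
    if p.1 = cs.simple i then p.2 + 1 else p.2)

lemma eta_invol (i : B) : Function.Involutive (eta cs i) := by
  intro p
  obtain ⟨t, ε⟩ := p
  have h2 : ∀ x : ZMod 2, x + 1 + 1 = x := by decide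
  simp only [eta]
  have hss := cs.simple_mul_simple_self i
  by_cases h : t = cs.simple i
  · subst h
    simp [hss, h2]
  · have h' : ¬ (cs.simple i * t * cs.simple i = cs.simple i) := by
      intro hc
      apply h
      have : cs.simple i * (cs.simple i * t * cs.simple i) * cs.simple i
          = cs.simple i * cs.simple i * cs.simple i := by rw [hc]
      calc t = cs.simple i * (cs.simple i * t * cs.simple i) * cs.simple i := by
              rw [show cs.simple i * (cs.simple i * t * cs.simple i) * cs.simple i
                  = (cs.simple i * cs.simple i) * t * (cs.simple i * cs.simple i) by group,
                hss]; group
        _ = cs.simple i := by rw [hc, show cs.simple i * cs.simple i * cs.simple i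
                  = (cs.simple i * cs.simple i) * cs.simple i by group, hss]; group
    simp only [h, if_neg h', if_false]
    rw [show cs.simple i * (cs.simple i * t * cs.simple i) * cs.simple i
          = (cs.simple i * cs.simple i) * t * (cs.simple i * cs.simple i) by group, hss]
    rw [one_mul, mul_one]

/-- The permutation of `W × ZMod 2` attached to a simple reflection. -/
def etaPerm (i : B) : Equiv.Perm (W × ZMod 2) := (eta_invol cs i).toPerm

lemma etaPerm_apply (i : B) (t : W) (ε : ZMod 2) :
    etaPerm cs i (t, ε) = (cs.simple i * t * cs.simple i,
      if t = cs.simple i then ε + 1 else ε) := rfl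


lemma conj_eq_iff (g x y : W) : g * x * g⁻¹ = y ↔ x = g⁻¹ * y * g := by
  constructor
  · rintro rfl; group
  · rintro rfl; group

lemma etaPerm_pow_apply (i j : B) (m : ℕ) (t : W) (ε : ZMod 2) :
    ((etaPerm cs i * etaPerm cs j) ^ m) (t, ε) =
      ((cs.simple i * cs.simple j) ^ m * t * ((cs.simple i * cs.simple j) ^ m)⁻¹,
        ε + ∑ d ∈ Finset.range (2 * m),
          if t = (cs.simple j * cs.simple i) ^ d * cs.simple j then 1 else 0) := by
  induction m generalizing t ε with
  | zero => simp
  | succ m ih =>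
    rw [pow_succ, Equiv.Perm.mul_apply, Equiv.Perm.mul_apply, etaPerm_apply cs j,
      etaPerm_apply cs i, ih]
    set si := cs.simple i with hsidef
    set sj := cs.simple j with hsjdef
    have hsi : si * si = 1 := cs.simple_mul_simple_self i
    have hsj : sj * sj = 1 := cs.simple_mul_simple_self j
    have hisi : si⁻¹ = si := cs.inv_simple i
    have hisj : sj⁻¹ = sj := cs.inv_simple j
    have hinv : (si * sj)⁻¹ = sj * si := by rw [mul_inv_rev, hisi, hisj]
    -- key1 : conjugation by both letters
    have key1 : si * (sj * t * sj) * si = (si*sj) * t * ((si*sj))⁻¹ := by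
      rw [hinv]; simp [mul_assoc]
    -- key2 : the second sign condition
    have key2 : (sj * t * sj = si) ↔ (t = (sj*si)^1 * sj) := by
      rw [pow_one]
      conv_lhs => rw [show sj * t * sj = sj * t * sj⁻¹ by rw [hisj]]
      rw [conj_eq_iff, hisj]
    -- shift identity
    have shift : ∀ d : ℕ, (si*sj)⁻¹ * ((sj*si)^d * sj) * (si*sj) = (sj*si)^(d+2) * sj := by
      intro d
      have hp : (sj*si)^(d+2) = (sj*si) * (sj*si)^d * (sj*si) := by
        rw [show d+2 = 1 + d + 1 by omega, pow_succ, pow_add, pow_one]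
      rw [hinv, hp]
      simp only [mul_assoc]
    have condshift : ∀ d : ℕ,
        ((si*sj) * t * (si*sj)⁻¹ = (sj*si)^d * sj) ↔ (t = (sj*si)^(d+2) * sj) := by
      intro d
      rw [conj_eq_iff, shift d]
    simp only [Prod.mk.injEq]
    refine ⟨?_, ?_⟩
    · rw [key1]
      calc (si*sj)^m * ((si*sj) * t * (si*sj)⁻¹) * ((si*sj)^m)⁻¹
          = ((si*sj)^m * (si*sj)) * t * ((si*sj)⁻¹ * ((si*sj)^m)⁻¹) := by
            simp [mul_assoc]
        _ = (si*sj)^(m+1) * t * ((si*sj)^(m+1))⁻¹ := by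
            simp only [pow_succ, mul_inv_rev, mul_assoc]
    · rw [show (if sj * t * sj = si then
            (if t = sj then ε + 1 else ε) + 1 else (if t = sj then ε + 1 else ε))
          = ε + (if t = sj then 1 else 0) + (if sj * t * sj = si then 1 else 0) by
          split <;> split <;> ring]
      simp only [key2]
      have sumshift : (∑ d ∈ Finset.range (2 * m),
            if si * (sj * t * sj) * si = (sj*si)^d * sj then (1:ZMod 2) else 0)
          = ∑ d ∈ Finset.range (2 * m),
            if t = (sj*si)^(2+d) * sj then (1:ZMod 2) else 0 := by
        apply Finset.sum_congr rfl
        intro d _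
        rw [key1]
        congr 1
        rw [show 2 + d = d + 2 by omega]
        rw [eq_iff_iff]
        exact condshift d
      rw [sumshift]
      rw [show 2 * (m+1) = 2 + 2*m by omega, Finset.sum_range_add]
      rw [show (∑ x ∈ Finset.range 2, if t = (sj*si)^x * sj then (1:ZMod 2) else 0)
          = (if t = (sj*si)^0 * sj then (1:ZMod 2) else 0)
            + (if t = (sj*si)^1 * sj then 1 else 0) by
        rw [Finset.sum_range_succ, Finset.sum_range_one]]
      rw [show (sj*si)^0 * sj = sj by rw [pow_zero, one_mul]]
      ring

lemma etaPerm_liftable : M.IsLiftable (etaPerm cs) := by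
  intro i j
  apply Equiv.ext
  rintro ⟨t, ε⟩
  rw [etaPerm_pow_apply]
  have hp : (cs.simple i * cs.simple j) ^ M.M i j = 1 := cs.simple_mul_simple_pow i j
  have hq : (cs.simple j * cs.simple i) ^ M.M i j = 1 := cs.simple_mul_simple_pow' i j
  rw [hp]
  have hsum : (∑ d ∈ Finset.range (2 * M.M i j),
      if t = (cs.simple j * cs.simple i) ^ d * cs.simple j then (1:ZMod 2) else 0) = 0 := by
    rw [show 2 * M.M i j = M.M i j + M.M i j by omega, Finset.sum_range_add]
    have hper : ∀ d, (cs.simple j * cs.simple i) ^ (M.M i j + d)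
        = (cs.simple j * cs.simple i) ^ d := by
      intro d; rw [pow_add, hq, one_mul]
    simp only [hper]
    have h2 : ∀ x : ZMod 2, x + x = 0 := by decide
    exact h2 _
  rw [hsum]
  simp


/-- The reflection-parity representation `W →* Perm (W × ZMod 2)`. -/
def phi : W →* Equiv.Perm (W × ZMod 2) := cs.lift ⟨etaPerm cs, etaPerm_liftable cs⟩

lemma phi_simple (i : B) : phi cs (cs.simple i) = etaPerm cs i :=
  cs.lift_apply_simple (etaPerm_liftable cs) i

lemma phi_wordProd (ω : List B) (t : W) (ε : ZMod 2) :
    phi cs (cs.wordProd ω) (t, ε) =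
      (cs.wordProd ω * t * (cs.wordProd ω)⁻¹,
        ε + (List.count t (cs.rightInvSeq ω) : ZMod 2)) := by
  induction ω generalizing ε with
  | nil => simp [cs.wordProd_nil]
  | cons i ω ih =>
    rw [cs.wordProd_cons, map_mul, Equiv.Perm.mul_apply, ih, phi_simple, etaPerm_apply]
    have hris : cs.rightInvSeq (i :: ω)
        = (cs.wordProd ω)⁻¹ * (cs.simple i) * (cs.wordProd ω) :: cs.rightInvSeq ω := rfl
    rw [hris]
    simp only [Prod.mk.injEq]
    constructor
    · rw [mul_inv_rev, cs.inv_simple]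
      group
    · rw [List.count_cons]
      push_cast
      have hiff : (cs.wordProd ω * t * (cs.wordProd ω)⁻¹ = cs.simple i)
          ↔ ((cs.wordProd ω)⁻¹ * cs.simple i * cs.wordProd ω = t) := by
        constructor
        · intro h; rw [← h]; group
        · rintro rfl; group
      by_cases h : (cs.wordProd ω)⁻¹ * cs.simple i * cs.wordProd ω = t <;>
        simp [h, hiff, beq_iff_eq] <;> ring


/-- Parity of the number of occurrences of `t` in a right inversion sequence only depends
on the product of the word. -/
lemma count_ris_parity {ω ω' : List B} (h : cs.wordProd ω = cs.wordProd ω') (t : W) :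
    (List.count t (cs.rightInvSeq ω) : ZMod 2) = List.count t (cs.rightInvSeq ω') := by
  have h1 := phi_wordProd cs ω t 0
  have h2 := phi_wordProd cs ω' t 0
  rw [h] at h1
  rw [h1] at h2
  have := congrArg Prod.snd h2
  simpa using this

/-- `lis ω` is the conjugate of `ris ω` by the product. -/
lemma leftInvSeq_eq_map_conj (ω : List B) :
    cs.leftInvSeq ω = (cs.rightInvSeq ω).map
      (fun x => cs.wordProd ω * x * (cs.wordProd ω)⁻¹) := by
  induction ω with
  | nil => simp
  | cons i ω ih =>
    have hl : cs.leftInvSeq (i :: ω)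
        = cs.simple i :: (cs.leftInvSeq ω).map (MulAut.conj (cs.simple i)) := rfl
    have hr : cs.rightInvSeq (i :: ω)
        = (cs.wordProd ω)⁻¹ * cs.simple i * cs.wordProd ω :: cs.rightInvSeq ω := rfl
    have hs : ∀ y : W, cs.simple i * (cs.simple i * y) = y := fun y => by
      rw [← mul_assoc, cs.simple_mul_simple_self, one_mul]
    rw [hl, hr, ih]
    rw [List.map_cons, List.map_map]
    congr 1
    · rw [cs.wordProd_cons, mul_inv_rev, cs.inv_simple]
      group
      rw [mul_assoc, hs]
    · apply List.map_congr_left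
      intro x _
      simp only [Function.comp_apply, MulAut.conj_apply, cs.wordProd_cons,
        mul_inv_rev, cs.inv_simple]
      group

lemma rightInvSeq_append (α β : List B) :
    cs.rightInvSeq (α ++ β)
      = (cs.rightInvSeq α).map (fun x => (cs.wordProd β)⁻¹ * x * cs.wordProd β)
        ++ cs.rightInvSeq β := by
  induction α with
  | nil => simp
  | cons i α ih =>
    have h1 : cs.rightInvSeq (i :: (α ++ β))
        = (cs.wordProd (α ++ β))⁻¹ * cs.simple i * cs.wordProd (α ++ β)
          :: cs.rightInvSeq (α ++ β) := rfl
    have h2 : cs.rightInvSeq (i :: α)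
        = (cs.wordProd α)⁻¹ * cs.simple i * cs.wordProd α :: cs.rightInvSeq α := rfl
    rw [List.cons_append, h1, ih, h2, List.map_cons]
    rw [List.cons_append]
    congr 1
    rw [cs.wordProd_append, mul_inv_rev]
    group

lemma count_map_conj_eq (f : W → W) (a b : W) (hf : ∀ x, f x = a ↔ x = b) (l : List W) :
    List.count a (l.map f) = List.count b l := by
  induction l with
  | nil => simp
  | cons x l ih =>
    rw [List.map_cons, List.count_cons, List.count_cons, ih]
    congr 1
    by_cases h : x = b
    · simp [h, (hf b).mpr rfl]
    · have : ¬ (f x = a) := fun hc => h ((hf x).mp hc)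
      simp [h, this]

/-- The parity invariant `n(w, t)`. -/
noncomputable def nR (w t : W) : ZMod 2 := (phi cs w (t, 0)).2

lemma nR_eq_count (ω : List B) (t : W) :
    nR cs (cs.wordProd ω) t = (List.count t (cs.rightInvSeq ω) : ZMod 2) := by
  have := phi_wordProd cs ω t 0
  rw [nR, this]
  simp

lemma conj_eq_iff' (g y x : W) : g⁻¹ * x * g = y ↔ x = g * y * g⁻¹ := by
  constructor
  · intro h; rw [← h]; group
  · intro h; rw [h]; group

/-- The key fact: `n(t, t) = 1` for a reflection `t`. -/
lemma nR_self (t : W) (ht : cs.IsReflection t) : nR cs t t = 1 := by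
  obtain ⟨u, i, rfl⟩ := ht
  obtain ⟨υ, _, hu⟩ := cs.exists_reduced_word' u
  set ρ : List B := υ ++ (i :: υ.reverse) with hρ
  have hπρ : cs.wordProd ρ = u * cs.simple i * u⁻¹ := by
    rw [hρ, cs.wordProd_append, cs.wordProd_cons, cs.wordProd_reverse, ← hu]
    group
  have hs : ∀ y : W, cs.simple i * (cs.simple i * y) = y := fun y => by
    rw [← mul_assoc, cs.simple_mul_simple_self, one_mul]
  have main : nR cs (cs.wordProd ρ) (u * cs.simple i * u⁻¹) = 1 := by
    rw [nR_eq_count, hρ, rightInvSeq_append]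
    have hβ : cs.wordProd (i :: υ.reverse) = cs.simple i * u⁻¹ := by
      rw [cs.wordProd_cons, cs.wordProd_reverse, hu]
    have hrisβ : cs.rightInvSeq (i :: υ.reverse)
        = (cs.wordProd υ.reverse)⁻¹ * cs.simple i * cs.wordProd υ.reverse
          :: cs.rightInvSeq υ.reverse := rfl
    rw [hrisβ, List.count_append, List.count_cons]
    have hmid : (cs.wordProd υ.reverse)⁻¹ * cs.simple i * cs.wordProd υ.reverse
        = u * cs.simple i * u⁻¹ := by
      rw [cs.wordProd_reverse, ← hu]
      group
    have hc1 : List.count (u * cs.simple i * u⁻¹)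
        ((cs.rightInvSeq υ).map (fun x => (cs.wordProd (i :: υ.reverse))⁻¹ * x
          * cs.wordProd (i :: υ.reverse)))
        = List.count (cs.simple i) (cs.rightInvSeq υ) := by
      apply count_map_conj_eq
      intro x
      rw [hβ, conj_eq_iff']
      have heq : (cs.simple i * u⁻¹) * (u * cs.simple i * u⁻¹) * (cs.simple i * u⁻¹)⁻¹
          = cs.simple i := by
        rw [mul_inv_rev, inv_inv, cs.inv_simple]
        calc (cs.simple i * u⁻¹) * (u * cs.simple i * u⁻¹) * (u * cs.simple i)
            = cs.simple i * ((u⁻¹ * u) * (cs.simple i * ((u⁻¹ * u) * cs.simple i))) := by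
              simp only [mul_assoc]
          _ = cs.simple i := by rw [inv_mul_cancel, one_mul, one_mul, hs]
      rw [heq]
    have hc3 : List.count (u * cs.simple i * u⁻¹) (cs.rightInvSeq υ.reverse)
        = List.count (cs.simple i) (cs.rightInvSeq υ) := by
      rw [cs.rightInvSeq_reverse, List.count_reverse, leftInvSeq_eq_map_conj]
      apply count_map_conj_eq
      intro x
      rw [show cs.wordProd υ * x * (cs.wordProd υ)⁻¹ = (cs.wordProd υ)⁻¹⁻¹ * x * (cs.wordProd υ)⁻¹
          by rw [inv_inv], conj_eq_iff']
      rw [← hu]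
      have heq2 : u⁻¹ * (u * cs.simple i * u⁻¹) * u⁻¹⁻¹ = cs.simple i := by group
      rw [heq2]
    rw [hc1, hc3, hmid]
    simp only [beq_self_eq_true, if_true]
    push_cast
    have h2 : ∀ x : ZMod 2, x + (x + 1) = 1 := by decide
    exact h2 _
  rw [hπρ] at main
  exact main


lemma nR_mul_refl (w t : W) (ht : cs.IsReflection t) :
    nR cs (w * t) t = nR cs w t + 1 := by
  obtain ⟨α, _, hα⟩ := cs.exists_reduced_word' w
  obtain ⟨ρ, _, hρ⟩ := cs.exists_reduced_word' t
  have hwt : w * t = cs.wordProd (α ++ ρ) := by rw [cs.wordProd_append, ← hα, ← hρ]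
  rw [hwt, nR_eq_count, rightInvSeq_append, List.count_append]
  have h1 : List.count t ((cs.rightInvSeq α).map
      (fun x => (cs.wordProd ρ)⁻¹ * x * cs.wordProd ρ)) = List.count t (cs.rightInvSeq α) := by
    apply count_map_conj_eq
    intro x
    rw [← hρ, conj_eq_iff', mul_inv_cancel_right]
  have h3 : (List.count t (cs.rightInvSeq ρ) : ZMod 2) = 1 := by
    rw [← nR_eq_count, ← hρ]
    exact nR_self cs t ht
  rw [h1]
  push_cast
  rw [h3, hα, nR_eq_count]

lemma inversion_criterion (w t : W) (ht : cs.IsReflection t) :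
    cs.length (w * t) < cs.length w ↔ nR cs w t = 1 := by
  constructor
  · intro h
    by_contra hne
    have h0 : nR cs w t = 0 := by
      have : ∀ x : ZMod 2, x ≠ 1 → x = 0 := by decide
      exact this _ hne
    have h1 : nR cs (w * t) t = 1 := by rw [nR_mul_refl cs w t ht, h0, zero_add]
    -- then t is a right inversion of w * t, i.e. ℓ(w) < ℓ(w*t), contradiction
    obtain ⟨ω, hred, hw⟩ := cs.exists_reduced_word' (w * t)
    rw [hw, nR_eq_count] at h1
    have hcnt : List.count t (cs.rightInvSeq ω) ≠ 0 := by
      intro hc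
      rw [hc] at h1
      simp at h1
    have hmem : t ∈ cs.rightInvSeq ω := List.count_pos_iff.mp (Nat.pos_of_ne_zero hcnt)
    have hinv := (cs.isRightInversion_of_mem_rightInvSeq hred hmem).2
    rw [← hw] at hinv
    rw [show w * t * t = w by rw [mul_assoc, ht.mul_self, mul_one]] at hinv
    omega
  · intro h
    obtain ⟨ω, hred, hw⟩ := cs.exists_reduced_word' w
    rw [hw, nR_eq_count] at h
    have hcnt : List.count t (cs.rightInvSeq ω) ≠ 0 := by
      intro hc
      rw [hc] at h
      simp at h
    have hmem : t ∈ cs.rightInvSeq ω := List.count_pos_iff.mp (Nat.pos_of_ne_zero hcnt)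
    have hinv := (cs.isRightInversion_of_mem_rightInvSeq hred hmem).2
    rw [← hw] at hinv
    exact hinv

lemma mem_leftInvSeq_of_inversion (ω : List B) (t : W) (ht : cs.IsReflection t)
    (h : cs.length (t * cs.wordProd ω) < cs.length (cs.wordProd ω)) :
    t ∈ cs.leftInvSeq ω := by
  have hlen : cs.length (cs.wordProd ω.reverse * t) < cs.length (cs.wordProd ω.reverse) := by
    rw [cs.wordProd_reverse]
    rw [show (cs.wordProd ω)⁻¹ * t = (t * cs.wordProd ω)⁻¹ by
      rw [mul_inv_rev, ht.inv]]
    rw [cs.length_inv, cs.length_inv]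
    exact h
  have h1 : nR cs (cs.wordProd ω.reverse) t = 1 :=
    (inversion_criterion cs _ t ht).mp hlen
  rw [nR_eq_count] at h1
  have hcnt : List.count t (cs.rightInvSeq ω.reverse) ≠ 0 := by
    intro hc
    rw [hc] at h1
    simp at h1
  have hmem : t ∈ cs.rightInvSeq ω.reverse := List.count_pos_iff.mp (Nat.pos_of_ne_zero hcnt)
  rw [cs.rightInvSeq_reverse] at hmem
  exact List.mem_reverse.mp hmem

/-- Strong exchange property (left version, arbitrary words). -/
lemma strong_exchange (ω : List B) (t : W) (ht : cs.IsReflection t)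
    (h : cs.length (t * cs.wordProd ω) < cs.length (cs.wordProd ω)) :
    ∃ j, j < ω.length ∧ t * cs.wordProd ω = cs.wordProd (ω.eraseIdx j) := by
  have hmem := mem_leftInvSeq_of_inversion cs ω t ht h
  obtain ⟨j, hj, hget⟩ := List.getElem_of_mem hmem
  have hjlen : j < ω.length := by
    rwa [cs.length_leftInvSeq] at hj
  refine ⟨j, hjlen, ?_⟩
  rw [← cs.getD_leftInvSeq_mul_wordProd ω j]
  congr 1
  rw [List.getD_eq_getElem _ _ hj, hget]


lemma ble_refl (a : W) : CoxBruhatLE cs a a := Relation.ReflTransGen.refl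

lemma ble_trans {a b c : W} (h1 : CoxBruhatLE cs a b) (h2 : CoxBruhatLE cs b c) :
    CoxBruhatLE cs a c := Relation.ReflTransGen.trans h1 h2

lemma ble_single {a b : W} (r : W) (hr : cs.IsReflection r) (hb : b = r * a)
    (h : cs.length a < cs.length b) : CoxBruhatLE cs a b :=
  Relation.ReflTransGen.single ⟨r, hr, hb, h⟩

lemma le_mul_simple {a : W} {i : B} (h : cs.length a < cs.length (a * cs.simple i)) :
    CoxBruhatLE cs a (a * cs.simple i) := by
  refine ble_single cs (a * cs.simple i * a⁻¹) ((cs.isReflection_simple i).conj a) ?_ h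
  group

lemma mul_simple_le {a : W} {i : B} (h : cs.length (a * cs.simple i) < cs.length a) :
    CoxBruhatLE cs (a * cs.simple i) a := by
  refine ble_single cs (a * cs.simple i * a⁻¹) ((cs.isReflection_simple i).conj a) ?_ h
  rw [mul_assoc, mul_assoc, inv_mul_cancel_left, ← mul_assoc, mul_assoc,
    cs.simple_mul_simple_self, mul_one]

lemma ble_length {a b : W} (h : CoxBruhatLE cs a b) :
    a = b ∨ cs.length a < cs.length b := by
  induction h with
  | refl => left; rfl
  | tail _ hstep ih =>
    obtain ⟨r, _, _, hlt⟩ := hstep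
    right
    rcases ih with rfl | hlt2
    · exact hlt
    · omega

/-- Lifting lemma ("D'"): if `ℓ(ws) < ℓ(w)` and `v ≤ ws` then `vs ≤ w`. -/
lemma Dprime (w : W) (i : B) (hlen : cs.length (w * cs.simple i) < cs.length w)
    (v : W) (hv : CoxBruhatLE cs v (w * cs.simple i)) :
    CoxBruhatLE cs (v * cs.simple i) w := by
  have hws_le_w : CoxBruhatLE cs (w * cs.simple i) w := mul_simple_le cs hlen
  induction hv using Relation.ReflTransGen.head_induction_on with
  | refl =>
    rw [mul_assoc, cs.simple_mul_simple_self, mul_one]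
    exact ble_refl cs w
  | head hstep hchain ih =>
    rename_i a c
    obtain ⟨r, hr, hceq, hlt⟩ := hstep
    have ha_le : CoxBruhatLE cs a (w * cs.simple i) :=
      Relation.ReflTransGen.head ⟨r, hr, hceq, hlt⟩ hchain
    rcases cs.length_mul_simple a i with hda | hda
    · -- ℓ(a s) = ℓ a + 1
      have hcs : c * cs.simple i = r * (a * cs.simple i) := by
        rw [hceq, mul_assoc]
      rcases lt_trichotomy (cs.length (a * cs.simple i)) (cs.length (c * cs.simple i))
        with hlt2 | heq | hgt
      · exact ble_trans cs (ble_single cs r hr hcs hlt2) ih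
      · exfalso
        rw [hcs] at heq
        exact hr.length_mul_right_ne (a * cs.simple i) heq.symm
      · -- the strong exchange case
        rcases cs.length_mul_simple c i with hdc | hdc
        · omega
        · -- ℓ(c s) = ℓ c - 1 ; derive ℓ(cs) = ℓ a
          have hca : cs.length (c * cs.simple i) = cs.length a := by omega
          obtain ⟨ξ₁, hξred, hξ⟩ := cs.exists_reduced_word' (c * cs.simple i)
          have hπξ : cs.wordProd (ξ₁ ++ [i]) = c := by
            rw [cs.wordProd_append, cs.wordProd_singleton, ← hξ, mul_assoc,
              cs.simple_mul_simple_self, mul_one]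
          have hξ₁len : ξ₁.length = cs.length (c * cs.simple i) := by
            rw [hξ]
            exact hξred.symm
          have hrc : r * c = a := by
            rw [hceq, ← mul_assoc, hr.mul_self, one_mul]
          have hexlen : cs.length (r * cs.wordProd (ξ₁ ++ [i]))
              < cs.length (cs.wordProd (ξ₁ ++ [i])) := by
            rw [hπξ, hrc]
            exact hlt
          obtain ⟨j, hj, hexch⟩ := strong_exchange cs (ξ₁ ++ [i]) r hr hexlen
          rw [hπξ, hrc] at hexch
          by_cases hjlt : j < ξ₁.length
          · exfalso
            rw [List.eraseIdx_append_of_lt_length hjlt] at hexch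
            have : a * cs.simple i = cs.wordProd (ξ₁.eraseIdx j) := by
              rw [hexch, cs.wordProd_append, cs.wordProd_singleton, mul_assoc,
                cs.simple_mul_simple_self, mul_one]
            have hle := cs.length_wordProd_le (ξ₁.eraseIdx j)
            rw [← this] at hle
            have hel : (ξ₁.eraseIdx j).length + 1 = ξ₁.length :=
              List.length_eraseIdx_add_one hjlt
            omega
          · -- j = ξ₁.length : a = c * s i
            have hj1 : j = ξ₁.length := by
              have : (ξ₁ ++ [i]).length = ξ₁.length + 1 := by simp
              omega
            have herase : (ξ₁ ++ [i]).eraseIdx j = ξ₁ := by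
              rw [hj1, List.eraseIdx_eq_take_drop_succ, List.take_left]
              rw [List.drop_eq_nil_of_le (by simp), List.append_nil]
            rw [herase, ← hξ] at hexch
            rw [hexch, mul_assoc, cs.simple_mul_simple_self, mul_one]
            exact ble_trans cs hchain hws_le_w
    · -- ℓ(a s) = ℓ a - 1
      have h1 : CoxBruhatLE cs (a * cs.simple i) a := mul_simple_le cs (by omega)
      exact ble_trans cs h1 (ble_trans cs ha_le hws_le_w)


/-- Subword implies Bruhat-below ("A"). -/
lemma le_of_sublist : ∀ n (ω τ : List B), ω.length ≤ n → cs.IsReduced ω → τ.Sublist ω →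
    CoxBruhatLE cs (cs.wordProd τ) (cs.wordProd ω) := by
  intro n
  induction n with
  | zero =>
    intro ω τ hn _ hsub
    have : ω = [] := by
      cases ω with
      | nil => rfl
      | cons a l => simp at hn
    subst this
    rw [List.sublist_nil.mp hsub]
    exact ble_refl cs _
  | succ n ih =>
    intro ω τ hn hred hsub
    rcases List.eq_nil_or_concat ω with rfl | ⟨ω₁, i, rfl⟩
    · rw [List.sublist_nil.mp hsub]
      exact ble_refl cs _
    rw [List.concat_eq_append] at *
    have hred₁ : cs.IsReduced ω₁ := by
      have := CoxeterSystem.IsReduced.take hred ω₁.length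
      rwa [List.take_left] at this
    have hlenω : cs.length (cs.wordProd (ω₁ ++ [i])) = ω₁.length + 1 := by
      rw [hred]; simp
    have hπω : cs.wordProd (ω₁ ++ [i]) = cs.wordProd ω₁ * cs.simple i := by
      rw [cs.wordProd_append, cs.wordProd_singleton]
    have hlenω₁ : cs.length (cs.wordProd ω₁) = ω₁.length := hred₁
    have hn₁ : ω₁.length ≤ n := by
      have : (ω₁ ++ [i]).length = ω₁.length + 1 := by simp
      omega
    obtain ⟨l₁, l₂, rfl, hsub₁, hsub₂⟩ := List.sublist_append_iff.mp hsub
    rcases List.sublist_singleton.mp hsub₂ with rfl | rfl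
    · rw [List.append_nil]
      refine ble_trans cs (ih ω₁ l₁ hn₁ hred₁ hsub₁) ?_
      have : cs.length (cs.wordProd ω₁) < cs.length (cs.wordProd ω₁ * cs.simple i) := by
        rw [← hπω, hlenω, hlenω₁]; omega
      have h2 := le_mul_simple cs this
      rwa [← hπω] at h2
    · have hv : CoxBruhatLE cs (cs.wordProd l₁) (cs.wordProd (ω₁ ++ [i]) * cs.simple i) := by
        rw [hπω, mul_assoc, cs.simple_mul_simple_self, mul_one]
        exact ih ω₁ l₁ hn₁ hred₁ hsub₁
      have hd : cs.length (cs.wordProd (ω₁ ++ [i]) * cs.simple i)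
          < cs.length (cs.wordProd (ω₁ ++ [i])) := by
        rw [hπω, mul_assoc, cs.simple_mul_simple_self, mul_one, hlenω₁, ← hπω, hlenω]
        omega
      have := Dprime cs (cs.wordProd (ω₁ ++ [i])) i hd (cs.wordProd l₁) hv
      rwa [cs.wordProd_append, cs.wordProd_singleton]

/-- Deletion property. -/
lemma deletion : ∀ n (ω : List B), ω.length ≤ n →
    ∃ τ, τ.Sublist ω ∧ cs.IsReduced τ ∧ cs.wordProd τ = cs.wordProd ω := by
  intro n
  induction n with
  | zero =>
    intro ω hn
    have : ω = [] := by
      cases ω with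
      | nil => rfl
      | cons a l => simp at hn
    subst this
    exact ⟨[], List.Sublist.refl _, by simp [CoxeterSystem.IsReduced], rfl⟩
  | succ n ih =>
    intro ω hn
    by_cases hred : cs.IsReduced ω
    · exact ⟨ω, List.Sublist.refl _, hred, rfl⟩
    haveI : DecidablePred (fun j => ¬ cs.IsReduced (ω.take j)) := fun _ => Classical.dec _
    have hP : ∃ j, ¬ cs.IsReduced (ω.take j) := ⟨ω.length, by rwa [List.take_length]⟩
    set n₀ := Nat.find hP with hn₀
    have hspec : ¬ cs.IsReduced (ω.take n₀) := Nat.find_spec hP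
    have hmin : ∀ m, m < n₀ → cs.IsReduced (ω.take m) := by
      intro m hm
      by_contra hc
      have h2 : Nat.find hP ≤ m := Nat.find_le hc
      omega
    have hn₀pos : n₀ ≠ 0 := by
      intro hc
      rw [hc] at hspec
      simp [CoxeterSystem.IsReduced] at hspec
    have hn₀le : n₀ ≤ ω.length := Nat.find_le (by rwa [List.take_length])
    obtain ⟨j, hj⟩ : ∃ j, n₀ = j + 1 := ⟨n₀ - 1, by omega⟩
    rw [hj] at hspec
    have hjlt : j < ω.length := by omega
    have hσred : cs.IsReduced (ω.take j) := hmin j (by omega)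
    set σ := ω.take j with hσ
    have hσlen : σ.length = j := by
      rw [hσ, List.length_take]
      omega
    have htake : ω.take (j+1) = σ ++ [ω[j]] := by
      rw [List.take_succ, List.getElem?_eq_getElem hjlt]
      rfl
    set i := ω[j]
    -- σ ++ [i] is not reduced, so ℓ(πσ * s i) < ℓ(πσ)
    have hnotred : ¬ cs.IsReduced (σ ++ [i]) := by
      rw [← htake]; exact hspec
    have hlen1 : cs.length (cs.wordProd σ * cs.simple i) < cs.length (cs.wordProd σ) := by
      rcases cs.length_mul_simple (cs.wordProd σ) i with hd | hd
      · exfalso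
        apply hnotred
        show cs.length (cs.wordProd (σ ++ [i])) = (σ ++ [i]).length
        rw [cs.wordProd_append, cs.wordProd_singleton, hd]
        have : cs.length (cs.wordProd σ) = σ.length := hσred
        simp [this]
      · omega
    have hrrefl : cs.IsReflection (cs.wordProd σ * cs.simple i * (cs.wordProd σ)⁻¹) :=
      (cs.isReflection_simple i).conj (cs.wordProd σ)
    have hre : (cs.wordProd σ * cs.simple i * (cs.wordProd σ)⁻¹) * cs.wordProd σ
        = cs.wordProd σ * cs.simple i := by group
    obtain ⟨k, hk, hexch⟩ := strong_exchange cs σ _ hrrefl (by rw [hre]; exact hlen1)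
    rw [hre] at hexch
    -- now π ω = π (σ.eraseIdx k ++ drop (j+1) ω)
    set ω' := σ.eraseIdx k ++ ω.drop (j+1) with hω'
    have hπω' : cs.wordProd ω' = cs.wordProd ω := by
      conv_rhs => rw [← List.take_append_drop (j+1) ω]
      rw [hω', cs.wordProd_append, cs.wordProd_append, htake, cs.wordProd_append,
        cs.wordProd_singleton, ← hexch]
    have hω'sub : ω'.Sublist ω := by
      conv_rhs => rw [← List.take_append_drop (j+1) ω]
      apply List.Sublist.append _ (List.Sublist.refl _)
      calc σ.eraseIdx k <+ σ := List.eraseIdx_sublist σ k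
        _ <+ σ ++ [i] := List.sublist_append_left σ [i]
        _ = ω.take (j+1) := htake.symm
    have hω'len : ω'.length ≤ n := by
      have h1 : (σ.eraseIdx k).length + 1 = σ.length := List.length_eraseIdx_add_one hk
      have h2 : (ω.drop (j+1)).length = ω.length - (j+1) := by simp
      have : ω'.length = (σ.eraseIdx k).length + (ω.drop (j+1)).length := by simp [hω']
      omega
    obtain ⟨τ, hτsub, hτred, hτπ⟩ := ih ω' hω'len
    exact ⟨τ, hτsub.trans hω'sub, hτred, by rw [hτπ, hπω']⟩

/-- Subword property ("B"): any `u ≤ π ω` is the product of a reduced sublist. -/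
lemma exists_reduced_sublist : ∀ n (ω : List B) (u : W), cs.IsReduced ω →
    cs.length (cs.wordProd ω) ≤ n → CoxBruhatLE cs u (cs.wordProd ω) →
    ∃ τ, τ.Sublist ω ∧ cs.IsReduced τ ∧ cs.wordProd τ = u := by
  intro n
  induction n with
  | zero =>
    intro ω u hred hn hu
    rcases Relation.ReflTransGen.cases_tail hu with heq | ⟨c, _, hstep⟩
    · exact ⟨ω, List.Sublist.refl _, hred, heq⟩
    · obtain ⟨r, _, _, hlt⟩ := hstep
      omega
  | succ n ih =>
    intro ω u hred hn hu
    rcases Relation.ReflTransGen.cases_tail hu with heq | ⟨c, hchain, hstep⟩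
    · exact ⟨ω, List.Sublist.refl _, hred, heq⟩
    · obtain ⟨r, hr, heq, hlt⟩ := hstep
      have hc : c = r * cs.wordProd ω := by
        rw [heq, ← mul_assoc, hr.mul_self, one_mul]
      obtain ⟨j, hj, hexch⟩ := strong_exchange cs ω r hr (by rw [← hc]; exact hlt)
      rw [← hc] at hexch
      obtain ⟨τ', hτ'sub, hτ'red, hτ'π⟩ := deletion cs (ω.eraseIdx j).length
        (ω.eraseIdx j) le_rfl
      have hπτ' : cs.wordProd τ' = c := by rw [hτ'π, ← hexch]
      have hlen' : cs.length (cs.wordProd τ') ≤ n := by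
        rw [hπτ']
        omega
      obtain ⟨τ, hτsub, hτred, hτπ⟩ := ih τ' u hτ'red hlen' (by rw [hπτ']; exact hchain)
      exact ⟨τ, (hτsub.trans hτ'sub).trans (List.eraseIdx_sublist ω j), hτred, hτπ⟩

/-- The descent lemma ("D"): if `ℓ(ws) < ℓ(w)` and `v ≤ w` then `vs ≤ w`. -/
lemma descent (w : W) (i : B) (hlen : cs.length (w * cs.simple i) < cs.length w)
    (v : W) (hv : CoxBruhatLE cs v w) : CoxBruhatLE cs (v * cs.simple i) w := by
  obtain ⟨ω₁, hω₁red, hω₁⟩ := cs.exists_reduced_word' (w * cs.simple i)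
  have hπω : cs.wordProd (ω₁ ++ [i]) = w := by
    rw [cs.wordProd_append, cs.wordProd_singleton, ← hω₁, mul_assoc,
      cs.simple_mul_simple_self, mul_one]
  have hω₁len : ω₁.length = cs.length (w * cs.simple i) := by
    rw [hω₁]; exact hω₁red.symm
  have hred : cs.IsReduced (ω₁ ++ [i]) := by
    show cs.length (cs.wordProd (ω₁ ++ [i])) = (ω₁ ++ [i]).length
    rw [hπω]
    have : (ω₁ ++ [i]).length = ω₁.length + 1 := by simp
    rcases cs.length_mul_simple w i with hd | hd
    · omega
    · omega
  obtain ⟨τ, hτsub, hτred, hτπ⟩ := exists_reduced_sublist cs (cs.length w) (ω₁ ++ [i]) v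
    hred (by rw [hπω]) (by rwa [hπω])
  obtain ⟨l₁, l₂, rfl, hsub₁, hsub₂⟩ := List.sublist_append_iff.mp hτsub
  have hωs : cs.wordProd ω₁ = w * cs.simple i := hω₁.symm
  rcases List.sublist_singleton.mp hsub₂ with rfl | rfl
  · -- v ≤ w * s i, use Dprime
    rw [List.append_nil] at hτπ
    have hv' : CoxBruhatLE cs v (w * cs.simple i) := by
      rw [← hωs, ← hτπ]
      exact le_of_sublist cs ω₁.length ω₁ l₁ le_rfl hω₁red hsub₁
    exact Dprime cs w i hlen v hv'
  · -- v * s i = π l₁ ≤ π ω₁ = w * s i ≤ w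
    have hvs : v * cs.simple i = cs.wordProd l₁ := by
      rw [← hτπ, cs.wordProd_append, cs.wordProd_singleton, mul_assoc,
        cs.simple_mul_simple_self, mul_one]
    have h1 : CoxBruhatLE cs (cs.wordProd l₁) (w * cs.simple i) := by
      rw [← hωs]
      exact le_of_sublist cs ω₁.length ω₁ l₁ le_rfl hω₁red hsub₁
    rw [hvs]
    exact ble_trans cs h1 (mul_simple_le cs hlen)

/-- `v ≤ w ↔ vs ≤ w` when `ws < w`. -/
lemma descent_iff (w : W) (i : B) (hlen : cs.length (w * cs.simple i) < cs.length w)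
    (v : W) : CoxBruhatLE cs v w ↔ CoxBruhatLE cs (v * cs.simple i) w := by
  constructor
  · exact descent cs w i hlen v
  · intro h
    have := descent cs w i hlen (v * cs.simple i) h
    rwa [mul_assoc, cs.simple_mul_simple_self, mul_one] at this


end BruhatAux

/-- **Proposition (Simple Move).** Let `(W,S)` be a Coxeter system, `w ∈ W`, `u ∈ R(w)` and
`x ≤ w` in the Bruhat order. Then `q^w_x = q^w_{x u}`. -/
theorem q_eq_of_mul_right_descent
    {B : Type*} {W : Type*} [Group W] {M : CoxeterMatrix B} (cs : CoxeterSystem M W)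
    (w u : W) (hu : u ∈ Rsub cs w) (x : W) (hx : CoxBruhatLE cs x w) :
    coxQ cs w x = coxQ cs w (x * u) := by
  classical
  -- the multiplication invariance of the Bruhat order under elements of `R(w)`
  have key : ∀ y : W, CoxBruhatLE cs y w ↔ CoxBruhatLE cs (y * u) w := by
    refine Subgroup.closure_induction ?_ ?_ ?_ ?_ hu
    · rintro g ⟨⟨i, rfl⟩, hlt⟩ y
      have hlen : cs.length (w * cs.simple i) < cs.length w := by
        rcases BruhatAux.ble_length cs hlt.1 with heq | h
        · exact absurd heq hlt.2
        · exact h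
      exact BruhatAux.descent_iff cs w i hlen y
    · intro y
      rw [mul_one]
    · intro g g' _ _ hg hg' y
      rw [← mul_assoc]
      exact (hg y).trans (hg' (y * g))
    · intro g _ hg y
      have := hg (y * g⁻¹)
      rw [inv_mul_cancel_right] at this
      exact this.symm
  have hset : {r : W | cs.IsReflection r ∧ CoxBruhatLE cs (r * x) w}
      = {r : W | cs.IsReflection r ∧ CoxBruhatLE cs (r * (x * u)) w} := by
    ext r
    simp only [Set.mem_setOf_eq]
    refine and_congr_right fun _ => ?_
    rw [← mul_assoc]
    exact key (r * x)
  rw [coxQ, coxQ, hset]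
end
end

section
/- Let (W,S) be a Coxeter system, and suppose x ≤ w in the Bruhat order, s ∈ S is a simple reflection with w < ws, and xs ≰ w (the hypotheses of the Setup Move; then xs ≤ ws). Then the set of reflections r of W with r(xs) ≤ ws equals the union of the set of reflections r with rx ≤ w and the single reflection xsx⁻¹, and this union is disjoint (xsx⁻¹ does not belong to the first set). -/
noncomputable section

variable {B : Type*} {W : Type*} [Group W]

namespace SetupMoveAux
noncomputable section
open CoxeterSystem List



attribute [local instance] Classical.propDecidable

variable {B : Type*} {W : Type*} [Group W] {M : CoxeterMatrix B} (cs : CoxeterSystem M W)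

theorem conj_simple_inj (i : B) {a b : W}
    (h : cs.simple i * a * cs.simple i = cs.simple i * b * cs.simple i) : a = b :=
  mul_left_cancel (mul_right_cancel h)

theorem conj_simple_eq_iff (j : B) (a b : W) :
    cs.simple j * a * cs.simple j = b ↔ a = cs.simple j * b * cs.simple j := by
  constructor
  · intro h
    rw [← h]
    rw [← mul_assoc, ← mul_assoc, cs.simple_mul_simple_self, one_mul, mul_assoc,
      cs.simple_mul_simple_self, mul_one]
  · intro h
    apply conj_simple_inj cs j
    rw [h, ← mul_assoc, ← mul_assoc, cs.simple_mul_simple_self, one_mul, mul_assoc,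
      cs.simple_mul_simple_self, mul_one]

/-- Underlying function of the reflection representation on `W × ℤˣ`. -/
def etaFun (i : B) (p : W × ℤˣ) : W × ℤˣ :=
  (cs.simple i * p.1 * cs.simple i, if p.1 = cs.simple i then -p.2 else p.2)

theorem etaFun_involutive (i : B) : Function.Involutive (etaFun cs i) := by
  rintro ⟨t, ε⟩
  by_cases h : t = cs.simple i
  · subst h
    simp [etaFun, cs.simple_mul_simple_cancel_left, cs.simple_mul_simple_cancel_right]
  · have h2 : cs.simple i * t * cs.simple i ≠ cs.simple i := by
      intro hc
      exact h (conj_simple_inj cs i (by rw [hc, cs.simple_mul_simple_self, one_mul]))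
    simp only [etaFun, if_neg h, if_neg h2]
    refine Prod.ext ?_ rfl
    simp only
    rw [← mul_assoc, cs.simple_mul_simple_cancel_left, cs.simple_mul_simple_cancel_right]

/-- The reflection representation generator. -/
def eta (i : B) : Equiv.Perm (W × ℤˣ) := (etaFun_involutive cs i).toPerm

theorem eta_apply (i : B) (p : W × ℤˣ) : eta cs i p = etaFun cs i p := rfl

/-- Palindromes in the dihedral subgroup generated by `sᵢ, sⱼ`. -/
def qElt (i j : B) (l : ℕ) : W := (cs.simple j * cs.simple i) ^ l * cs.simple j

/-- Sign accumulated after `k` half-steps. -/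
def qSign (i j : B) (k : ℕ) (t : W) : ℤˣ :=
  ((List.range k).map (fun l => if t = qElt cs i j l then (-1 : ℤˣ) else 1)).prod

theorem qSign_succ (i j : B) (k : ℕ) (t : W) :
    qSign cs i j (k+1) t = qSign cs i j k t * (if t = qElt cs i j k then (-1 : ℤˣ) else 1) := by
  unfold qSign
  rw [List.range_succ, List.map_append, List.prod_append]
  simp

theorem simple_semiconj (i j : B) (k : ℕ) :
    cs.simple j * (cs.simple i * cs.simple j) ^ k
      = (cs.simple j * cs.simple i) ^ k * cs.simple j := by
  have h : SemiconjBy (cs.simple j) (cs.simple i * cs.simple j) (cs.simple j * cs.simple i) := by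
    unfold SemiconjBy
    rw [← mul_assoc]
  exact h.pow_right k

theorem pow_inv_eq (i j : B) (k : ℕ) :
    ((cs.simple i * cs.simple j) ^ k)⁻¹ = (cs.simple j * cs.simple i) ^ k := by
  rw [← inv_pow, mul_inv_rev, cs.inv_simple, cs.inv_simple]

theorem qElt_two_k (i j : B) (k : ℕ) :
    ((cs.simple i * cs.simple j) ^ k)⁻¹ * cs.simple j * (cs.simple i * cs.simple j) ^ k
      = qElt cs i j (2*k) := by
  rw [pow_inv_eq, mul_assoc, simple_semiconj, ← mul_assoc, ← pow_add, qElt]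
  congr 2
  ring

theorem qElt_two_k_one (i j : B) (k : ℕ) :
    ((cs.simple i * cs.simple j) ^ k)⁻¹ * (cs.simple j * cs.simple i * cs.simple j)
      * (cs.simple i * cs.simple j) ^ k = qElt cs i j (2*k+1) := by
  rw [pow_inv_eq, qElt]
  calc (cs.simple j * cs.simple i) ^ k * (cs.simple j * cs.simple i * cs.simple j)
        * (cs.simple i * cs.simple j) ^ k
      = (cs.simple j * cs.simple i) ^ k * (cs.simple j * cs.simple i)
        * (cs.simple j * (cs.simple i * cs.simple j) ^ k) := by
        simp only [mul_assoc]
    _ = (cs.simple j * cs.simple i) ^ k * (cs.simple j * cs.simple i)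
        * ((cs.simple j * cs.simple i) ^ k * cs.simple j) := by rw [simple_semiconj]
    _ = (cs.simple j * cs.simple i) ^ (2*k+1) * cs.simple j := by
        rw [show 2*k+1 = (k + 1) + k by ring, pow_add, pow_add, pow_one]
        simp only [mul_assoc]

theorem eta_mul_pow_apply (i j : B) (k : ℕ) (t : W) (ε : ℤˣ) :
    ((eta cs i * eta cs j) ^ k) (t, ε) =
      ((cs.simple i * cs.simple j) ^ k * t * ((cs.simple i * cs.simple j) ^ k)⁻¹,
        qSign cs i j (2*k) t * ε) := by
  induction k with
  | zero => simp [qSign]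
  | succ k ih =>
    rw [pow_succ', Equiv.Perm.mul_apply, ih, Equiv.Perm.mul_apply]
    set P : W := (cs.simple i * cs.simple j) ^ k with hP
    have c1 : (P * t * P⁻¹ = cs.simple j) ↔ (t = qElt cs i j (2*k)) := by
      rw [← qElt_two_k cs i j k, ← hP]
      constructor
      · intro h; rw [← h]; group
      · intro h; rw [h]; group
    have c2 : (cs.simple j * (P * t * P⁻¹) * cs.simple j = cs.simple i)
        ↔ (t = qElt cs i j (2*k+1)) := by
      rw [conj_simple_eq_iff, ← qElt_two_k_one cs i j k, ← hP]
      constructor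
      · intro h
        have h' : t = P⁻¹ * (P * t * P⁻¹) * P := by group
        rw [h', h]
      · intro h; rw [h]; group
    have e1 : eta cs j (P * t * P⁻¹, qSign cs i j (2*k) t * ε)
        = (cs.simple j * (P * t * P⁻¹) * cs.simple j,
           (if t = qElt cs i j (2*k) then (-1 : ℤˣ) else 1) * (qSign cs i j (2*k) t * ε)) := by
      rw [eta_apply, etaFun]
      refine Prod.ext rfl ?_
      simp only
      rw [if_congr c1 rfl rfl]
      split_ifs <;> simp
    have e2 : eta cs i (cs.simple j * (P * t * P⁻¹) * cs.simple j,
           (if t = qElt cs i j (2*k) then (-1 : ℤˣ) else 1) * (qSign cs i j (2*k) t * ε))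
        = (cs.simple i * (cs.simple j * (P * t * P⁻¹) * cs.simple j) * cs.simple i,
           (if t = qElt cs i j (2*k+1) then (-1 : ℤˣ) else 1) *
             ((if t = qElt cs i j (2*k) then (-1 : ℤˣ) else 1) * (qSign cs i j (2*k) t * ε))) := by
      rw [eta_apply, etaFun]
      refine Prod.ext rfl ?_
      simp only
      rw [if_congr c2 rfl rfl]
      split_ifs <;> simp
    rw [e1, e2]
    refine Prod.ext ?_ ?_
    · simp only
      rw [pow_succ', mul_inv_rev, mul_inv_rev, cs.inv_simple, cs.inv_simple, ← hP]
      group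
    · simp only
      rw [show 2*(k+1) = (2*k+1)+1 by ring, qSign_succ, qSign_succ]
      simp only [mul_assoc, mul_comm, mul_left_comm]

theorem qElt_period (i j : B) (l : ℕ) :
    qElt cs i j (l + M i j) = qElt cs i j l := by
  unfold qElt
  rw [pow_add, cs.simple_mul_simple_pow' i j, mul_one]

theorem liftable : CoxeterMatrix.IsLiftable M (fun i => eta cs i) := by
  intro i j
  apply Equiv.ext
  rintro ⟨t, ε⟩
  have h := eta_mul_pow_apply cs i j (M i j) t ε
  rw [show ((fun i => eta cs i) i * (fun i => eta cs i) j) = eta cs i * eta cs j from rfl]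
  rw [h, cs.simple_mul_simple_pow i j]
  have hsgn : qSign cs i j (2 * M i j) t = 1 := by
    unfold qSign
    rw [two_mul, List.range_add, List.map_append, List.prod_append, List.map_map]
    have he : ((List.range (M i j)).map
        ((fun l => if t = qElt cs i j l then (-1 : ℤˣ) else 1) ∘ (fun l => M i j + l)))
        = (List.range (M i j)).map (fun l => if t = qElt cs i j l then (-1 : ℤˣ) else 1) := by
      apply List.map_congr_left
      intro l _
      simp only [Function.comp_apply]
      rw [Nat.add_comm, qElt_period]
    rw [he]
    exact Int.units_mul_self _
  rw [hsgn]
  simp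

/-- The reflection representation `W →* Perm (W × ℤˣ)`. -/
def Phi : W →* Equiv.Perm (W × ℤˣ) := cs.lift ⟨fun i => eta cs i, liftable cs⟩

theorem Phi_simple (i : B) : Phi cs (cs.simple i) = eta cs i :=
  cs.lift_apply_simple (liftable cs) i

theorem Phi_apply_structure (w : W) : ∀ t : W, ∀ ε : ℤˣ,
    Phi cs w (t, ε) = (w * t * w⁻¹, (Phi cs w (t, 1)).2 * ε) := by
  refine cs.simple_induction_left
    (p := fun w => ∀ (t : W) (ε : ℤˣ), Phi cs w (t, ε) = (w * t * w⁻¹, (Phi cs w (t, 1)).2 * ε))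
    w ?_ ?_
  · intro t ε
    simp
  · intro w i ih t ε
    rw [map_mul, Equiv.Perm.mul_apply, Equiv.Perm.mul_apply, ih t ε, ih t 1,
      Phi_simple, eta_apply, etaFun, eta_apply, etaFun]
    refine Prod.ext ?_ ?_
    · simp only
      rw [mul_inv_rev, cs.inv_simple]
      group
    · simp only
      split_ifs <;> simp [mul_assoc]

/-- The sign of a reflection `t` under the action of `w`. -/
def sgn (w t : W) : ℤˣ := (Phi cs w (t, 1)).2

theorem Phi_apply (w t : W) (ε : ℤˣ) :
    Phi cs w (t, ε) = (w * t * w⁻¹, sgn cs w t * ε) :=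
  Phi_apply_structure cs w t ε

theorem sgn_wordProd (ω : List B) (t : W) :
    sgn cs (cs.wordProd ω)⁻¹ t = (-1 : ℤˣ) ^ (List.count t (cs.leftInvSeq ω)) := by
  induction ω generalizing t with
  | nil =>
    simp [sgn]
  | cons i ω ih =>
    have h1 : (cs.wordProd (i :: ω))⁻¹ = (cs.wordProd ω)⁻¹ * cs.simple i := by
      rw [cs.wordProd_cons, mul_inv_rev, cs.inv_simple]
    have hlis : cs.leftInvSeq (i :: ω)
        = cs.simple i :: List.map (MulAut.conj (cs.simple i)) (cs.leftInvSeq ω) := rfl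
    have hcnt : List.count t (List.map (⇑(MulAut.conj (cs.simple i))) (cs.leftInvSeq ω))
        = List.count (cs.simple i * t * cs.simple i) (cs.leftInvSeq ω) := by
      have ht : t = (MulAut.conj (cs.simple i)) (cs.simple i * t * cs.simple i) := by
        simp only [MulAut.conj_apply, cs.inv_simple]
        rw [← mul_assoc, ← mul_assoc, cs.simple_mul_simple_self, one_mul, mul_assoc,
          cs.simple_mul_simple_self, mul_one]
      conv_lhs => rw [ht]
      exact List.count_map_of_injective _ _ (MulAut.conj (cs.simple i)).injective _
    rw [sgn, h1, map_mul, Equiv.Perm.mul_apply, Phi_simple, eta_apply, etaFun]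
    simp only
    rw [Phi_apply]
    simp only
    rw [hlis, List.count_cons, hcnt]
    by_cases h : t = cs.simple i
    · have hb : (cs.simple i == t) = true := beq_iff_eq.mpr h.symm
      rw [if_pos h, hb, if_pos rfl, pow_add, pow_one, ih]
    · have hb : (cs.simple i == t) = false := beq_eq_false_iff_ne.mpr (Ne.symm h)
      rw [if_neg h, hb]
      simp only [Nat.add_zero, if_neg (by simp : ¬(false = true))]
      rw [mul_one, ih]

theorem sgn_inv_mul (v t : W) : sgn cs v (v⁻¹ * t * v) * sgn cs v⁻¹ t = 1 := by
  have h0 : Phi cs v (Phi cs v⁻¹ (t, 1)) = (t, 1) := by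
    rw [← Equiv.Perm.mul_apply, ← map_mul, mul_inv_cancel, map_one, Equiv.Perm.one_apply]
  rw [Phi_apply, Phi_apply] at h0
  simp only [inv_inv, mul_one] at h0
  have h2 := congrArg Prod.snd h0
  simp only at h2
  exact h2

theorem Phi_refl_apply {t : W} (ht : cs.IsReflection t) (ε : ℤˣ) :
    Phi cs t (t, ε) = (t, -ε) := by
  obtain ⟨v, i, rfl⟩ := ht
  set t : W := v * cs.simple i * v⁻¹ with htdef
  have hvt : v⁻¹ * t * v = cs.simple i := by rw [htdef]; group
  have key := sgn_inv_mul cs v t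
  rw [hvt] at key
  have e0 : Phi cs t = Phi cs v * Phi cs (cs.simple i) * Phi cs v⁻¹ := by
    rw [← map_mul, ← map_mul, htdef]
  have s1 : Phi cs v⁻¹ (t, ε) = (cs.simple i, sgn cs v⁻¹ t * ε) := by
    rw [Phi_apply]
    refine Prod.ext ?_ rfl
    simp only
    rw [inv_inv]
    exact hvt
  have s2 : Phi cs (cs.simple i) (cs.simple i, sgn cs v⁻¹ t * ε)
      = (cs.simple i, -(sgn cs v⁻¹ t * ε)) := by
    rw [Phi_simple, eta_apply, etaFun]
    simp
  have s3 : Phi cs v (cs.simple i, -(sgn cs v⁻¹ t * ε)) = (t, -ε) := by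
    rw [Phi_apply]
    refine Prod.ext ?_ ?_
    · simp only [htdef]
    · simp only
      rw [mul_neg, ← mul_assoc, key, one_mul]
  rw [e0, Equiv.Perm.mul_apply, Equiv.Perm.mul_apply, s1, s2, s3]

theorem length_lt_iff_sgn {t : W} (ht : cs.IsReflection t) (w : W) :
    cs.length (t * w) < cs.length w ↔ sgn cs w⁻¹ t = -1 := by
  constructor
  · intro h
    rcases Int.units_eq_one_or (sgn cs w⁻¹ t) with h1 | h1
    · exfalso
      have h2 : sgn cs (t * w)⁻¹ t = -1 := by
        rw [mul_inv_rev, ht.inv, sgn, map_mul, Equiv.Perm.mul_apply,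
          Phi_refl_apply cs ht, Phi_apply]
        simp only
        rw [h1, one_mul]
      -- now use the reverse direction below, phrased directly:
      obtain ⟨ω, hred, hw⟩ := cs.exists_reduced_word' (t * w)
      rw [hw, sgn_wordProd] at h2
      have hmem : t ∈ cs.leftInvSeq ω := by
        by_contra hmem
        rw [List.count_eq_zero_of_not_mem hmem, pow_zero] at h2
        exact absurd h2 (by decide)
      have hinv := (cs.isLeftInversion_of_mem_leftInvSeq hred hmem).2
      rw [← hw] at hinv
      have : t * (t * w) = w := by rw [← mul_assoc, ht.mul_self, one_mul]
      rw [this] at hinv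
      omega
    · exact h1
  · intro h
    obtain ⟨ω, hred, hw⟩ := cs.exists_reduced_word' w
    rw [hw, sgn_wordProd] at h
    have hmem : t ∈ cs.leftInvSeq ω := by
      by_contra hmem
      rw [List.count_eq_zero_of_not_mem hmem, pow_zero] at h
      exact absurd h (by decide)
    have hinv := (cs.isLeftInversion_of_mem_leftInvSeq hred hmem).2
    rw [← hw] at hinv
    exact hinv

/-- **Strong exchange property.** -/
theorem strong_exchange (ω : List B) {t : W} (ht : cs.IsReflection t)
    (h : cs.length (t * cs.wordProd ω) < cs.length (cs.wordProd ω)) :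
    ∃ j < ω.length, cs.wordProd (ω.eraseIdx j) = t * cs.wordProd ω := by
  have hsgn := (length_lt_iff_sgn cs ht (cs.wordProd ω)).mp h
  rw [sgn_wordProd] at hsgn
  have hmem : t ∈ cs.leftInvSeq ω := by
    by_contra hmem
    rw [List.count_eq_zero_of_not_mem hmem, pow_zero] at hsgn
    exact absurd hsgn (by decide)
  obtain ⟨j, hj, hget⟩ := List.mem_iff_getElem.mp hmem
  rw [cs.length_leftInvSeq] at hj
  refine ⟨j, hj, ?_⟩
  rw [← cs.getD_leftInvSeq_mul_wordProd ω j]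
  congr 1
  rw [List.getD_eq_getElem _ _ (by rw [cs.length_leftInvSeq]; exact hj)]
  exact hget

theorem le_step_up {a r : W} (hr : cs.IsReflection r)
    (h : cs.length a < cs.length (r * a)) : CoxBruhatLE cs a (r * a) :=
  Relation.ReflTransGen.single ⟨r, hr, rfl, h⟩

theorem le_step_down {a r : W} (hr : cs.IsReflection r)
    (h : cs.length (r * a) < cs.length a) : CoxBruhatLE cs (r * a) a := by
  have he : a = r * (r * a) := by rw [← mul_assoc, hr.mul_self, one_mul]
  exact Relation.ReflTransGen.single ⟨r, hr, he, h⟩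

theorem le_step_up_right {a t : W} (ht : cs.IsReflection t)
    (h : cs.length a < cs.length (a * t)) : CoxBruhatLE cs a (a * t) :=
  Relation.ReflTransGen.single ⟨a * t * a⁻¹, ht.conj a, by group, h⟩

theorem le_step_down_right {a t : W} (ht : cs.IsReflection t)
    (h : cs.length (a * t) < cs.length a) : CoxBruhatLE cs (a * t) a := by
  have he : (a * t * a⁻¹) * (a * t) = a * (t * t) := by group
  rw [ht.mul_self, mul_one] at he
  exact Relation.ReflTransGen.single ⟨a * t * a⁻¹, ht.conj a, he.symm, h⟩

theorem length_le_of_le {a b : W} (h : CoxBruhatLE cs a b) : cs.length a ≤ cs.length b := by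
  induction h with
  | refl => exact le_rfl
  | tail _ hstep ih =>
    obtain ⟨r, _, rfl, hlen⟩ := hstep
    omega

theorem eq_of_le_of_length_le {a b : W} (h : CoxBruhatLE cs a b)
    (hl : cs.length b ≤ cs.length a) : a = b := by
  rcases Relation.ReflTransGen.cases_tail h with heq | ⟨c, hac, hcb⟩
  · exact heq.symm
  · exfalso
    obtain ⟨r, _, rfl, hlen⟩ := hcb
    have := length_le_of_le cs hac
    omega

theorem inv_le_inv {a b : W} (h : CoxBruhatLE cs a b) : CoxBruhatLE cs a⁻¹ b⁻¹ := by
  induction h with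
  | refl => exact Relation.ReflTransGen.refl
  | @tail b c _ hstep ih =>
    obtain ⟨r, hr, rfl, hlen⟩ := hstep
    refine ih.tail ⟨b⁻¹ * r * b, ?_, ?_, ?_⟩
    · have := hr.conj b⁻¹
      rwa [inv_inv] at this
    · rw [mul_inv_rev, hr.inv]
      group
    · rw [cs.length_inv, cs.length_inv]
      exact hlen

/-- Every element below `π ω` in Bruhat order is the product of a sublist of `ω`. -/
theorem exists_sublist_of_le (ω : List B) {u : W}
    (h : CoxBruhatLE cs u (cs.wordProd ω)) :
    ∃ σ, σ.Sublist ω ∧ cs.wordProd σ = u := by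
  induction h using Relation.ReflTransGen.head_induction_on with
  | refl => exact ⟨ω, List.Sublist.refl ω, rfl⟩
  | @head a c hstep _ ih =>
    obtain ⟨σ, hσ, hπ⟩ := ih
    obtain ⟨r, hr, hc, hlen⟩ := hstep
    have hrc : r * c = a := by rw [hc, ← mul_assoc, hr.mul_self, one_mul]
    obtain ⟨j, hj, hdel⟩ := SetupMoveAux.strong_exchange cs σ hr
      (by rw [hπ, hrc]; exact hlen)
    exact ⟨σ.eraseIdx j, (σ.eraseIdx_sublist j).trans hσ, by rw [hdel, hπ, hrc]⟩

/-- The master simultaneous induction: the lifting property (ascent-ascent monotonicity)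
and the subword property. -/
theorem master : ∀ n : ℕ,
    (∀ (a b : W) (i : B), CoxBruhatLE cs a b →
      cs.length a < cs.length (cs.simple i * a) →
      cs.length b < cs.length (cs.simple i * b) →
      cs.length (cs.simple i * b) ≤ n →
      CoxBruhatLE cs (cs.simple i * a) (cs.simple i * b)) ∧
    (∀ ω : List B, cs.IsReduced ω → ω.length ≤ n →
      ∀ σ : List B, σ.Sublist ω → CoxBruhatLE cs (cs.wordProd σ) (cs.wordProd ω)) := by
  intro n
  induction n using Nat.strong_induction_on with
  | _ n ih =>
  -- the one-sided lifting lemma, for `w` of length `< n`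
  have lz1 : ∀ (w : W) (i : B), cs.length (cs.simple i * w) < cs.length w →
      cs.length w < n →
      ∀ u, CoxBruhatLE cs u w → cs.length u < cs.length (cs.simple i * u) →
      CoxBruhatLE cs (cs.simple i * u) w := by
    intro w i hdesc hwn u huw hu
    have hn1 : 1 ≤ n := by omega
    obtain ⟨ω₀, hred₀, hw₀⟩ := cs.exists_reduced_word' (cs.simple i * w)
    have hl₀ : ω₀.length = cs.length (cs.simple i * w) := by
      rw [← hred₀, ← hw₀]
    have hlw : cs.length (cs.simple i * w) + 1 = cs.length w := by
      have := cs.length_simple_mul w i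
      omega
    have hπ : cs.wordProd (i :: ω₀) = w := by
      rw [cs.wordProd_cons, ← hw₀, ← mul_assoc, cs.simple_mul_simple_self, one_mul]
    have hred : cs.IsReduced (i :: ω₀) := by
      show cs.length (cs.wordProd (i :: ω₀)) = (i :: ω₀).length
      rw [hπ, List.length_cons, hl₀]
      omega
    obtain ⟨σ, hσ, hπσ⟩ := exists_sublist_of_le cs (i :: ω₀) (by rw [hπ]; exact huw)
    have hstepw : CoxBruhatLE cs (cs.simple i * w) w := by
      nth_rewrite 2 [show w = cs.simple i * (cs.simple i * w) by
        rw [← mul_assoc, cs.simple_mul_simple_self, one_mul]]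
      exact le_step_up cs (cs.isReflection_simple i) (by
        rw [← mul_assoc, cs.simple_mul_simple_self, one_mul]; omega)
    rcases List.sublist_cons_iff.mp hσ with hσ' | ⟨σ', rfl, hσ'⟩
    · -- u is a product of a sublist of ω₀, so u ≤ s i * w
      have hu_le : CoxBruhatLE cs u (cs.simple i * w) := by
        rw [← hπσ, hw₀]
        exact (ih (n-1) (by omega)).2 ω₀ hred₀ (by omega) σ hσ'
      -- apply the ascent-ascent property at level `n-1`
      have hasc : cs.length (cs.simple i * w) < cs.length (cs.simple i * (cs.simple i * w)) := by
        rw [← mul_assoc, cs.simple_mul_simple_self, one_mul]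
        omega
      have := (ih (n-1) (by omega)).1 u (cs.simple i * w) i hu_le hu hasc (by
        rw [← mul_assoc, cs.simple_mul_simple_self, one_mul]; omega)
      rwa [← mul_assoc, cs.simple_mul_simple_self, one_mul] at this
    · -- σ = i :: σ', so s i * u is a product of a sublist of ω₀
      have hπσ' : cs.wordProd σ' = cs.simple i * u := by
        rw [cs.wordProd_cons] at hπσ
        rw [← hπσ, ← mul_assoc, cs.simple_mul_simple_self, one_mul]
      have : CoxBruhatLE cs (cs.simple i * u) (cs.simple i * w) := by
        rw [← hπσ', hw₀]
        exact (ih (n-1) (by omega)).2 ω₀ hred₀ (by omega) σ' hσ'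
      exact this.trans hstepw
  -- the ascent-ascent lifting property at level `n`
  have hz : ∀ (a b : W) (i : B), CoxBruhatLE cs a b →
      cs.length a < cs.length (cs.simple i * a) →
      cs.length b < cs.length (cs.simple i * b) →
      cs.length (cs.simple i * b) ≤ n →
      CoxBruhatLE cs (cs.simple i * a) (cs.simple i * b) := by
    intro a b i hab ha hb hbn
    rcases Relation.ReflTransGen.cases_tail hab with heq | ⟨c, hac, hcb⟩
    · rw [heq]
      exact Relation.ReflTransGen.refl
    · obtain ⟨r, hr, rfl, hcl⟩ := hcb
      by_cases hsc : cs.length c < cs.length (cs.simple i * c)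
      · have hsc1 : cs.length (cs.simple i * c) = cs.length c + 1 := by
          have := cs.length_simple_mul c i
          omega
        have h1 : CoxBruhatLE cs (cs.simple i * a) (cs.simple i * c) :=
          (ih (n-1) (by omega)).1 a c i hac ha hsc (by omega)
        have h2 : CoxBruhatLE cs (cs.simple i * c) (cs.simple i * (r * c)) := by
          have he : cs.simple i * (r * c)
              = (cs.simple i * r * (cs.simple i)⁻¹) * (cs.simple i * c) := by group
          rw [he]
          exact le_step_up cs (hr.conj (cs.simple i)) (by rw [← he]; omega)
        exact h1.trans h2
      · have hdn : cs.length (cs.simple i * c) < cs.length c := by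
          have := cs.length_simple_mul c i
          omega
        have h1 : CoxBruhatLE cs (cs.simple i * a) c :=
          lz1 c i hdn (by omega) a hac ha
        have h2 : CoxBruhatLE cs c (r * c) := le_step_up cs hr hcl
        have h3 : CoxBruhatLE cs (r * c) (cs.simple i * (r * c)) :=
          le_step_up cs (cs.isReflection_simple i) hb
        exact h1.trans (h2.trans h3)
  refine ⟨hz, ?_⟩
  -- the subword property at level `n`
  intro ω hred hlen σ hσ
  cases ω with
  | nil =>
    rw [List.sublist_nil.mp hσ]
    exact Relation.ReflTransGen.refl
  | cons j ω' =>
    have hred' : cs.IsReduced ω' := by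
      have := hred.drop (j := 1)
      simpa using this
    have hlω' : cs.length (cs.wordProd ω') = ω'.length := hred'
    have hlω : cs.length (cs.wordProd (j :: ω')) = ω'.length + 1 := by
      have : cs.length (cs.wordProd (j :: ω')) = (j :: ω').length := hred
      simpa using this
    have hup : cs.length (cs.wordProd ω') < cs.length (cs.simple j * cs.wordProd ω') := by
      rw [← cs.wordProd_cons]
      omega
    have hstep : CoxBruhatLE cs (cs.wordProd ω') (cs.wordProd (j :: ω')) := by
      rw [cs.wordProd_cons]
      exact le_step_up cs (cs.isReflection_simple j) hup
    have hn1 : 1 ≤ n := by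
      have := List.length_cons (a := j) (as := ω') ▸ hlen
      omega
    rcases List.sublist_cons_iff.mp hσ with hσ' | ⟨σ', rfl, hσ'⟩
    · exact ((ih (n-1) (by omega)).2 ω' hred' (by
        have := List.length_cons (a := j) (as := ω') ▸ hlen; omega) σ hσ').trans hstep
    · have ha : CoxBruhatLE cs (cs.wordProd σ') (cs.wordProd ω') :=
        (ih (n-1) (by omega)).2 ω' hred' (by
          have := List.length_cons (a := j) (as := ω') ▸ hlen; omega) σ' hσ'
      rw [cs.wordProd_cons, cs.wordProd_cons]
      by_cases hc : cs.length (cs.wordProd σ') < cs.length (cs.simple j * cs.wordProd σ')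
      · refine hz (cs.wordProd σ') (cs.wordProd ω') j ha hc hup ?_
        rw [← cs.wordProd_cons]
        have := List.length_cons (a := j) (as := ω') ▸ hlen
        omega
      · have hdn : cs.length (cs.simple j * cs.wordProd σ') < cs.length (cs.wordProd σ') := by
          have := cs.length_simple_mul (cs.wordProd σ') j
          omega
        refine (le_step_down cs (cs.isReflection_simple j) hdn).trans
          (ha.trans ?_)
        rw [← cs.wordProd_cons]
        exact hstep

/-- Ascent-ascent lifting, left version. -/
theorem hz_left {a b : W} (i : B) (hab : CoxBruhatLE cs a b)
    (ha : cs.length a < cs.length (cs.simple i * a))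
    (hb : cs.length b < cs.length (cs.simple i * b)) :
    CoxBruhatLE cs (cs.simple i * a) (cs.simple i * b) :=
  (master cs (cs.length (cs.simple i * b))).1 a b i hab ha hb le_rfl

/-- The subword property, easy direction. -/
theorem sub_le {ω σ : List B} (hred : cs.IsReduced ω) (hσ : σ.Sublist ω) :
    CoxBruhatLE cs (cs.wordProd σ) (cs.wordProd ω) :=
  (master cs ω.length).2 ω hred le_rfl σ hσ

/-- Lifting: if `s i` is a descent of `w` and an ascent of `u ≤ w`, then `s i * u ≤ w`. -/
theorem lz1_left {w : W} (i : B) (hdesc : cs.length (cs.simple i * w) < cs.length w)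
    {u : W} (huw : CoxBruhatLE cs u w)
    (hu : cs.length u < cs.length (cs.simple i * u)) :
    CoxBruhatLE cs (cs.simple i * u) w := by
  obtain ⟨ω₀, hred₀, hw₀⟩ := cs.exists_reduced_word' (cs.simple i * w)
  have hl₀ : ω₀.length = cs.length (cs.simple i * w) := by rw [← hred₀, ← hw₀]
  have hlw : cs.length (cs.simple i * w) + 1 = cs.length w := by
    have := cs.length_simple_mul w i
    omega
  have hπ : cs.wordProd (i :: ω₀) = w := by
    rw [cs.wordProd_cons, ← hw₀, ← mul_assoc, cs.simple_mul_simple_self, one_mul]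
  obtain ⟨σ, hσ, hπσ⟩ := exists_sublist_of_le cs (i :: ω₀) (by rw [hπ]; exact huw)
  have hstepw : CoxBruhatLE cs (cs.simple i * w) w := by
    nth_rewrite 2 [show w = cs.simple i * (cs.simple i * w) by
      rw [← mul_assoc, cs.simple_mul_simple_self, one_mul]]
    exact le_step_up cs (cs.isReflection_simple i) (by
      rw [← mul_assoc, cs.simple_mul_simple_self, one_mul]; omega)
  rcases List.sublist_cons_iff.mp hσ with hσ' | ⟨σ', rfl, hσ'⟩
  · have hu_le : CoxBruhatLE cs u (cs.simple i * w) := by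
      rw [← hπσ, hw₀]
      exact sub_le cs hred₀ hσ'
    have hasc : cs.length (cs.simple i * w) < cs.length (cs.simple i * (cs.simple i * w)) := by
      rw [← mul_assoc, cs.simple_mul_simple_self, one_mul]
      omega
    have := hz_left cs i hu_le hu hasc
    rwa [← mul_assoc, cs.simple_mul_simple_self, one_mul] at this
  · have hπσ' : cs.wordProd σ' = cs.simple i * u := by
      rw [cs.wordProd_cons] at hπσ
      rw [← hπσ, ← mul_assoc, cs.simple_mul_simple_self, one_mul]
    have : CoxBruhatLE cs (cs.simple i * u) (cs.simple i * w) := by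
      rw [← hπσ', hw₀]
      exact sub_le cs hred₀ hσ'
    exact this.trans hstepw

/-- Lifting: if `s i` is a descent of `w` and of `u ≤ w`, then `s i * u ≤ s i * w`. -/
theorem lz2_left {w : W} (i : B) (hdesc : cs.length (cs.simple i * w) < cs.length w)
    {u : W} (huw : CoxBruhatLE cs u w)
    (hu : cs.length (cs.simple i * u) < cs.length u) :
    CoxBruhatLE cs (cs.simple i * u) (cs.simple i * w) := by
  obtain ⟨ω₀, hred₀, hw₀⟩ := cs.exists_reduced_word' (cs.simple i * w)
  have hl₀ : ω₀.length = cs.length (cs.simple i * w) := by rw [← hred₀, ← hw₀]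
  have hlw : cs.length (cs.simple i * w) + 1 = cs.length w := by
    have := cs.length_simple_mul w i
    omega
  have hπ : cs.wordProd (i :: ω₀) = w := by
    rw [cs.wordProd_cons, ← hw₀, ← mul_assoc, cs.simple_mul_simple_self, one_mul]
  obtain ⟨σ, hσ, hπσ⟩ := exists_sublist_of_le cs (i :: ω₀) (by rw [hπ]; exact huw)
  rcases List.sublist_cons_iff.mp hσ with hσ' | ⟨σ', rfl, hσ'⟩
  · -- u ≤ s i * w, and s i * u < u
    have hu_le : CoxBruhatLE cs u (cs.simple i * w) := by
      rw [← hπσ, hw₀]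
      exact sub_le cs hred₀ hσ'
    exact (le_step_down cs (cs.isReflection_simple i) hu).trans hu_le
  · have hπσ' : cs.wordProd σ' = cs.simple i * u := by
      rw [cs.wordProd_cons] at hπσ
      rw [← hπσ, ← mul_assoc, cs.simple_mul_simple_self, one_mul]
    rw [← hπσ', hw₀]
    exact sub_le cs hred₀ hσ'

/-- Property Z, forward direction (left version): if `w < s i * w` and `u ≤ s i * w`,
then `u ≤ w` or `s i * u ≤ w`. -/
theorem zfwd_left {w : W} (i : B) (hasc : cs.length w < cs.length (cs.simple i * w))
    {u : W} (h : CoxBruhatLE cs u (cs.simple i * w)) :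
    CoxBruhatLE cs u w ∨ CoxBruhatLE cs (cs.simple i * u) w := by
  have hW : cs.length (cs.simple i * (cs.simple i * w)) < cs.length (cs.simple i * w) := by
    rw [← mul_assoc, cs.simple_mul_simple_self, one_mul]
    exact hasc
  have hne := cs.length_simple_mul u i
  by_cases hu : cs.length u < cs.length (cs.simple i * u)
  · -- s i * u ≤ s i * w, then apply lz2 to s i * u
    have h1 : CoxBruhatLE cs (cs.simple i * u) (cs.simple i * w) :=
      lz1_left cs i hW h hu
    have h2 := lz2_left cs i hW h1 (by
      rw [← mul_assoc, cs.simple_mul_simple_self, one_mul]; exact hu)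
    rw [← mul_assoc, cs.simple_mul_simple_self, one_mul,
      ← mul_assoc, cs.simple_mul_simple_self, one_mul] at h2
    exact Or.inl h2
  · have hu' : cs.length (cs.simple i * u) < cs.length u := by omega
    have h2 := lz2_left cs i hW h hu'
    rw [← mul_assoc, cs.simple_mul_simple_self, one_mul] at h2
    exact Or.inr h2

/-- Ascent-ascent lifting, right version. -/
theorem hz_right {a b : W} (i : B) (hab : CoxBruhatLE cs a b)
    (ha : cs.length a < cs.length (a * cs.simple i))
    (hb : cs.length b < cs.length (b * cs.simple i)) :
    CoxBruhatLE cs (a * cs.simple i) (b * cs.simple i) := by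
  have h1 : CoxBruhatLE cs a⁻¹ b⁻¹ := inv_le_inv cs hab
  have ha' : cs.length a⁻¹ < cs.length (cs.simple i * a⁻¹) := by
    rw [show cs.simple i * a⁻¹ = (a * cs.simple i)⁻¹ by rw [mul_inv_rev, cs.inv_simple],
      cs.length_inv, cs.length_inv]
    exact ha
  have hb' : cs.length b⁻¹ < cs.length (cs.simple i * b⁻¹) := by
    rw [show cs.simple i * b⁻¹ = (b * cs.simple i)⁻¹ by rw [mul_inv_rev, cs.inv_simple],
      cs.length_inv, cs.length_inv]
    exact hb
  have h2 := hz_left cs i h1 ha' hb'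
  have h3 := inv_le_inv cs h2
  rwa [show cs.simple i * a⁻¹ = (a * cs.simple i)⁻¹ by rw [mul_inv_rev, cs.inv_simple],
    show cs.simple i * b⁻¹ = (b * cs.simple i)⁻¹ by rw [mul_inv_rev, cs.inv_simple],
    inv_inv, inv_inv] at h3

/-- Property Z, forward direction (right version). -/
theorem zfwd_right {w : W} (i : B) (hasc : cs.length w < cs.length (w * cs.simple i))
    {u : W} (h : CoxBruhatLE cs u (w * cs.simple i)) :
    CoxBruhatLE cs u w ∨ CoxBruhatLE cs (u * cs.simple i) w := by
  have hasc' : cs.length w⁻¹ < cs.length (cs.simple i * w⁻¹) := by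
    rw [show cs.simple i * w⁻¹ = (w * cs.simple i)⁻¹ by rw [mul_inv_rev, cs.inv_simple],
      cs.length_inv, cs.length_inv]
    exact hasc
  have h1 : CoxBruhatLE cs u⁻¹ (cs.simple i * w⁻¹) := by
    rw [show cs.simple i * w⁻¹ = (w * cs.simple i)⁻¹ by rw [mul_inv_rev, cs.inv_simple]]
    exact inv_le_inv cs h
  rcases zfwd_left cs i hasc' h1 with h2 | h2
  · left
    have := inv_le_inv cs h2
    rwa [inv_inv, inv_inv] at this
  · right
    have := inv_le_inv cs h2
    rwa [show cs.simple i * u⁻¹ = (u * cs.simple i)⁻¹ by rw [mul_inv_rev, cs.inv_simple],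
      inv_inv, inv_inv] at this

end
end SetupMoveAux

open SetupMoveAux in
/-- **Proposition (Setup Move).** Let `(W,S)` be a Coxeter system, `x ≤ w`, `s ∈ S` with
`w < w s` and `x s ≰ w` (then `x s ≤ w s`). Then the set of reflections `r` with
`r (x s) ≤ w s` is the disjoint union of the set of reflections `r` with `r x ≤ w`
and the single reflection `x s x⁻¹`. -/
theorem setup_move_reflections
    {B : Type*} {W : Type*} [Group W] {M : CoxeterMatrix B} (cs : CoxeterSystem M W)
    (x w : W) (hxw : CoxBruhatLE cs x w) (i : B)
    (hws : CoxBruhatLT cs w (w * cs.simple i))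
    (hxs : ¬ CoxBruhatLE cs (x * cs.simple i) w) :
    CoxBruhatLE cs (x * cs.simple i) (w * cs.simple i) ∧
    {r : W | cs.IsReflection r ∧
        CoxBruhatLE cs (r * (x * cs.simple i)) (w * cs.simple i)}
      = {r : W | cs.IsReflection r ∧ CoxBruhatLE cs (r * x) w}
          ∪ {x * cs.simple i * x⁻¹} ∧
    x * cs.simple i * x⁻¹ ∉ {r : W | cs.IsReflection r ∧ CoxBruhatLE cs (r * x) w} := by
  obtain ⟨hwsle, hwsne⟩ := hws
  have hwlen : cs.length w < cs.length (w * cs.simple i) := by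
    have h1 := length_le_of_le cs hwsle
    rcases cs.length_mul_simple w i with h2 | h2
    · omega
    · exact absurd (eq_of_le_of_length_le cs hwsle (by omega)) hwsne
  have hxlen : cs.length x < cs.length (x * cs.simple i) := by
    rcases cs.length_mul_simple x i with h2 | h2
    · omega
    · exact absurd ((le_step_down_right cs (cs.isReflection_simple i)
        (by omega)).trans hxw) hxs
  have hwws : CoxBruhatLE cs w (w * cs.simple i) :=
    le_step_up_right cs (cs.isReflection_simple i) hwlen
  have part1 : CoxBruhatLE cs (x * cs.simple i) (w * cs.simple i) :=
    hz_right cs i hxw hxlen hwlen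
  refine ⟨part1, ?_, ?_⟩
  · ext r
    simp only [Set.mem_setOf_eq, Set.mem_union, Set.mem_singleton_iff]
    constructor
    · rintro ⟨hr, hle⟩
      rw [← mul_assoc] at hle
      rcases zfwd_right cs i hwlen hle with h2 | h2
      swap
      · -- h2 : (r * x * s) * s ≤ w, i.e. r * x ≤ w
        rw [cs.simple_mul_simple_cancel_right] at h2
        exact Or.inl ⟨hr, h2⟩
      · -- h2 : r * x * s ≤ w
        by_cases hcase : cs.length (r * x) < cs.length (r * x * cs.simple i)
        · exact Or.inl ⟨hr, (le_step_up_right cs (cs.isReflection_simple i) hcase).trans h2⟩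
        · have hdn : cs.length (r * x * cs.simple i) + 1 = cs.length (r * x) := by
            rcases cs.length_mul_simple (r * x) i with h3 | h3 <;> omega
          by_cases hu_w : CoxBruhatLE cs (r * x) w
          · exact Or.inl ⟨hr, hu_w⟩
          right
          -- show r = x * s * x⁻¹
          have hxu : cs.length x < cs.length (r * x) := by
            have hne := hr.length_mul_right_ne x
            rcases Nat.lt_or_ge (cs.length (r * x)) (cs.length x) with h4 | h4
            · exact absurd ((le_step_down cs hr h4).trans hxw) hu_w
            · omega
          have hveq : r * (x * cs.simple i) = r * x * cs.simple i := by
            rw [mul_assoc]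
          have hvxs : cs.length (r * x * cs.simple i) < cs.length (x * cs.simple i) := by
            have hne := hr.length_mul_right_ne (x * cs.simple i)
            rw [hveq] at hne
            rcases Nat.lt_or_ge (cs.length (r * x * cs.simple i))
              (cs.length (x * cs.simple i)) with h4 | h4
            · exact h4
            · exfalso
              have h5 : cs.length (x * cs.simple i) < cs.length (r * (x * cs.simple i)) := by
                rw [hveq]; omega
              exact hxs ((le_step_up cs hr h5).trans (by rw [hveq]; exact h2))
          have hxs1 : cs.length (x * cs.simple i) = cs.length x + 1 := by
            rcases cs.length_mul_simple x i with h3 | h3 <;> omega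
          have hlv : cs.length (r * x * cs.simple i) = cs.length x := by omega
          have hvle : CoxBruhatLE cs (r * x * cs.simple i) (x * cs.simple i) := by
            rw [← hveq]
            exact le_step_down cs hr (by rw [hveq]; omega)
          rcases zfwd_right cs i hxlen hvle with h4 | h4
          · -- r * x * s ≤ x, with equal lengths
            have h5 : r * x * cs.simple i = x := eq_of_le_of_length_le cs h4 (by omega)
            have h6 : r * x = x * cs.simple i := by
              have h7 := congrArg (fun z => z * cs.simple i) h5
              simp only [cs.simple_mul_simple_cancel_right] at h7
              exact h7
            rw [← h6]
            group
          · -- r * x * s * s = r * x ≤ x: impossible by lengths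
            rw [cs.simple_mul_simple_cancel_right] at h4
            have := length_le_of_le cs h4
            omega
    · rintro (⟨hr, hle⟩ | rfl)
      · refine ⟨hr, ?_⟩
        rw [← mul_assoc]
        by_cases hcase : cs.length (r * x) < cs.length (r * x * cs.simple i)
        · exact hz_right cs i hle hcase hwlen
        · have hdn : cs.length (r * x * cs.simple i) < cs.length (r * x) := by
            rcases cs.length_mul_simple (r * x) i with h3 | h3 <;> omega
          exact (le_step_down_right cs (cs.isReflection_simple i) hdn).trans
            (hle.trans hwws)
      · refine ⟨(cs.isReflection_simple i).conj x, ?_⟩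
        have he : x * cs.simple i * x⁻¹ * (x * cs.simple i)
            = x * (cs.simple i * cs.simple i) := by group
        rw [cs.simple_mul_simple_self, mul_one] at he
        rw [he]
        exact hxw.trans hwws
  · rintro ⟨_, hle⟩
    apply hxs
    have he : x * cs.simple i * x⁻¹ * x = x * cs.simple i := by group
    rwa [he] at hle
end
end
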